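/- arXiv:1901.05698 — 10 statements merged into one kernel-verified Lean document; each statement's English description precedes it below -/
import Mathlib

section
/- For every probability measure ν on [0,∞) with cumulative distribution function F and every t > 0, the Williamson transform satisfies G(t) = F(t) − t^{−α} H(t) = α t^{−α} ∫_0^t x^{α−1} F(x) dx. -/
open MeasureTheory Filter Real Topology

/-- For every probability measure ν on [0,∞) with cdf F and every t > 0,
the Williamson transform satisfies
G(t) = F(t) − t^{−α} H(t) = α t^{−α} ∫_0^t x^{α−1} F(x) dx. -/
theorem williamson_eq_cdf_sub_truncated_moment
    (α : ℝ) (hα : 0 < α)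
    (ν : Measure ℝ) [IsProbabilityMeasure ν] (hν : ν (Set.Iio 0) = 0)
    (F G H : ℝ → ℝ)
    (hF : ∀ t, F t = (ν (Set.Iic t)).toReal)
    (hG : ∀ t, 0 < t → G t = ∫ x, max (1 - (x / t) ^ α) 0 ∂ν)
    (hH : ∀ t, 0 < t → H t = ∫ x in Set.Icc 0 t, x ^ α ∂ν)
    (t : ℝ) (ht : 0 < t) :
    G t = F t - t ^ (-α) * H t ∧
    G t = α * t ^ (-α) * ∫ x in Set.Ioc 0 t, x ^ (α - 1) * F x := by
  have hae : ∀ᵐ x ∂ν, 0 ≤ x := by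
    refine ae_iff.mpr ?_
    have h : {x : ℝ | ¬ 0 ≤ x} = Set.Iio 0 := by ext x; simp [not_le]
    rw [h]; exact hν
  have htα : (0:ℝ) < t ^ α := Real.rpow_pos_of_pos ht α
  have hIic : ν (Set.Iic t) = ν (Set.Icc 0 t) := by
    apply le_antisymm
    · calc ν (Set.Iic t) ≤ ν (Set.Iio 0 ∪ Set.Icc 0 t) := measure_mono (fun x hx => by
          rcases lt_or_ge x 0 with h | h
          · exact Or.inl h
          · exact Or.inr ⟨h, hx⟩)
      _ ≤ ν (Set.Iio 0) + ν (Set.Icc 0 t) := measure_union_le _ _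
      _ = ν (Set.Icc 0 t) := by rw [hν, zero_add]
    · exact measure_mono (fun x hx => hx.2)
  have hcont : Continuous fun x : ℝ => x ^ α := Real.continuous_rpow_const hα.le
  have hint : IntegrableOn (fun x : ℝ => x ^ α) (Set.Icc 0 t) ν :=
    hcont.continuousOn.integrableOn_compact isCompact_Icc
  -- Part 1
  have h1 : G t = F t - t ^ (-α) * H t := by
    rw [hG t ht, hH t ht, hF t]
    have heq : (fun x : ℝ => max (1 - (x / t) ^ α) 0)
        =ᵐ[ν] (Set.Icc 0 t).indicator (fun x => 1 - x ^ α * t ^ (-α)) := by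
      filter_upwards [hae] with x hx
      rcases le_or_gt x t with hxt | hxt
      · rw [Set.indicator_of_mem (Set.mem_Icc.mpr ⟨hx, hxt⟩)]
        rw [show (x / t) ^ α = x ^ α * t ^ (-α) by
          rw [Real.div_rpow hx ht.le, Real.rpow_neg ht.le, div_eq_mul_inv]]
        apply max_eq_left
        rw [sub_nonneg, Real.rpow_neg ht.le, ← div_eq_mul_inv, ← Real.div_rpow hx ht.le]
        exact Real.rpow_le_one (div_nonneg hx ht.le) ((div_le_one ht).mpr hxt) hα.le
      · rw [Set.indicator_of_notMem (fun h => absurd h.2 (not_le.mpr hxt))]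
        exact max_eq_right
          (sub_nonpos.mpr (Real.one_le_rpow ((one_le_div ht).mpr hxt.le) hα.le))
    rw [integral_congr_ae heq, integral_indicator measurableSet_Icc]
    rw [integral_sub (integrableOn_const (C := (1:ℝ)) (measure_ne_top _ _))
      (hint.mul_const _)]
    rw [setIntegral_const, integral_mul_const, measureReal_def, ← hIic]
    simp [smul_eq_mul, mul_comm]
  -- basic facts about F
  have hFmono : Monotone F := fun a b hab => by
    rw [hF a, hF b]
    exact ENNReal.toReal_mono (measure_ne_top _ _) (measure_mono (Set.Iic_subset_Iic.mpr hab))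
  have hFnn : ∀ s, 0 ≤ F s := fun s => by rw [hF s]; exact ENNReal.toReal_nonneg
  have hFle : ∀ s, F s ≤ 1 := fun s => by
    rw [hF s]
    simpa using ENNReal.toReal_mono ENNReal.one_ne_top prob_le_one
  -- Part 2 via the layer cake formula
  set μ := ν.restrict (Set.Icc 0 t) with hμ
  have hf_nn : 0 ≤ᵐ[μ] (id : ℝ → ℝ) := by
    filter_upwards [ae_restrict_mem measurableSet_Icc] with y hy using hy.1
  have key := lintegral_rpow_eq_lintegral_meas_lt_mul μ hf_nn aemeasurable_id hα
  have hHnn : 0 ≤ H t := by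
    rw [hH t ht]
    exact setIntegral_nonneg measurableSet_Icc fun x hx => Real.rpow_nonneg hx.1 α
  have hLHS : ∫⁻ ω, ENNReal.ofReal (id ω ^ α) ∂μ = ENNReal.ofReal (H t) := by
    rw [hH t ht]
    exact (ofReal_integral_eq_lintegral_ofReal hint
      (by filter_upwards [ae_restrict_mem measurableSet_Icc] with y hy using
        Real.rpow_nonneg hy.1 α)).symm
  have hmeas : ∀ s ∈ Set.Ioi (0:ℝ), μ {a : ℝ | s < id a} = ν (Set.Ioc s t) := by
    intro s hs
    have hset : {a : ℝ | s < id a} = Set.Ioi s := rfl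
    rw [hset, hμ, Measure.restrict_apply measurableSet_Ioi]
    congr 1
    ext x
    simp only [Set.mem_inter_iff, Set.mem_Ioi, Set.mem_Icc, Set.mem_Ioc]
    constructor
    · rintro ⟨hh1, _, hh3⟩; exact ⟨hh1, hh3⟩
    · rintro ⟨hh1, hh2⟩; exact ⟨hh1, (le_trans (le_of_lt hs) hh1.le), hh2⟩
  have hIoc_meas : ∀ s, 0 < s → s ≤ t → (ν (Set.Ioc s t)).toReal = F t - F s := by
    intro s hs hst
    rw [hF t, hF s, ← (show Set.Iic t \ Set.Iic s = Set.Ioc s t by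
        ext x; simp only [Set.mem_diff, Set.mem_Iic, Set.mem_Ioc, not_le]; exact and_comm),
      measure_diff (Set.Iic_subset_Iic.mpr hst) measurableSet_Iic.nullMeasurableSet
        (measure_ne_top _ _),
      ENNReal.toReal_sub_of_le (measure_mono (Set.Iic_subset_Iic.mpr hst)) (measure_ne_top _ _)]
  have hsplit : ∫⁻ s in Set.Ioi (0:ℝ), μ {a : ℝ | s < id a} * ENNReal.ofReal (s ^ (α - 1))
      = ∫⁻ s in Set.Ioc 0 t, ENNReal.ofReal ((F t - F s) * s ^ (α - 1)) := by
    rw [← Set.Ioc_union_Ioi_eq_Ioi ht.le,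
      lintegral_union measurableSet_Ioi (Set.Ioc_disjoint_Ioi le_rfl)]
    have h2 : ∫⁻ s in Set.Ioi t, μ {a : ℝ | s < id a} * ENNReal.ofReal (s ^ (α - 1)) = 0 := by
      calc ∫⁻ s in Set.Ioi t, μ {a : ℝ | s < id a} * ENNReal.ofReal (s ^ (α - 1))
          = ∫⁻ _ in Set.Ioi t, 0 := by
            apply setLIntegral_congr_fun measurableSet_Ioi
            intro s hs
            dsimp only
            rw [hmeas s (Set.mem_Ioi.mpr (ht.trans hs)),
              Set.Ioc_eq_empty (not_lt.mpr hs.le), measure_empty, zero_mul]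
        _ = 0 := lintegral_zero
    rw [h2, add_zero]
    apply setLIntegral_congr_fun measurableSet_Ioc
    intro s hs
    dsimp only
    rw [hmeas s (Set.mem_Ioi.mpr hs.1), ← hIoc_meas s hs.1 hs.2,
      ENNReal.ofReal_mul ENNReal.toReal_nonneg, ENNReal.ofReal_toReal (measure_ne_top _ _)]
  have hkey2 : ENNReal.ofReal (H t)
      = ENNReal.ofReal α * ∫⁻ s in Set.Ioc 0 t, ENNReal.ofReal ((F t - F s) * s ^ (α - 1)) := by
    rw [← hLHS, key, hsplit]
  have hg_int : IntegrableOn (fun s : ℝ => s ^ (α - 1)) (Set.Ioc 0 t) volume :=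
    (intervalIntegral.intervalIntegrable_rpow' (by linarith : (-1:ℝ) < α - 1)).1
  have hψ_meas : AEStronglyMeasurable (fun s : ℝ => (F t - F s) * s ^ (α - 1))
      (volume.restrict (Set.Ioc 0 t)) := by
    apply AEStronglyMeasurable.mul
    · exact (measurable_const.sub hFmono.measurable).aestronglyMeasurable
    · exact Measurable.aestronglyMeasurable (by fun_prop)
  have hψ_int : IntegrableOn (fun s : ℝ => (F t - F s) * s ^ (α - 1)) (Set.Ioc 0 t) volume := by
    apply Integrable.mono hg_int hψ_meas
    filter_upwards [ae_restrict_mem measurableSet_Ioc] with s hs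
    have h1 : 0 ≤ F t - F s := sub_nonneg.mpr (hFmono hs.2)
    have h2 : F t - F s ≤ 1 := by have := hFnn s; have := hFle t; linarith
    have h3 : (0:ℝ) ≤ s ^ (α - 1) := Real.rpow_nonneg hs.1.le _
    rw [Real.norm_eq_abs, Real.norm_eq_abs, abs_of_nonneg (mul_nonneg h1 h3), abs_of_nonneg h3]
    calc (F t - F s) * s ^ (α - 1) ≤ 1 * s ^ (α - 1) := mul_le_mul_of_nonneg_right h2 h3
      _ = s ^ (α - 1) := one_mul _
  have hψ_nn : 0 ≤ᵐ[volume.restrict (Set.Ioc 0 t)]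
      fun s : ℝ => (F t - F s) * s ^ (α - 1) := by
    filter_upwards [ae_restrict_mem measurableSet_Ioc] with s hs
    exact mul_nonneg (sub_nonneg.mpr (hFmono hs.2)) (Real.rpow_nonneg hs.1.le _)
  have hψ_eq : ENNReal.ofReal (H t)
      = ENNReal.ofReal (α * ∫ s in Set.Ioc 0 t, (F t - F s) * s ^ (α - 1)) := by
    rw [hkey2, ← ofReal_integral_eq_lintegral_ofReal hψ_int hψ_nn, ← ENNReal.ofReal_mul hα.le]
  have hInt_nonneg : 0 ≤ α * ∫ s in Set.Ioc 0 t, (F t - F s) * s ^ (α - 1) :=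
    mul_nonneg hα.le (integral_nonneg_of_ae hψ_nn)
  have hHt : H t = α * ∫ s in Set.Ioc 0 t, (F t - F s) * s ^ (α - 1) :=
    (ENNReal.ofReal_eq_ofReal_iff hHnn hInt_nonneg).mp hψ_eq
  -- compute the integral of ψ
  have hFs_int : IntegrableOn (fun s : ℝ => s ^ (α - 1) * F s) (Set.Ioc 0 t) volume := by
    apply Integrable.mono hg_int
    · exact ((by fun_prop : Measurable fun s : ℝ => s ^ (α - 1)).mul
        hFmono.measurable).aestronglyMeasurable
    · filter_upwards [ae_restrict_mem measurableSet_Ioc] with s hs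
      have h3 : (0:ℝ) ≤ s ^ (α - 1) := Real.rpow_nonneg hs.1.le _
      rw [Real.norm_eq_abs, Real.norm_eq_abs, abs_of_nonneg (mul_nonneg h3 (hFnn s)),
        abs_of_nonneg h3]
      calc s ^ (α - 1) * F s ≤ s ^ (α - 1) * 1 := mul_le_mul_of_nonneg_left (hFle s) h3
        _ = s ^ (α - 1) := mul_one _
  have hpow_int : ∫ s in Set.Ioc 0 t, s ^ (α - 1) = t ^ α / α := by
    rw [← intervalIntegral.integral_of_le ht.le, integral_rpow (Or.inl (by linarith))]
    have hαeq : α - 1 + 1 = α := by ring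
    rw [hαeq, Real.zero_rpow hα.ne']
    ring
  have hsplit2 : ∫ s in Set.Ioc 0 t, (F t - F s) * s ^ (α - 1)
      = F t * (t ^ α / α) - ∫ s in Set.Ioc 0 t, s ^ (α - 1) * F s := by
    have hpt : ∀ s : ℝ, (F t - F s) * s ^ (α - 1)
        = F t * s ^ (α - 1) - s ^ (α - 1) * F s := fun s => by ring
    simp_rw [hpt]
    rw [integral_sub (hg_int.const_mul _) hFs_int, integral_const_mul, hpow_int]
  have hJ : α * (∫ s in Set.Ioc 0 t, s ^ (α - 1) * F s) = F t * t ^ α - H t := by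
    rw [hHt, hsplit2]
    field_simp
    ring
  refine ⟨h1, ?_⟩
  rw [h1]
  have hm : t ^ (-α) * t ^ α = 1 := by
    rw [← Real.rpow_add ht]; simp
  calc F t - t ^ (-α) * H t
      = F t * (t ^ (-α) * t ^ α) - t ^ (-α) * H t := by rw [hm, mul_one]
    _ = t ^ (-α) * (F t * t ^ α - H t) := by ring
    _ = t ^ (-α) * (α * ∫ s in Set.Ioc 0 t, s ^ (α - 1) * F s) := by rw [hJ]
    _ = α * t ^ (-α) * ∫ x in Set.Ioc 0 t, x ^ (α - 1) * F x := by ring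
end

section
/- Let ν be a probability measure on [0,∞) with cumulative distribution function F and Williamson transform G. If t > 0 and F is continuous at t, then G is differentiable at t and F(t) = G(t) + (t/α) G′(t). -/
open MeasureTheory Filter Real Topology

set_option maxHeartbeats 1000000

private lemma bernoulli_aux {α x : ℝ} (hα : 0 < α) (hx : 0 < x) (hx1 : x ≤ 1) :
    x * (1 - x ^ α) ≤ α * (1 - x) := by
  have hs : (-1 : ℝ) ≤ x - 1 := by linarith
  have hp : (1 : ℝ) ≤ 1 + α := by linarith
  have hb := one_add_mul_self_le_rpow_one_add hs hp
  have h1 : (1 + (x - 1)) ^ (1 + α) = x * x ^ α := by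
    rw [show (1 : ℝ) + (x - 1) = x by ring, Real.rpow_add hx, Real.rpow_one]
  rw [h1] at hb
  nlinarith [hb]

/-- If t > 0 and the cdf F is continuous at t, then the Williamson transform G
is differentiable at t and F(t) = G(t) + (t/α) G′(t). -/
theorem cdf_eq_williamson_add_deriv
    (α : ℝ) (hα : 0 < α)
    (ν : Measure ℝ) [IsProbabilityMeasure ν] (hν : ν (Set.Iio 0) = 0)
    (F G : ℝ → ℝ)
    (hF : ∀ t, F t = (ν (Set.Iic t)).toReal)
    (hG : ∀ t, 0 < t → G t = ∫ x, max (1 - (x / t) ^ α) 0 ∂ν)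
    (t : ℝ) (ht : 0 < t) (hcont : ContinuousAt F t) :
    DifferentiableAt ℝ G t ∧ F t = G t + (t / α) * deriv G t := by
  -- a.e. nonnegativity
  have hae : ∀ᵐ a ∂ν, 0 ≤ a := by
    rw [ae_iff]
    convert hν using 2
    ext a; simp [Set.Iio]
  -- ν {t} = 0
  have hsing : ν {t} = 0 := by
    set sn : ℕ → ℝ := fun n => t - 1 / (n + 1) with hsn
    have hmono : Monotone fun n => Set.Iic (sn n) := by
      intro m n hmn
      apply Set.Iic_subset_Iic.2
      have : (1 : ℝ) / (n + 1) ≤ 1 / (m + 1) := by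
        apply one_div_le_one_div_of_le (by positivity)
        exact_mod_cast add_le_add_left (Nat.cast_le.2 hmn) 1
      simp only [hsn]; linarith
    have hU : (⋃ n, Set.Iic (sn n)) = Set.Iio t := by
      ext x
      simp only [Set.mem_iUnion, Set.mem_Iic, Set.mem_Iio]
      constructor
      · rintro ⟨n, hn⟩
        have : (0 : ℝ) < 1 / (n + 1) := by positivity
        simp only [hsn] at hn; linarith
      · intro hx
        obtain ⟨n, hn⟩ := exists_nat_one_div_lt (show (0:ℝ) < t - x by linarith)
        exact ⟨n, by simp only [hsn]; linarith⟩
    have h1 : Tendsto (fun n => ν (Set.Iic (sn n))) atTop (𝓝 (ν (Set.Iio t))) := by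
      have := tendsto_measure_iUnion_atTop (μ := ν) hmono
      rwa [hU] at this
    have h1' : Tendsto (fun n => (ν (Set.Iic (sn n))).toReal) atTop
        (𝓝 ((ν (Set.Iio t)).toReal)) :=
      (ENNReal.tendsto_toReal (measure_ne_top ν _)).comp h1
    have h2 : Tendsto sn atTop (𝓝 t) := by
      have : Tendsto (fun n : ℕ => 1 / ((n : ℝ) + 1)) atTop (𝓝 0) :=
        tendsto_one_div_add_atTop_nhds_zero_nat
      have h := tendsto_const_nhds (x := t) (f := atTop (α := ℕ)) |>.sub this
      rw [hsn]
      simpa using h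
    have h3 : Tendsto (fun n => F (sn n)) atTop (𝓝 (F t)) := hcont.tendsto.comp h2
    have h4 : (ν (Set.Iio t)).toReal = F t := by
      refine tendsto_nhds_unique ?_ h3
      convert h1' using 2 with n
      exact hF (sn n)
    have h5 : ν (Set.Iio t) = ν (Set.Iic t) := by
      rw [hF t] at h4
      exact (ENNReal.toReal_eq_toReal_iff' (measure_ne_top ν _) (measure_ne_top ν _)).1 h4
    have h6 : ν (Set.Iic t) = ν (Set.Iio t) + ν {t} := by
      rw [← Set.Iio_union_right, measure_union (by simp) (measurableSet_singleton t)]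
    rw [← h5] at h6
    have := (ENNReal.add_right_inj (measure_ne_top ν _)).1
      (by rw [← h6, add_zero] : ν (Set.Iio t) + 0 = ν (Set.Iio t) + ν {t})
    exact this.symm
  have haet : ∀ᵐ a ∂ν, a ≠ t := by
    rw [ae_iff]
    convert hsing using 2
    ext a; simp
  -- the parametric integrand
  set φ : ℝ → ℝ → ℝ := fun s a => max (1 - (a / s) ^ α) 0 with hφ
  set F' : ℝ → ℝ := fun a => if a < t then α * a ^ α * t ^ (-α - 1) else 0 with hF'
  have hφmeas : ∀ s : ℝ, AEStronglyMeasurable (φ s) ν := by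
    intro s
    have hc : Continuous fun a : ℝ => (a / s) ^ α :=
      (continuous_id.div_const s).rpow_const (fun _ => Or.inr hα.le)
    exact ((continuous_const.sub hc).max continuous_const).aestronglyMeasurable
  have hφint : Integrable (φ t) ν := by
    apply Integrable.mono' (integrable_const (1:ℝ)) (hφmeas t)
    filter_upwards [hae] with a ha
    rw [Real.norm_eq_abs, abs_of_nonneg (le_max_right _ _)]
    have : (0:ℝ) ≤ (a / t) ^ α := Real.rpow_nonneg (by positivity) α
    apply max_le (by linarith) zero_le_one
  have hF'meas : AEStronglyMeasurable F' ν := by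
    apply Measurable.aestronglyMeasurable
    apply Measurable.ite (measurableSet_Iio) _ measurable_const
    have hc : Continuous fun a : ℝ => α * a ^ α * t ^ (-α - 1) :=
      (continuous_const.mul (continuous_id.rpow_const (fun _ => Or.inr hα.le))).mul continuous_const
    exact hc.measurable
  -- Lipschitz estimate
  have hlip : ∀ᵐ a ∂ν, LipschitzOnWith (Real.nnabs (2 * α / t)) (φ · a) (Metric.ball t (t/2)) := by
    filter_upwards [hae] with a ha
    rw [lipschitzOnWith_iff_dist_le_mul]
    have key : ∀ s₁ ∈ Metric.ball t (t/2), ∀ s₂ ∈ Metric.ball t (t/2), s₁ ≤ s₂ →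
        dist (φ s₁ a) (φ s₂ a) ≤ 2 * α / t * dist s₁ s₂ := by
      intro s₁ hs₁ s₂ hs₂ hle
      rw [Real.dist_eq, Real.dist_eq] at *
      rw [Metric.mem_ball, Real.dist_eq, abs_lt] at hs₁ hs₂
      have hs₁0 : t / 2 < s₁ := by linarith [hs₁.1]
      have hs₂0 : t / 2 < s₂ := by linarith [hs₂.1]
      by_cases hc : s₂ ≤ a
      · -- both zero
        have z : ∀ s : ℝ, t/2 < s → s ≤ a → φ s a = 0 := by
          intro s hs hsa
          simp only [hφ, max_eq_right_iff]
          have : (1:ℝ) ≤ a / s := (one_le_div (by linarith)).2 hsa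
          have : (1:ℝ) ≤ (a / s) ^ α := Real.one_le_rpow this hα.le
          linarith
        rw [z s₁ hs₁0 (hle.trans hc), z s₂ hs₂0 hc]
        have : (0:ℝ) ≤ 2 * α / t * |s₁ - s₂| := by positivity
        simpa using this
      · push_neg at hc
        set b := max a s₁ with hb
        have hab : a ≤ b := le_max_left _ _
        have hs₁b : s₁ ≤ b := le_max_right _ _
        have hbpos : t / 2 < b := lt_of_lt_of_le hs₁0 hs₁b
        have hbs₂ : b ≤ s₂ := max_le hc.le hle
        have h2pos : (0:ℝ) < s₂ := by linarith
        have hbpos' : (0:ℝ) < b := by linarith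
        have hval₁ : φ s₁ a = 1 - (a / b) ^ α := by
          rcases le_or_gt a s₁ with h | h
          · rw [hb, max_eq_right h]
            simp only [hφ, max_eq_left_iff]
            have : a / s₁ ≤ 1 := (div_le_one (by linarith)).2 h
            have : (a / s₁) ^ α ≤ 1 := Real.rpow_le_one (div_nonneg ha (by linarith)) this hα.le
            linarith
          · rw [hb, max_eq_left h.le]
            have hapos : (0:ℝ) < a := lt_trans (by linarith) h
            rw [div_self hapos.ne', Real.one_rpow]
            simp only [hφ, sub_self]
            have : (1:ℝ) ≤ a / s₁ := (one_le_div (by linarith)).2 h.le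
            have : (1:ℝ) ≤ (a / s₁) ^ α := Real.one_le_rpow this hα.le
            rw [max_eq_right (by linarith)]
        have hval₂ : φ s₂ a = 1 - (a / s₂) ^ α := by
          simp only [hφ, max_eq_left_iff]
          have : a / s₂ ≤ 1 := (div_le_one h2pos).2 hc.le
          have : (a / s₂) ^ α ≤ 1 := Real.rpow_le_one (div_nonneg ha (by linarith)) this hα.le
          linarith
        rw [hval₁, hval₂]
        have hsplit : (a / s₂ : ℝ) = (a / b) * (b / s₂) := by
          field_simp
        have hmul : (a / s₂ : ℝ) ^ α = (a / b) ^ α * (b / s₂) ^ α := by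
          rw [hsplit, Real.mul_rpow (div_nonneg ha hbpos'.le) (div_nonneg hbpos'.le h2pos.le)]
        have hab1 : (a / b : ℝ) ^ α ≤ 1 :=
          Real.rpow_le_one (div_nonneg ha hbpos'.le) ((div_le_one hbpos').2 hab) hα.le
        have hbs1 : (b / s₂ : ℝ) ^ α ≤ 1 :=
          Real.rpow_le_one (div_nonneg hbpos'.le h2pos.le) ((div_le_one h2pos).2 hbs₂) hα.le
        have hber : (1 : ℝ) - (b / s₂) ^ α ≤ α * (s₂ - b) / b := by
          have hx : (0:ℝ) < b / s₂ := div_pos hbpos' h2pos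
          have hx1 : b / s₂ ≤ 1 := (div_le_one h2pos).2 hbs₂
          have := bernoulli_aux hα hx hx1
          have h' : (b / s₂) * (1 - (b/s₂)^α) ≤ α * (1 - b/s₂) := this
          have hb' : b * (1 - (b/s₂)^α) ≤ α * (s₂ - b) := by
            have hm := mul_le_mul_of_nonneg_right h' h2pos.le
            have e1 : (b/s₂ * (1 - (b/s₂)^α)) * s₂ = b * (1 - (b/s₂)^α) := by
              field_simp
            have e2 : (α * (1 - b/s₂)) * s₂ = α * (s₂ - b) := by
              field_simp
            rw [e1, e2] at hm
            exact hm
          rw [le_div_iff₀ hbpos']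
          nlinarith [hb']
        have hnn : (0:ℝ) ≤ 1 - (b / s₂) ^ α := by
          have : (0:ℝ) ≤ (b/s₂)^α := Real.rpow_nonneg (div_nonneg hbpos'.le h2pos.le) α
          linarith [hbs1]
        have habnn : (0:ℝ) ≤ (a/b)^α := Real.rpow_nonneg (div_nonneg ha hbpos'.le) α
        have hfinal : (1 - (a/s₂)^α) - (1 - (a/b)^α) ≤ 2 * α / t * (s₂ - s₁) := by
          have h1 : (1 - (a/s₂)^α) - (1 - (a/b)^α) = (a/b)^α * (1 - (b/s₂)^α) := by
            rw [hmul]; ring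
          rw [h1]
          calc (a/b)^α * (1 - (b/s₂)^α) ≤ 1 * (1 - (b/s₂)^α) :=
                mul_le_mul_of_nonneg_right hab1 hnn
            _ = 1 - (b/s₂)^α := one_mul _
            _ ≤ α * (s₂ - b) / b := hber
            _ ≤ 2 * α / t * (s₂ - s₁) := by
                rw [div_le_iff₀ hbpos']
                have hb2 : t / 2 ≤ b := hbpos.le
                have hsb : s₂ - b ≤ s₂ - s₁ := by linarith
                have h0 : (0:ℝ) ≤ s₂ - b := by linarith
                calc α * (s₂ - b) ≤ α * (s₂ - s₁) := by nlinarith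
                  _ = (2 * α / t * (s₂ - s₁)) * (t/2) := by field_simp
                  _ ≤ (2 * α / t * (s₂ - s₁)) * b := by
                      apply mul_le_mul_of_nonneg_left hb2 (mul_nonneg (by positivity) (by linarith))
        have hord : (1 - (a/b)^α) ≤ 1 - (a/s₂)^α := by
          have h1 : (a/s₂)^α ≤ (a/b)^α := by
            apply Real.rpow_le_rpow (div_nonneg ha h2pos.le) _ hα.le
            gcongr
          linarith
        rw [abs_of_nonpos (by linarith), abs_of_nonpos (by linarith)]
        linarith
    intro s₁ hs₁ s₂ hs₂
    rw [Real.coe_nnabs, abs_of_nonneg (by positivity : (0:ℝ) ≤ 2 * α / t)]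
    rcases le_total s₁ s₂ with h | h
    · exact key s₁ hs₁ s₂ hs₂ h
    · rw [dist_comm (φ s₁ a), dist_comm s₁]
      exact key s₂ hs₂ s₁ hs₁ h
  -- pointwise differentiability
  have hdiff : ∀ᵐ a ∂ν, HasDerivAt (φ · a) (F' a) t := by
    filter_upwards [hae, haet] with a ha hat
    rcases lt_or_gt_of_ne hat with hlt | hgt
    · -- a < t
      have hd : HasDerivAt (fun s : ℝ => 1 - a ^ α * s ^ (-α)) (α * a ^ α * t ^ (-α - 1)) t := by
        have h1 : HasDerivAt (fun s : ℝ => s ^ (-α)) (-α * t ^ (-α - 1)) t :=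
          Real.hasDerivAt_rpow_const (Or.inl ht.ne')
        have := (h1.const_mul (a ^ α)).const_sub 1
        refine this.congr_deriv ?_
        ring
      have hF'a : F' a = α * a ^ α * t ^ (-α - 1) := by simp [hF', hlt]
      rw [hF'a]
      apply hd.congr_of_eventuallyEq
      have hmem : Set.Ioi (max a 0) ∈ 𝓝 t := Ioi_mem_nhds (by simp [hlt, ht])
      filter_upwards [hmem] with s hs
      rw [Set.mem_Ioi, max_lt_iff] at hs
      have hs0 : (0:ℝ) < s := hs.2
      have hdiv : a / s < 1 := (div_lt_one hs0).2 hs.1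
      have hr : (a / s) ^ α ≤ 1 := Real.rpow_le_one (by positivity) hdiv.le hα.le
      simp only [hφ]
      rw [max_eq_left (by linarith)]
      rw [Real.div_rpow ha hs0.le, Real.rpow_neg hs0.le, div_eq_mul_inv]
    · -- a > t
      have hF'0 : F' a = 0 := by simp [hF', not_lt.2 hgt.le]
      rw [hF'0]
      apply (hasDerivAt_const t (0:ℝ)).congr_of_eventuallyEq
      have hmem : Set.Ioo 0 a ∈ 𝓝 t := Ioo_mem_nhds ht hgt
      filter_upwards [hmem] with s hs
      have hdiv : (1:ℝ) < a / s := (one_lt_div hs.1).2 hs.2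
      have hr : (1:ℝ) ≤ (a / s) ^ α := Real.one_le_rpow hdiv.le hα.le
      simp only [hφ]
      rw [max_eq_right (by linarith)]
  -- differentiate under the integral
  obtain ⟨hF'int, hderiv⟩ := hasDerivAt_integral_of_dominated_loc_of_lip
    (μ := ν) (F := φ) (x₀ := t) (bound := fun _ => 2 * α / t)
    (Metric.ball_mem_nhds t (by positivity : (0:ℝ) < t/2))
    (Filter.Eventually.of_forall hφmeas) hφint hF'meas hlip (integrable_const _) hdiff
  have hGeq : G =ᶠ[𝓝 t] fun s => ∫ a, φ s a ∂ν := by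
    filter_upwards [Ioi_mem_nhds ht] with s hs
    exact hG s hs
  have hderivG : HasDerivAt G (∫ a, F' a ∂ν) t := hderiv.congr_of_eventuallyEq hGeq
  refine ⟨hderivG.differentiableAt, ?_⟩
  rw [hderivG.deriv, hG t ht]
  have hcm : (t / α) * ∫ a, F' a ∂ν = ∫ a, (t / α) * F' a ∂ν := (integral_const_mul _ _).symm
  rw [hcm, ← integral_add hφint (hF'int.const_mul _)]
  have hkey : ∫ a, (φ t a + (t / α) * F' a) ∂ν = (ν (Set.Iio t)).toReal := by
    rw [← measureReal_def, ← integral_indicator_one measurableSet_Iio]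
    apply integral_congr_ae
    filter_upwards [hae, haet] with a ha hat
    rcases lt_or_gt_of_ne hat with hlt | hgt
    · have h1 : φ t a = 1 - (a / t) ^ α := by
        simp only [hφ, max_eq_left_iff]
        have : a / t ≤ 1 := (div_le_one ht).2 hlt.le
        have : (a / t) ^ α ≤ 1 := Real.rpow_le_one (by positivity) this hα.le
        linarith
      have h2 : F' a = α * a ^ α * t ^ (-α - 1) := by simp [hF', hlt]
      have h3 : (t / α) * F' a = (a / t) ^ α := by
        rw [h2, Real.div_rpow ha ht.le]
        rw [show (-α - 1 : ℝ) = -α + (-1) by ring, Real.rpow_add ht, Real.rpow_neg ht.le,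
          Real.rpow_neg_one]
        field_simp
      rw [h1, h3]
      simp [Set.indicator_of_mem (Set.mem_Iio.2 hlt)]
    · have h1 : φ t a = 0 := by
        simp only [hφ, max_eq_right_iff]
        have : (1:ℝ) < a / t := (one_lt_div ht).2 hgt
        have : (1:ℝ) ≤ (a / t) ^ α := Real.one_le_rpow this.le hα.le
        linarith
      have h2 : F' a = 0 := by simp [hF', not_lt.2 hgt.le]
      rw [h1, h2, Set.indicator_of_notMem (by simp [Set.mem_Iio, not_lt.2 hgt.le] : a ∉ Set.Iio t)]
      ring
  rw [hkey, hF t]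
  congr 1
  rw [← Set.Iio_union_right, measure_union (by simp) (measurableSet_singleton t), hsing, add_zero]
end

section
/- Let ν be a probability measure on [0,∞) with Williamson transform G and truncated α-moment H, let n ≥ 1 be an integer, and let μ be a probability measure on [0,∞) with cumulative distribution function F_μ whose Williamson transform equals G^n, i.e. ∫_{[0,∞)} (1 − (x/t)^α)₊ μ(dx) = G(t)^n for all t > 0. Then for every t > 0, F_μ(t) = G(t)^{n−1} ( n t^{−α} H(t) + G(t) ). -/
open MeasureTheory Filter Real Topology Set ENNReal


lemma williamson_split (α : ℝ) (hα : 0 < α)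
    (ρ : Measure ℝ) [IsProbabilityMeasure ρ] (hρ : ρ (Set.Iio 0) = 0)
    (t : ℝ) (ht : 0 < t) :
    ∫ x, max (1 - (x / t) ^ α) 0 ∂ρ
      = (ρ (Set.Iic t)).toReal - t ^ (-α) * ∫ x in Set.Icc 0 t, x ^ α ∂ρ := by
  have hae : ∀ᵐ x ∂ρ, 0 ≤ x := by
    rw [ae_iff]
    have : {x : ℝ | ¬ 0 ≤ x} = Set.Iio 0 := by ext x; simp
    rw [this, hρ]
  have hcong : ∀ᵐ x ∂ρ, max (1 - (x / t) ^ α) 0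
      = Set.indicator (Set.Icc 0 t) (fun x => 1 - x ^ α * t ^ (-α)) x := by
    filter_upwards [hae] with x hx
    rcases le_or_gt x t with hxt | hxt
    · have hmem : x ∈ Set.Icc 0 t := ⟨hx, hxt⟩
      rw [Set.indicator_of_mem hmem]
      have h1 : (x / t) ^ α ≤ 1 :=
        Real.rpow_le_one (div_nonneg hx ht.le) ((div_le_one ht).2 hxt) hα.le
      rw [max_eq_left (by linarith)]
      rw [Real.div_rpow hx ht.le, Real.rpow_neg ht.le, div_eq_mul_inv]
    · rw [Set.indicator_of_notMem (fun h => absurd h.2 (not_le.2 hxt))]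
      have h1 : (1:ℝ) ≤ (x / t) ^ α :=
        Real.one_le_rpow ((one_le_div ht).2 hxt.le) hα.le
      rw [max_eq_right (by linarith)]
  rw [integral_congr_ae hcong, integral_indicator measurableSet_Icc]
  have hint : IntegrableOn (fun x => x ^ α) (Set.Icc 0 t) ρ := by
    apply ContinuousOn.integrableOn_compact isCompact_Icc
    intro x hx
    exact (Real.continuousAt_rpow_const x α (Or.inr hα.le)).continuousWithinAt
  have hconst : IntegrableOn (fun _ : ℝ => (1:ℝ)) (Set.Icc 0 t) ρ := integrableOn_const (measure_ne_top _ _)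
  rw [integral_sub hconst (hint.mul_const _)]
  have hmeas : ρ (Set.Icc 0 t) = ρ (Set.Iic t) := by
    have : Set.Iic t = Set.Icc 0 t ∪ Set.Iio 0 := by
      ext x; simp only [Set.mem_Iic, Set.mem_union, Set.mem_Icc, Set.mem_Iio]
      constructor
      · intro h; rcases le_or_gt 0 x with h0 | h0
        · exact Or.inl ⟨h0, h⟩
        · exact Or.inr h0
      · rintro (⟨_, h⟩ | h); exact h; linarith
    rw [this]
    exact le_antisymm (measure_mono Set.subset_union_left)
      ((measure_union_le _ _).trans (by rw [hρ, add_zero]))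
    
  rw [setIntegral_const, smul_eq_mul, mul_one, measureReal_def, hmeas, integral_mul_const]
  ring


lemma williamson_fubini (α : ℝ) (hα : 0 < α)
    (ρ : Measure ℝ) [IsProbabilityMeasure ρ] (hρ : ρ (Set.Iio 0) = 0)
    (t : ℝ) (ht : 0 < t) :
    ∫ s in (0:ℝ)..t, α * s ^ (α - 1) * (ρ (Set.Iic s)).toReal
      = t ^ α * ∫ x, max (1 - (x / t) ^ α) 0 ∂ρ := by
  have hae : ∀ᵐ x ∂ρ, 0 ≤ x := by
    have : {x : ℝ | ¬ 0 ≤ x} = Set.Iio 0 := by ext x; simp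
    rw [ae_iff, this, hρ]
  have hmF : Measurable fun s : ℝ => (ρ (Set.Iic s)).toReal := by
    apply Monotone.measurable
    intro a b hab
    exact ENNReal.toReal_mono (measure_ne_top ρ _) (measure_mono (Set.Iic_subset_Iic.2 hab))
  have hmr : Measurable fun s : ℝ => α * s ^ (α - 1) := by measurability
  have hmmax : Measurable fun x : ℝ => t ^ α * max (1 - (x / t) ^ α) 0 := by measurability
  -- write left side as toReal of a lintegral
  have hL : ∫ s in (0:ℝ)..t, α * s ^ (α - 1) * (ρ (Set.Iic s)).toReal
      = (∫⁻ s in Set.Ioc 0 t, ENNReal.ofReal (α * s ^ (α - 1)) * ρ (Set.Iic s)).toReal := by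
    rw [intervalIntegral.integral_of_le ht.le]
    rw [integral_eq_lintegral_of_nonneg_ae]
    · congr 1
      apply lintegral_congr_ae
      filter_upwards [ae_restrict_mem measurableSet_Ioc] with s hs
      have h0 : (0:ℝ) ≤ α * s ^ (α - 1) := by
        have := Real.rpow_nonneg hs.1.le (α - 1); positivity
      rw [ENNReal.ofReal_mul h0, ENNReal.ofReal_toReal (measure_ne_top ρ _)]
    · filter_upwards [ae_restrict_mem measurableSet_Ioc] with s hs
      have : (0:ℝ) ≤ s ^ (α - 1) := Real.rpow_nonneg hs.1.le _
      have h2 : (0:ℝ) ≤ (ρ (Set.Iic s)).toReal := ENNReal.toReal_nonneg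
      positivity
    · exact ((hmr.mul hmF).aestronglyMeasurable).restrict
  -- write right side as toReal of a lintegral
  have hR : t ^ α * ∫ x, max (1 - (x / t) ^ α) 0 ∂ρ
      = (∫⁻ x, ENNReal.ofReal (t ^ α * max (1 - (x / t) ^ α) 0) ∂ρ).toReal := by
    rw [← integral_const_mul]
    rw [integral_eq_lintegral_of_nonneg_ae]
    · exact Filter.Eventually.of_forall fun x => by positivity
    · exact hmmax.aestronglyMeasurable
  rw [hL, hR]
  congr 1
  -- now the lintegral identity, by Tonelli
  calc ∫⁻ s in Set.Ioc 0 t, ENNReal.ofReal (α * s ^ (α - 1)) * ρ (Set.Iic s)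
      = ∫⁻ s in Set.Ioc 0 t, ∫⁻ x, ENNReal.ofReal (α * s ^ (α - 1))
          * (Set.Iic s).indicator 1 x ∂ρ := by
        apply lintegral_congr fun s => ?_
        rw [lintegral_const_mul _ ((measurable_one.indicator measurableSet_Iic))]
        rw [lintegral_indicator_one measurableSet_Iic]
    _ = ∫⁻ x, ∫⁻ s in Set.Ioc 0 t, ENNReal.ofReal (α * s ^ (α - 1))
          * (Set.Iic s).indicator 1 x ∂(volume) ∂ρ := by
        apply lintegral_lintegral_swap
        apply AEMeasurable.mul
        · exact ((hmr.comp measurable_fst).ennreal_ofReal).aemeasurable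
        · have : (Function.uncurry fun s x => (Set.Iic s).indicator (1 : ℝ → ℝ≥0∞) x)
              = Set.indicator {p : ℝ × ℝ | p.2 ≤ p.1} 1 := by
            ext p
            simp [Function.uncurry, Set.indicator_apply]
          exact (this ▸ (measurable_one.indicator (measurableSet_le measurable_snd measurable_fst))).aemeasurable
    _ = ∫⁻ x, ENNReal.ofReal (t ^ α * max (1 - (x / t) ^ α) 0) ∂ρ := by
        apply lintegral_congr_ae
        filter_upwards [hae] with x hx
        -- inner integral equals ofReal (t^α * max ...)
        have hind : ∀ s : ℝ, ENNReal.ofReal (α * s ^ (α - 1)) * (Set.Iic s).indicator 1 x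
            = (Set.Ici x).indicator (fun s => ENNReal.ofReal (α * s ^ (α - 1))) s := by
          intro s
          by_cases hxs : x ≤ s
          · simp [Set.indicator_of_mem, hxs, Set.mem_Ici.2 hxs]
          · simp [Set.indicator_of_notMem, hxs]
        simp_rw [hind]
        rw [lintegral_indicator measurableSet_Ici _, Measure.restrict_restrict measurableSet_Ici, Set.inter_comm]
        have hset : (Set.Ioc 0 t ∩ Set.Ici x : Set ℝ) =ᵐ[volume] (Set.Ioc x t : Set ℝ) := by
          have h1 : (Set.Ioc 0 t ∩ Set.Ici x) \ Set.Ioc x t ⊆ {x} := by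
            rintro s ⟨⟨⟨hs0, hst⟩, hxs⟩, hns⟩
            have hsx : ¬ x < s := fun h => hns ⟨h, hst⟩
            exact Set.mem_singleton_iff.2 (le_antisymm (not_lt.1 hsx) hxs)
          have h2 : Set.Ioc x t ⊆ Set.Ioc 0 t ∩ Set.Ici x := fun s hs =>
            ⟨⟨lt_of_le_of_lt hx hs.1, hs.2⟩, hs.1.le⟩
          refine (MeasureTheory.ae_eq_set).2 ⟨measure_mono_null h1 (measure_singleton x), ?_⟩
          rw [Set.diff_eq_empty.2 h2, measure_empty]
        rw [Measure.restrict_congr_set hset]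
        rcases le_or_gt x t with hxt | hxt
        · -- 0 ≤ x ≤ t
          rw [← ofReal_integral_eq_lintegral_ofReal]
          · congr 1
            have : ∫ s in Set.Ioc x t, α * s ^ (α - 1)
                = ∫ s in (x)..t, α * s ^ (α - 1) := (intervalIntegral.integral_of_le hxt).symm
            rw [this, intervalIntegral.integral_const_mul, integral_rpow (Or.inl (by linarith))]
            have hx1 : (x / t) ^ α ≤ 1 :=
              Real.rpow_le_one (div_nonneg hx ht.le) ((div_le_one ht).2 hxt) hα.le
            rw [max_eq_left (by linarith), Real.div_rpow hx ht.le]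
            have htα : (0:ℝ) < t ^ α := Real.rpow_pos_of_pos ht α
            simp only [sub_add_cancel]
            field_simp
          · have : IntervalIntegrable (fun s => α * s ^ (α - 1)) volume x t := by
              apply IntervalIntegrable.const_mul
              apply intervalIntegral.intervalIntegrable_rpow'
              linarith
            exact (intervalIntegrable_iff_integrableOn_Ioc_of_le hxt).1 this
          · filter_upwards [ae_restrict_mem measurableSet_Ioc] with s hs
            have h0 : (0:ℝ) ≤ s ^ (α - 1) := Real.rpow_nonneg (le_trans hx hs.1.le) _
            positivity
        · -- x > t : both sides zero
          rw [Set.Ioc_eq_empty (not_lt.2 hxt.le), Measure.restrict_empty, lintegral_zero_measure]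
          have h1 : (1:ℝ) ≤ (x / t) ^ α :=
            Real.one_le_rpow ((one_le_div ht).2 hxt.le) hα.le
          rw [max_eq_right (by linarith), mul_zero, ENNReal.ofReal_zero]


lemma pow_pred_mul_self (m : ℕ) (x : ℝ) : (m:ℝ) * x ^ (m-1) * x = (m:ℝ) * x ^ m := by
  cases m with
  | zero => simp
  | succ k => rw [Nat.add_sub_cancel, pow_succ]; ring

lemma ftc_right_kendall (α : ℝ) (hα : 0 < α)
    (ρ : Measure ℝ) [IsProbabilityMeasure ρ] (t : ℝ) (ht : 0 < t) :
    HasDerivWithinAt (fun u => ∫ s in (0:ℝ)..u, α * s ^ (α - 1) * (ρ (Set.Iic s)).toReal)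
      (α * t ^ (α - 1) * (ρ (Set.Iic t)).toReal) (Set.Ici t) t := by
  have hmF : Measurable fun s : ℝ => (ρ (Set.Iic s)).toReal := by
    apply Monotone.measurable
    intro a b hab
    exact ENNReal.toReal_mono (measure_ne_top ρ _) (measure_mono (Set.Iic_subset_Iic.2 hab))
  have hmr : Measurable fun s : ℝ => α * s ^ (α - 1) := by measurability
  have hint : IntervalIntegrable (fun s => α * s ^ (α - 1) * (ρ (Set.Iic s)).toReal)
      volume 0 t := by
    rw [intervalIntegrable_iff_integrableOn_Ioc_of_le ht.le]
    have hg2 : IntegrableOn (fun s : ℝ => α * s ^ (α - 1)) (Set.Ioc 0 t) volume :=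
      (intervalIntegrable_iff_integrableOn_Ioc_of_le ht.le).1 (by
        apply IntervalIntegrable.const_mul
        exact intervalIntegral.intervalIntegrable_rpow' (by linarith))
    apply Integrable.mono hg2 ((hmr.mul hmF).aestronglyMeasurable.restrict)
    filter_upwards [ae_restrict_mem measurableSet_Ioc] with s hs
    have h0 : (0:ℝ) ≤ s ^ (α - 1) := Real.rpow_nonneg hs.1.le _
    have h1 : (ρ (Set.Iic s)).toReal ≤ 1 := by
      have := prob_le_one (μ := ρ) (s := Set.Iic s)
      simpa using ENNReal.toReal_le_toReal (measure_ne_top ρ _) (by simp) |>.2 this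
    have h2 : (0:ℝ) ≤ (ρ (Set.Iic s)).toReal := ENNReal.toReal_nonneg
    rw [Real.norm_eq_abs, Real.norm_eq_abs]
    simp only [Pi.mul_apply]
    rw [abs_mul (α * s ^ (α - 1)), abs_of_nonneg (by positivity : (0:ℝ) ≤ α * s ^ (α-1)), abs_of_nonneg h2]
    nlinarith [mul_nonneg hα.le h0, mul_le_of_le_one_right (mul_nonneg hα.le h0) h1]
  have hcF : ContinuousWithinAt (fun s : ℝ => (ρ (Set.Iic s)).toReal) (Set.Ici t) t := by
    have : (fun s : ℝ => (ρ (Set.Iic s)).toReal) = ProbabilityTheory.cdf ρ := by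
      funext s; rw [ProbabilityTheory.cdf_eq_real, measureReal_def]
    rw [this]
    exact (ProbabilityTheory.cdf ρ).right_continuous t
  have hcr : ContinuousAt (fun s : ℝ => α * s ^ (α - 1)) t :=
    (Real.continuousAt_rpow_const t (α - 1) (Or.inl ht.ne')).const_mul α
  exact intervalIntegral.integral_hasDerivWithinAt_right hint
    ⟨Set.univ, Filter.univ_mem, ((hmr.mul hmF).aestronglyMeasurable.restrict)⟩
    ((hcr.continuousWithinAt.mul hcF).mono Set.Ioi_subset_Ici_self)

/-- If μ is a probability measure on [0,∞) whose Williamson transform equals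
G^n (the n-fold Kendall convolution power ν^{▵_α n}), then its cdf satisfies
F_μ(t) = G(t)^{n−1} ( n t^{−α} H(t) + G(t) ) for every t > 0. -/
theorem cdf_of_kendall_power
    (α : ℝ) (hα : 0 < α)
    (ν : Measure ℝ) [IsProbabilityMeasure ν] (hν : ν (Set.Iio 0) = 0)
    (G H : ℝ → ℝ)
    (hG : ∀ t, 0 < t → G t = ∫ x, max (1 - (x / t) ^ α) 0 ∂ν)
    (hH : ∀ t, 0 < t → H t = ∫ x in Set.Icc 0 t, x ^ α ∂ν)
    (n : ℕ) (hn : 1 ≤ n)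
    (μ : Measure ℝ) [IsProbabilityMeasure μ] (hμ : μ (Set.Iio 0) = 0)
    (Fμ : ℝ → ℝ) (hFμ : ∀ t, Fμ t = (μ (Set.Iic t)).toReal)
    (hW : ∀ t, 0 < t → ∫ x, max (1 - (x / t) ^ α) 0 ∂μ = (G t) ^ n)
    (t : ℝ) (ht : 0 < t) :
    Fμ t = (G t) ^ (n - 1) * ((n : ℝ) * t ^ (-α) * H t + G t) := by
  obtain ⟨m, rfl⟩ : ∃ m, n = m + 1 := ⟨n - 1, (Nat.succ_pred_eq_of_pos hn).symm⟩
  have hΦμ : ∀ u, 0 < u →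
      (∫ s in (0:ℝ)..u, α * s ^ (α - 1) * (μ (Set.Iic s)).toReal) = u ^ α * (G u) ^ (m+1) :=
    fun u hu => by rw [williamson_fubini α hα μ hμ u hu, hW u hu]
  have hΦν : ∀ u, 0 < u →
      (∫ s in (0:ℝ)..u, α * s ^ (α - 1) * (ν (Set.Iic s)).toReal) = u ^ α * G u :=
    fun u hu => by rw [williamson_fubini α hα ν hν u hu, hG u hu]
  set c := α * t ^ (α - 1) with hc_def
  have htα : (0:ℝ) < t ^ α := Real.rpow_pos_of_pos ht α
  have hc : 0 < c := by
    have := Real.rpow_pos_of_pos ht (α - 1); positivity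
  -- derivatives within Ici t
  have h1 : HasDerivWithinAt (fun u => ∫ s in (0:ℝ)..u, α * s ^ (α - 1) * (μ (Set.Iic s)).toReal)
      (c * Fμ t) (Set.Ici t) t := by
    rw [hFμ]; exact ftc_right_kendall α hα μ t ht
  have h2 : HasDerivWithinAt (fun u => ∫ s in (0:ℝ)..u, α * s ^ (α - 1) * (ν (Set.Iic s)).toReal)
      (c * (ν (Set.Iic t)).toReal) (Set.Ici t) t := ftc_right_kendall α hα ν t ht
  have h3 : HasDerivWithinAt (fun u : ℝ => u ^ α) c (Set.Ici t) t := by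
    have := Real.hasDerivAt_rpow_const (x := t) (p := α) (Or.inl ht.ne')
    exact this.hasDerivWithinAt
  have hlhs := h1.mul (h3.pow m)
  have hrhs := h2.pow (m + 1)
  have heq : ∀ u ∈ Set.Ici t,
      (fun u => (∫ s in (0:ℝ)..u, α * s ^ (α - 1) * (μ (Set.Iic s)).toReal) * (u ^ α) ^ m) u
      = (fun u => (∫ s in (0:ℝ)..u, α * s ^ (α - 1) * (ν (Set.Iic s)).toReal) ^ (m+1)) u := by
    intro u hu
    have hu0 : 0 < u := lt_of_lt_of_le ht hu
    simp only [hΦμ u hu0, hΦν u hu0, mul_pow]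
    ring
  have hlhs' := hrhs.congr heq (heq t Set.self_mem_Ici)
  have hud : UniqueDiffWithinAt ℝ (Set.Ici t) t := uniqueDiffOn_Ici t t Set.self_mem_Ici
  have E := (hlhs.derivWithin hud).symm.trans (hlhs'.derivWithin hud)
  rw [hΦμ t ht, hΦν t ht] at E
  simp only [Nat.add_sub_cancel, Nat.cast_add, Nat.cast_one] at E
  -- Fν in terms of G and H
  have hFν : (ν (Set.Iic t)).toReal = G t + t ^ (-α) * H t := by
    have hs := williamson_split α hα ν hν t ht
    rw [← hH t ht, ← hG t ht] at hs
    linarith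
  have hm := pow_pred_mul_self m (t ^ α)
  have hane : c * (t ^ α) ^ m ≠ 0 := by positivity
  have hkey : Fμ t = ((m:ℝ)+1) * (G t) ^ m * ((ν (Set.Iic t)).toReal) - (m:ℝ) * (G t) ^ (m+1) := by
    apply mul_left_cancel₀ hane
    rw [mul_pow] at E
    simp only [Pi.pow_apply] at E
    linear_combination E - c * (G t) ^ (m+1) * hm
  rw [hkey, hFν]
  simp only [Nat.add_sub_cancel, Nat.cast_add, Nat.cast_one]
  ring
end

section
/- Let x, y ≥ 0 with M = max(x,y) > 0 and let t > 0. Then ∫_{(0,t]} w^α (δ_x ▵_α δ_y)(dw) = x^α + y^α − 2 x^α y^α t^{−α} if t ≥ M, and this integral equals 0 if t < M. -/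
open MeasureTheory Filter Real Topology
open scoped ENNReal NNReal

/-- The Pareto probability measure on [1,∞) with density 2α u^{−2α−1}. -/
noncomputable def pareto (α : ℝ) : Measure ℝ :=
  (volume.restrict (Set.Ici 1)).withDensity fun u => ENNReal.ofReal (2 * α * u ^ (-2 * α - 1))

lemma Ioc_inter_Ici (s : ℝ) : Set.Ioc 0 s ∩ Set.Ici 1 = Set.Icc 1 s := by
  ext u
  simp only [Set.mem_inter_iff, Set.mem_Ioc, Set.mem_Ici, Set.mem_Icc]
  constructor
  · rintro ⟨⟨_, h2⟩, h3⟩; exact ⟨h3, h2⟩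
  · rintro ⟨h1, h2⟩; exact ⟨⟨lt_of_lt_of_le one_pos h1, h2⟩, h1⟩

lemma pareto_restrict (α s : ℝ) :
    (pareto α).restrict (Set.Ioc 0 s) = (volume.restrict (Set.Icc 1 s)).withDensity
      fun u => ENNReal.ofReal (2 * α * u ^ (-2 * α - 1)) := by
  rw [pareto, restrict_withDensity measurableSet_Ioc,
    Measure.restrict_restrict measurableSet_Ioc, Ioc_inter_Ici]

lemma integrable_aux (α M s : ℝ) (hα : 0 < α) (hM : 0 < M) :
    Integrable (fun u => (M * u) ^ α) ((pareto α).restrict (Set.Ioc 0 s)) := by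
  rw [pareto_restrict]
  rw [show (fun u : ℝ => ENNReal.ofReal (2 * α * u ^ (-2 * α - 1)))
      = (fun u : ℝ => ((2 * α * u ^ (-2 * α - 1)).toNNReal : ℝ≥0∞)) from rfl]
  rw [integrable_withDensity_iff_integrable_smul
    (by fun_prop : Measurable fun u : ℝ => (2 * α * u ^ (-2 * α - 1)).toNNReal)]
  apply ContinuousOn.integrableOn_compact isCompact_Icc
  apply ContinuousOn.smul
  · exact NNReal.continuous_coe.comp_continuousOn (continuous_real_toNNReal.comp_continuousOn
      ((continuousOn_const.mul (ContinuousOn.rpow_const continuousOn_id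
        (fun u (hu : u ∈ Set.Icc 1 s) => Or.inl (by have := hu.1; show u ≠ 0; positivity))))))
  · exact ContinuousOn.rpow_const (continuous_const.mul continuous_id).continuousOn
      (fun u hu => Or.inl (by have := hu.1; positivity))

lemma kendall_int (α M ρ t : ℝ) (hα : 0 < α) (hM : 0 < M) (hρ0 : 0 ≤ ρ) (hρ1 : ρ ≤ 1)
    (ht : 0 < t) :
    ∫ w in Set.Ioc 0 t, w ^ α ∂(Measure.map (fun u => M * u)
      (ENNReal.ofReal ρ • pareto α + ENNReal.ofReal (1 - ρ) • Measure.dirac 1))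
    = if M ≤ t then ρ * (M ^ α * (2 * (1 - (t / M) ^ (-α)))) + (1 - ρ) * M ^ α else 0 := by
  have hemb : MeasurableEmbedding (fun u : ℝ => M * u) :=
    (Homeomorph.mulLeft₀ M hM.ne').measurableEmbedding
  rw [hemb.setIntegral_map]
  have hpre : (fun u : ℝ => M * u) ⁻¹' Set.Ioc 0 t = Set.Ioc 0 (t / M) := by
    rw [Set.preimage_const_mul_Ioc₀ _ _ hM, zero_div]
  rw [hpre, Measure.restrict_add, Measure.restrict_smul, Measure.restrict_smul,
    integral_add_measure
      ((integrable_aux α M (t / M) hα hM).smul_measure ENNReal.ofReal_ne_top)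
      ((((integrable_const (((M : ℝ) * 1) ^ α)).congr
        (ae_eq_dirac fun u => (M * u) ^ α).symm).restrict).smul_measure ENNReal.ofReal_ne_top),
    integral_smul_measure, integral_smul_measure,
    ENNReal.toReal_ofReal hρ0, ENNReal.toReal_ofReal (by linarith),
    setIntegral_dirac (fun u => (M * u) ^ α) 1 (Set.Ioc 0 (t / M))]
  have hmem : (1 : ℝ) ∈ Set.Ioc 0 (t / M) ↔ M ≤ t := by
    simp only [Set.mem_Ioc, one_pos, true_and, le_div_iff₀ hM, one_mul]
  have hpar : ∫ u in Set.Ioc 0 (t / M), (M * u) ^ α ∂(pareto α)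
      = if M ≤ t then M ^ α * (2 * (1 - (t / M) ^ (-α))) else 0 := by
    rw [pareto_restrict,
      show (fun u : ℝ => ENNReal.ofReal (2 * α * u ^ (-2 * α - 1)))
        = (fun u : ℝ => ((2 * α * u ^ (-2 * α - 1)).toNNReal : ℝ≥0∞)) from rfl,
      integral_withDensity_eq_integral_smul (by fun_prop)]
    by_cases hMt : M ≤ t
    · have hs : (1 : ℝ) ≤ t / M := (le_div_iff₀ hM).2 (by linarith)
      rw [if_pos hMt]
      have hcongr : ∀ u ∈ Set.Icc (1 : ℝ) (t / M),
          (2 * α * u ^ (-2 * α - 1)).toNNReal • (M * u) ^ α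
            = 2 * α * M ^ α * u ^ (-α - 1) := by
        intro u hu
        have hu0 : 0 < u := lt_of_lt_of_le one_pos hu.1
        have hd : (0 : ℝ) ≤ 2 * α * u ^ (-2 * α - 1) := by positivity
        have h1 : u ^ (-2 * α - 1) * u ^ α = u ^ (-α - 1) := by
          rw [← Real.rpow_add hu0]; ring_nf
        rw [NNReal.smul_def, Real.coe_toNNReal _ hd, smul_eq_mul,
          Real.mul_rpow hM.le hu0.le]
        linear_combination 2 * α * M ^ α * h1
      rw [setIntegral_congr_fun measurableSet_Icc hcongr, integral_const_mul,
        integral_Icc_eq_integral_Ioc, ← intervalIntegral.integral_of_le hs,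
        integral_rpow (Or.inr ⟨by intro h; nlinarith, by
          rw [Set.uIcc_of_le hs]; intro h; exact absurd h.1 (by norm_num)⟩)]
      rw [show (-α - 1 + 1 : ℝ) = -α by ring, Real.one_rpow]
      field_simp [hα.ne']
      ring
    · rw [if_neg hMt]
      have : Set.Icc (1 : ℝ) (t / M) = ∅ :=
        Set.Icc_eq_empty (by rw [not_le] at hMt ⊢; exact (div_lt_one hM).2 hMt)
      rw [this, Measure.restrict_empty, integral_zero_measure]
  rw [hpar]
  by_cases hMt : M ≤ t
  · rw [if_pos hMt, if_pos hMt, if_pos (hmem.2 hMt), mul_one, smul_eq_mul, smul_eq_mul]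
  · rw [if_neg hMt, if_neg hMt, if_neg (fun h => hMt (hmem.1 h)), smul_zero, smul_zero,
      add_zero]


/-- The Kendall convolution δ_x ▵_α δ_y of two point masses: the pushforward under
u ↦ M·u of ρ·π_{2α} + (1−ρ)·δ_1, where M = max(x,y), m = min(x,y), ρ = (m/M)^α. -/
noncomputable def kendall (α x y : ℝ) : Measure ℝ :=
  Measure.map (fun u => max x y * u)
    (ENNReal.ofReal ((min x y / max x y) ^ α) • pareto α +
      ENNReal.ofReal (1 - (min x y / max x y) ^ α) • Measure.dirac 1)

/-- ∫_{(0,t]} w^α (δ_x ▵_α δ_y)(dw) = x^α + y^α − 2 x^α y^α t^{−α}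
if t ≥ max(x,y) > 0, and the integral is 0 if 0 < t < max(x,y). -/
theorem kendall_deltas_truncated_moment
    (α x y : ℝ) (hα : 0 < α) (hx : 0 ≤ x) (hy : 0 ≤ y) (hM : 0 < max x y)
    (t : ℝ) (ht : 0 < t) :
    (max x y ≤ t →
      ∫ w in Set.Ioc 0 t, w ^ α ∂(kendall α x y)
        = x ^ α + y ^ α - 2 * x ^ α * y ^ α * t ^ (-α)) ∧
    (t < max x y → ∫ w in Set.Ioc 0 t, w ^ α ∂(kendall α x y) = 0) := by
  have hm0 : (0 : ℝ) ≤ min x y := le_min hx hy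
  have hρ0 : 0 ≤ (min x y / max x y) ^ α := Real.rpow_nonneg (div_nonneg hm0 hM.le) α
  have hρ1 : (min x y / max x y) ^ α ≤ 1 :=
    Real.rpow_le_one (div_nonneg hm0 hM.le) ((div_le_one hM).2 min_le_max) hα.le
  have hkey := kendall_int α (max x y) ((min x y / max x y) ^ α) t hα hM hρ0 hρ1 ht
  constructor
  · intro hMt
    rw [kendall, hkey, if_pos hMt]
    have hdiv : (min x y / max x y) ^ α = (min x y) ^ α / (max x y) ^ α :=
      Real.div_rpow hm0 hM.le α
    have htM : (t / max x y) ^ (-α) = t ^ (-α) * (max x y) ^ α := by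
      rw [Real.div_rpow ht.le hM.le, Real.rpow_neg hM.le, div_inv_eq_mul]
    have hB : (max x y) ^ α ≠ 0 := (Real.rpow_pos_of_pos hM α).ne'
    have e1 : (min x y) ^ α * (max x y) ^ α = x ^ α * y ^ α := by
      rcases le_total x y with h | h <;>
        simp [min_eq_left h, max_eq_right h, min_eq_right h, max_eq_left h] <;> ring
    have e2 : (min x y) ^ α + (max x y) ^ α = x ^ α + y ^ α := by
      rcases le_total x y with h | h <;>
        simp [min_eq_left h, max_eq_right h, min_eq_right h, max_eq_left h] <;> ring
    calc (min x y / max x y) ^ α * ((max x y) ^ α * (2 * (1 - (t / max x y) ^ (-α))))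
          + (1 - (min x y / max x y) ^ α) * (max x y) ^ α
        = ((min x y) ^ α + (max x y) ^ α)
            - 2 * ((min x y) ^ α * (max x y) ^ α) * t ^ (-α) := by
          rw [hdiv, htM]; field_simp; ring
      _ = x ^ α + y ^ α - 2 * x ^ α * y ^ α * t ^ (-α) := by rw [e1, e2]; ring
  · intro hMt
    rw [kendall, hkey, if_neg (not_le.2 hMt)]
end

section
/- Let x, y ≥ 0 with max(x,y) > 0. Then for every t > 0, the Williamson transform of δ_x ▵_α δ_y factorizes: ∫_{[0,∞)} (1 − (w/t)^α)₊ (δ_x ▵_α δ_y)(dw) = (1 − (x/t)^α)₊ · (1 − (y/t)^α)₊. -/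
open MeasureTheory Filter Real Topology

lemma pareto_density_meas (α : ℝ) :
    Measurable fun u : ℝ => ENNReal.ofReal (2 * α * u ^ (-2 * α - 1)) := by
  apply Measurable.ennreal_ofReal; fun_prop

lemma pareto_density_integrable {α : ℝ} (hα : 0 < α) :
    IntegrableOn (fun u : ℝ => 2 * α * u ^ (-2 * α - 1)) (Set.Ici 1) := by
  rw [integrableOn_Ici_iff_integrableOn_Ioi]
  exact (integrableOn_Ioi_rpow_of_lt (by linarith) one_pos).const_mul _

lemma pareto_finite {α : ℝ} (hα : 0 < α) : IsFiniteMeasure (pareto α) := by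
  rw [pareto]
  apply isFiniteMeasure_withDensity
  rw [← ofReal_integral_eq_lintegral_ofReal (pareto_density_integrable hα)]
  · exact ENNReal.ofReal_ne_top
  · refine (ae_restrict_iff' measurableSet_Ici).mpr (ae_of_all _ fun u hu => ?_)
    have hu0 : (0:ℝ) ≤ u := le_trans zero_le_one hu
    positivity

lemma pareto_ae_Ici {α : ℝ} : ∀ᵐ u ∂(pareto α), u ∈ Set.Ici (1:ℝ) := by
  rw [pareto]
  exact (withDensity_absolutelyContinuous _ _).ae_le (ae_restrict_mem measurableSet_Ici)

lemma pareto_integral {α c : ℝ} (hα : 0 < α) (hc : 0 < c) :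
    ∫ u, max (1 - (c * u) ^ α) 0 ∂(pareto α) = (max (1 - c ^ α) 0) ^ 2 := by
  have hd : (fun u : ℝ => ENNReal.ofReal (2 * α * u ^ (-2 * α - 1)))
      = fun u : ℝ => (((2 * α * u ^ (-2 * α - 1)).toNNReal : NNReal) : ENNReal) := rfl
  rw [pareto, hd, integral_withDensity_eq_integral_smul
    (show Measurable fun u : ℝ => (2 * α * u ^ (-2 * α - 1)).toNNReal by fun_prop)]
  have hcongr : ∀ᵐ u ∂(volume.restrict (Set.Ici (1:ℝ))),
      (2 * α * u ^ (-2 * α - 1)).toNNReal • max (1 - (c * u) ^ α) 0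
        = 2 * α * u ^ (-2 * α - 1) * max (1 - (c * u) ^ α) 0 := by
    filter_upwards [ae_restrict_mem measurableSet_Ici] with u hu
    have hu0 : (0:ℝ) ≤ u := le_trans zero_le_one hu
    rw [NNReal.smul_def, Real.coe_toNNReal _ (by positivity), smul_eq_mul]
  rw [integral_congr_ae hcongr]
  rcases le_or_gt 1 c with h1c | hc1
  · have hs : 1 ≤ c ^ α := Real.one_le_rpow h1c hα.le
    have hz : ∀ᵐ u ∂(volume.restrict (Set.Ici (1:ℝ))),
        2 * α * u ^ (-2 * α - 1) * max (1 - (c * u) ^ α) 0 = 0 := by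
      filter_upwards [ae_restrict_mem measurableSet_Ici] with u hu
      have hu1 : (1:ℝ) ≤ u := hu
      have h1 : 1 ≤ (c * u) ^ α := Real.one_le_rpow (by nlinarith) hα.le
      rw [max_eq_right (by linarith), mul_zero]
    rw [integral_congr_ae hz, integral_zero, max_eq_right (by linarith)]
    ring
  · set s := c ^ α with hsdef
    have hs0 : 0 ≤ s := Real.rpow_nonneg hc.le α
    have hs1 : s < 1 := Real.rpow_lt_one hc.le hc1 hα
    set b := c⁻¹ with hbdef
    have hb0 : (0:ℝ) < b := inv_pos.mpr hc
    have hb1 : 1 < b := (one_lt_inv₀ hc).mpr hc1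
    have hcongr2 : ∀ᵐ u ∂(volume.restrict (Set.Ici (1:ℝ))),
        2 * α * u ^ (-2 * α - 1) * max (1 - (c * u) ^ α) 0
          = Set.indicator (Set.Icc 1 b)
              (fun u => 2 * α * u ^ (-2 * α - 1) * (1 - s * u ^ α)) u := by
      filter_upwards [ae_restrict_mem measurableSet_Ici] with u hu
      have hu1 : (1:ℝ) ≤ u := hu
      have hu0 : (0:ℝ) < u := lt_of_lt_of_le one_pos hu1
      have hmr : (c * u) ^ α = s * u ^ α := Real.mul_rpow hc.le hu0.le
      by_cases hub : u ≤ b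
      · rw [Set.indicator_of_mem (Set.mem_Icc.mpr ⟨hu1, hub⟩)]
        have hcu1 : c * u ≤ 1 := by
          calc c * u ≤ c * b := by nlinarith
          _ = 1 := mul_inv_cancel₀ hc.ne'
        have : (c * u) ^ α ≤ 1 := Real.rpow_le_one (by positivity) hcu1 hα.le
        rw [max_eq_left (by linarith), hmr]
      · push_neg at hub
        rw [Set.indicator_of_notMem (fun h => absurd h.2 (not_le.mpr hub))]
        have hcu1 : 1 < c * u := by
          calc (1:ℝ) = c * b := (mul_inv_cancel₀ hc.ne').symm
          _ < c * u := by nlinarith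
        have : 1 ≤ (c * u) ^ α := Real.one_le_rpow hcu1.le hα.le
        rw [max_eq_right (by linarith), mul_zero]
    rw [integral_congr_ae hcongr2, integral_indicator measurableSet_Icc,
      Measure.restrict_restrict measurableSet_Icc,
      Set.inter_eq_self_of_subset_left Set.Icc_subset_Ici_self,
      integral_Icc_eq_integral_Ioc, ← intervalIntegral.integral_of_le hb1.le]
    have key : ∫ u in (1:ℝ)..b, 2 * α * u ^ (-2 * α - 1) * (1 - s * u ^ α)
        = (-(b ^ (-2 * α)) + 2 * s * b ^ (-α))
            - (-((1:ℝ) ^ (-2 * α)) + 2 * s * (1:ℝ) ^ (-α)) := by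
      apply intervalIntegral.integral_eq_sub_of_hasDerivAt
        (f := fun v : ℝ => -(v ^ (-2 * α)) + 2 * s * v ^ (-α))
      · intro u hu
        rw [Set.uIcc_of_le hb1.le] at hu
        have hu0 : (0:ℝ) < u := lt_of_lt_of_le one_pos hu.1
        have h1 : HasDerivAt (fun v : ℝ => -(v ^ (-2 * α)))
            (-((-2 * α) * u ^ (-2 * α - 1))) u :=
          (Real.hasDerivAt_rpow_const (p := -2 * α) (Or.inl hu0.ne')).neg
        have h2 : HasDerivAt (fun v : ℝ => 2 * s * v ^ (-α))
            (2 * s * ((-α) * u ^ (-α - 1))) u :=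
          (Real.hasDerivAt_rpow_const (p := -α) (Or.inl hu0.ne')).const_mul (2 * s)
        have hx : u ^ (-2 * α - 1) * u ^ α = u ^ (-α - 1) := by
          rw [← Real.rpow_add hu0]; ring_nf
        convert h1.add h2 using 1
        · rfl
        linear_combination (-2 * α * s) * hx
      · apply ContinuousOn.intervalIntegrable
        apply ContinuousOn.mul
        · exact continuousOn_const.mul (continuousOn_id.rpow_const fun u hu => by
            rw [Set.uIcc_of_le hb1.le] at hu
            exact Or.inl (lt_of_lt_of_le one_pos hu.1).ne')
        · exact continuousOn_const.sub (continuousOn_const.mul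
            (continuousOn_id.rpow_const fun u hu => by
              rw [Set.uIcc_of_le hb1.le] at hu
              exact Or.inl (lt_of_lt_of_le one_pos hu.1).ne'))
    rw [key]
    have hbs : b ^ (-α) = s := by
      rw [hbdef, Real.rpow_neg (inv_nonneg.mpr hc.le), Real.inv_rpow hc.le, inv_inv, hsdef]
    have hbs2 : b ^ (-2 * α) = s ^ 2 := by
      rw [show (-2) * α = -α + -α by ring, Real.rpow_add hb0, hbs, sq]
    rw [hbs, hbs2, Real.one_rpow, Real.one_rpow, max_eq_left (by linarith)]
    ring

lemma kendall_aux (α x y t : ℝ) (hα : 0 < α) (hx : 0 ≤ x) (hxy : x ≤ y) (hy : 0 < y)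
    (ht : 0 < t) :
    ∫ w, max (1 - (w / t) ^ α) 0 ∂(kendall α x y)
      = max (1 - (x / t) ^ α) 0 * max (1 - (y / t) ^ α) 0 := by
  have hmax : max x y = y := max_eq_right hxy
  have hmin : min x y = x := min_eq_left hxy
  have hfm : Measurable fun w : ℝ => max (1 - (w / t) ^ α) 0 := by fun_prop
  rw [kendall, hmax, hmin,
    integral_map (measurable_const_mul y).aemeasurable hfm.aestronglyMeasurable]
  set ρ := (x / y) ^ α with hρ
  have hρ0 : 0 ≤ ρ := Real.rpow_nonneg (div_nonneg hx hy.le) α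
  have hρ1 : ρ ≤ 1 := Real.rpow_le_one (div_nonneg hx hy.le) ((div_le_one hy).mpr hxy) hα.le
  haveI := pareto_finite hα
  set g := fun u : ℝ => max (1 - (y * u / t) ^ α) 0 with hg
  have hgm : Measurable g := by rw [hg]; fun_prop
  have hInt1 : Integrable g (pareto α) := by
    apply Integrable.mono' (integrable_const 1) hgm.aestronglyMeasurable
    filter_upwards [pareto_ae_Ici] with u hu
    have hu0 : (0:ℝ) ≤ u := le_trans zero_le_one hu
    have hz : 0 ≤ (y * u / t) ^ α := Real.rpow_nonneg (by positivity) α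
    rw [Real.norm_eq_abs, abs_of_nonneg (le_max_right _ _)]
    exact max_le (by linarith) zero_le_one
  have hInt2 : Integrable g (Measure.dirac 1) := by
    apply Integrable.mono' (integrable_const 1) hgm.aestronglyMeasurable
    refine (ae_dirac_iff ?_).mpr ?_
    · exact measurableSet_le (by fun_prop) measurable_const
    · have hz : 0 ≤ (y * 1 / t) ^ α := Real.rpow_nonneg (by positivity) α
      rw [hg]
      simp only [Real.norm_eq_abs]
      rw [abs_of_nonneg (le_max_right _ _)]
      exact max_le (by linarith) zero_le_one
  rw [integral_add_measure (hInt1.smul_measure ENNReal.ofReal_ne_top)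
      (hInt2.smul_measure ENNReal.ofReal_ne_top),
    integral_smul_measure, integral_smul_measure, integral_dirac,
    ENNReal.toReal_ofReal hρ0, ENNReal.toReal_ofReal (by linarith)]
  have hgrw : g = fun u : ℝ => max (1 - (y / t * u) ^ α) 0 := by
    funext u; simp only [hg, mul_div_right_comm]
  rw [hgrw, pareto_integral hα (div_pos hy ht)]
  have hg1 : max (1 - (y / t * 1) ^ α) 0 = max (1 - (y / t) ^ α) 0 := by rw [mul_one]
  set s := (y / t) ^ α with hs
  have hs0 : 0 ≤ s := Real.rpow_nonneg (by positivity) α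
  have hxt : (x / t) ^ α = ρ * s := by
    rw [hρ, hs, ← Real.mul_rpow (div_nonneg hx hy.le) (by positivity)]
    congr 1
    field_simp
  simp only [smul_eq_mul, mul_one]
  rcases le_or_gt 1 s with h | h
  · rw [max_eq_right (by linarith : 1 - s ≤ 0)]; ring
  · rw [max_eq_left (by linarith : (0:ℝ) ≤ 1 - s), hxt,
      max_eq_left (by nlinarith : (0:ℝ) ≤ 1 - ρ * s)]
    ring

/-- the Williamson transform of δ_x ▵_α δ_y factorizes:
∫ (1 − (w/t)^α)₊ (δ_x ▵_α δ_y)(dw) = (1 − (x/t)^α)₊ · (1 − (y/t)^α)₊ for every t > 0. -/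
theorem kendall_deltas_williamson_mul
    (α x y : ℝ) (hα : 0 < α) (hx : 0 ≤ x) (hy : 0 ≤ y) (hM : 0 < max x y)
    (t : ℝ) (ht : 0 < t) :
    ∫ w, max (1 - (w / t) ^ α) 0 ∂(kendall α x y)
      = max (1 - (x / t) ^ α) 0 * max (1 - (y / t) ^ α) 0 := by
  rcases le_total x y with hxy | hxy
  · have hy0 : 0 < y := by rwa [max_eq_right hxy] at hM
    exact kendall_aux α x y t hα hx hxy hy0 ht
  · have hx0 : 0 < x := by rwa [max_eq_left hxy] at hM
    have hk : kendall α x y = kendall α y x := by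
      rw [kendall, kendall, max_comm, min_comm]
    rw [hk, mul_comm]
    exact kendall_aux α y x t hα hy hxy hx0 ht
end

section
/- Let μ be a probability measure on [0,∞) with cumulative distribution function F_μ, Williamson transform G_μ and Ψ(s) = (1 − s^α)₊. Fix x > 0 and define the measure κ_x(A) = ∫_{[0,∞)} (δ_x ▵_α δ_y)(A) μ(dy). Then for every t ≥ x, κ_x((0,t]) = Ψ(x/t) F_μ(t) + (1 − Ψ(x/t)) G_μ(t), and for every 0 < t < x, κ_x((0,t]) = 0. -/
open MeasureTheory Filter Real Topology

lemma pareto_Ioc {α : ℝ} (hα : 0 < α) {s : ℝ} (hs : 1 ≤ s) :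
    pareto α (Set.Ioc 0 s) = ENNReal.ofReal (1 - s ^ (-(2 * α))) := by
  rw [pareto, withDensity_apply _ measurableSet_Ioc,
    Measure.restrict_restrict measurableSet_Ioc]
  have hset : Set.Ioc (0:ℝ) s ∩ Set.Ici 1 = Set.Icc 1 s := by
    ext u
    constructor
    · rintro ⟨⟨_, h2⟩, h3⟩; exact ⟨h3, h2⟩
    · rintro ⟨h1, h2⟩; exact ⟨⟨lt_of_lt_of_le one_pos h1, h2⟩, h1⟩
  rw [hset]
  have hcont : ContinuousOn (fun u : ℝ => 2 * α * u ^ (-2 * α - 1)) (Set.Icc 1 s) := by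
    apply continuousOn_const.mul
    apply ContinuousOn.rpow_const continuousOn_id
    intro u hu
    exact Or.inl (ne_of_gt (lt_of_lt_of_le one_pos hu.1))
  have hint : IntegrableOn (fun u : ℝ => 2 * α * u ^ (-2 * α - 1)) (Set.Icc 1 s) :=
    hcont.integrableOn_compact isCompact_Icc
  have hnn : 0 ≤ᵐ[volume.restrict (Set.Icc 1 s)] fun u : ℝ => 2 * α * u ^ (-2 * α - 1) := by
    filter_upwards [ae_restrict_mem measurableSet_Icc] with u hu
    have : (0:ℝ) ≤ u := le_trans zero_le_one hu.1
    positivity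
  rw [← ofReal_integral_eq_lintegral_ofReal hint hnn]
  congr 1
  rw [MeasureTheory.integral_Icc_eq_integral_Ioc, ← intervalIntegral.integral_of_le hs,
    intervalIntegral.integral_const_mul]
  have h0 : (0:ℝ) ∉ Set.uIcc 1 s := by
    rw [Set.uIcc_of_le hs]
    rintro ⟨h, -⟩; norm_num at h
  rw [integral_rpow (Or.inr ⟨by intro h; nlinarith, h0⟩)]
  have he : -2 * α - 1 + 1 = -(2 * α) := by ring
  rw [he, Real.one_rpow]
  field_simp
  ring

lemma pareto_Ioc_zero {α : ℝ} {s : ℝ} (hs : s < 1) :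
    pareto α (Set.Ioc 0 s) = 0 := by
  rw [pareto, withDensity_apply _ measurableSet_Ioc,
    Measure.restrict_restrict measurableSet_Ioc]
  have hset : Set.Ioc (0:ℝ) s ∩ Set.Ici 1 = ∅ := by
    ext u
    simp only [Set.mem_inter_iff, Set.mem_Ioc, Set.mem_Ici, Set.mem_empty_iff_false, iff_false]
    rintro ⟨⟨-, h2⟩, h3⟩
    linarith
  rw [hset, Measure.restrict_empty, lintegral_zero_measure]

lemma kendall_Ioc_apply {α x y t : ℝ} (hx : 0 < x) :
    kendall α x y (Set.Ioc 0 t) =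
      ENNReal.ofReal ((min x y / max x y) ^ α) * pareto α (Set.Ioc 0 (t / max x y)) +
      ENNReal.ofReal (1 - (min x y / max x y) ^ α) * Measure.dirac 1 (Set.Ioc 0 (t / max x y)) := by
  have hM : 0 < max x y := lt_of_lt_of_le hx (le_max_left _ _)
  rw [kendall, Measure.map_apply (by fun_prop : Measurable fun u : ℝ => max x y * u) measurableSet_Ioc]
  have : (fun u => max x y * u) ⁻¹' Set.Ioc 0 t = Set.Ioc 0 (t / max x y) := by
    rw [Set.preimage_const_mul_Ioc₀ _ _ hM, zero_div]
  rw [this]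
  simp [Measure.add_apply, Measure.smul_apply, smul_eq_mul]

lemma kendall_Ioc_zero {α x y t : ℝ} (hx : 0 < x) (ht : t < max x y) :
    kendall α x y (Set.Ioc 0 t) = 0 := by
  have hM : 0 < max x y := lt_of_lt_of_le hx (le_max_left _ _)
  rw [kendall_Ioc_apply hx]
  have h1 : t / max x y < 1 := (div_lt_one hM).2 ht
  rw [pareto_Ioc_zero h1, Measure.dirac_apply' _ measurableSet_Ioc,
    Set.indicator_of_notMem (by simp [Set.mem_Ioc]; linarith)]
  simp

lemma kendall_Ioc {α x y t : ℝ} (hα : 0 < α) (hx : 0 < x) (hy : 0 ≤ y) (ht : 0 < t)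
    (hM : max x y ≤ t) :
    kendall α x y (Set.Ioc 0 t) = ENNReal.ofReal (1 - (x * y / t ^ 2) ^ α) := by
  have hMpos : 0 < max x y := lt_of_lt_of_le hx (le_max_left _ _)
  have hmnn : 0 ≤ min x y := le_min hx.le hy
  have h1 : 1 ≤ t / max x y := (one_le_div hMpos).2 hM
  have hρnn : (0:ℝ) ≤ (min x y / max x y) ^ α := Real.rpow_nonneg (div_nonneg hmnn hMpos.le) _
  have hρle : (min x y / max x y) ^ α ≤ 1 :=
    Real.rpow_le_one (div_nonneg hmnn hMpos.le) ((div_le_one hMpos).2 (min_le_max)) hα.le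
  have hAnn : (0:ℝ) ≤ 1 - (t / max x y) ^ (-(2 * α)) := by
    have := Real.rpow_le_one_of_one_le_of_nonpos h1 (by linarith : -(2*α) ≤ 0)
    linarith
  rw [kendall_Ioc_apply hx, pareto_Ioc hα h1, Measure.dirac_apply' _ measurableSet_Ioc,
    Set.indicator_of_mem (by exact ⟨one_pos, h1⟩) (1 : ℝ → ENNReal)]
  simp only [Pi.one_apply, mul_one]
  rw [← ENNReal.ofReal_mul hρnn, ← ENNReal.ofReal_add (by positivity) (by linarith)]
  congr 1
  have htM : (0:ℝ) < t / max x y := lt_of_lt_of_le one_pos h1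
  have e1 : ((max x y / t) ^ (2:ℕ)) ^ α = (t / max x y) ^ (-(2 * α)) := by
    have h2 : (0:ℝ) ≤ max x y / t := by positivity
    calc ((max x y / t) ^ (2:ℕ)) ^ α
        = (max x y / t) ^ (2 * α) := by
          rw [← Real.rpow_natCast (max x y / t) 2, ← Real.rpow_mul h2]; norm_num
      _ = ((t / max x y)⁻¹) ^ (2 * α) := by rw [inv_div]
      _ = (t / max x y) ^ (-(2 * α)) := by
          rw [Real.inv_rpow htM.le, ← Real.rpow_neg htM.le]
  have hkey : (min x y / max x y) ^ α * (t / max x y) ^ (-(2 * α))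
      = (x * y / t ^ 2) ^ α := by
    rw [← e1, ← Real.mul_rpow (div_nonneg hmnn hMpos.le) (by positivity)]
    congr 1
    have hm : min x y * max x y = x * y := min_mul_max x y
    field_simp
    linear_combination hm
  linear_combination -hkey

/-- for κ_x(A) = ∫ (δ_x ▵_α δ_y)(A) μ(dy) with x > 0, one has
κ_x((0,t]) = Ψ(x/t) F_μ(t) + (1 − Ψ(x/t)) G_μ(t) for t ≥ x, and κ_x((0,t]) = 0 for
0 < t < x, where Ψ(s) = (1 − s^α)₊. -/
theorem kendall_transition_Ioc
    (α : ℝ) (hα : 0 < α)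
    (μ : Measure ℝ) [IsProbabilityMeasure μ] (hμ : μ (Set.Iio 0) = 0)
    (Fμ Gμ : ℝ → ℝ)
    (hFμ : ∀ t, Fμ t = (μ (Set.Iic t)).toReal)
    (hGμ : ∀ t, 0 < t → Gμ t = ∫ w, max (1 - (w / t) ^ α) 0 ∂μ)
    (x : ℝ) (hx : 0 < x)
    (κ : Measure ℝ)
    (hκ : ∀ A : Set ℝ, MeasurableSet A → κ A = ∫⁻ y, kendall α x y A ∂μ) :
    (∀ t, x ≤ t → (κ (Set.Ioc 0 t)).toReal
        = max (1 - (x / t) ^ α) 0 * Fμ t + (1 - max (1 - (x / t) ^ α) 0) * Gμ t) ∧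
    (∀ t, 0 < t → t < x → κ (Set.Ioc 0 t) = 0) := by
  have hae : ∀ᵐ y ∂μ, 0 ≤ y := by
    rw [ae_iff]
    convert hμ using 2
    ext y; simp [not_le, Set.mem_Iio]
  constructor
  · intro t hxt
    have ht : 0 < t := lt_of_lt_of_le hx hxt
    set Ψ : ℝ := 1 - (x / t) ^ α with hΨdef
    have hxtd : x / t ≤ 1 := (div_le_one ht).2 hxt
    have hxtd0 : 0 ≤ x / t := by positivity
    have hΨ0 : 0 ≤ Ψ := by
      have := Real.rpow_le_one hxtd0 hxtd hα.le
      simp only [hΨdef]; linarith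
    have hΨ1 : Ψ ≤ 1 := by
      have := Real.rpow_nonneg hxtd0 α
      simp only [hΨdef]; linarith
    have hmax : max Ψ 0 = Ψ := max_eq_left hΨ0
    have hgmeas : Measurable fun y : ℝ => max (1 - (y / t) ^ α) 0 :=
      by fun_prop
    have hpt : ∀ᵐ y ∂μ, kendall α x y (Set.Ioc 0 t)
        = (Set.Iic t).indicator (fun _ => ENNReal.ofReal Ψ) y
          + ENNReal.ofReal (1 - Ψ) * ENNReal.ofReal (max (1 - (y / t) ^ α) 0) := by
      filter_upwards [hae] with y hy
      by_cases hyt : y ≤ t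
      · have hMle : max x y ≤ t := max_le hxt hyt
        rw [kendall_Ioc hα hx hy ht hMle, Set.indicator_of_mem (Set.mem_Iic.2 hyt)]
        have hytd0 : 0 ≤ y / t := by positivity
        have hytd : (y / t) ^ α ≤ 1 := Real.rpow_le_one hytd0 ((div_le_one ht).2 hyt) hα.le
        have hy0 : 0 ≤ (y / t) ^ α := Real.rpow_nonneg hytd0 _
        have hmax2 : max (1 - (y / t) ^ α) 0 = 1 - (y / t) ^ α := max_eq_left (by linarith)
        rw [hmax2, ← ENNReal.ofReal_mul (by linarith : (0:ℝ) ≤ 1 - Ψ),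
          ← ENNReal.ofReal_add hΨ0 (mul_nonneg (by linarith) (by linarith))]
        congr 1
        have hmul : (x / t) ^ α * (y / t) ^ α = (x * y / t ^ 2) ^ α := by
          have hb : x / t * (y / t) = x * y / t ^ 2 := by rw [div_mul_div_comm, pow_two]
          rw [← Real.mul_rpow hxtd0 hytd0, hb]
        simp only [hΨdef]
        linear_combination hmul
      · push_neg at hyt
        rw [kendall_Ioc_zero hx (lt_of_lt_of_le hyt (le_max_right x y)),
          Set.indicator_of_notMem (by simpa using hyt.not_ge)]
        have h1 : max (1 - (y / t) ^ α) 0 = 0 := max_eq_right (by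
          have : (1:ℝ) ≤ (y / t) ^ α := Real.one_le_rpow ((one_le_div ht).2 hyt.le) hα.le
          linarith)
        rw [h1]; simp
    rw [hκ _ measurableSet_Ioc, lintegral_congr_ae hpt,
      lintegral_add_left (measurable_const.indicator measurableSet_Iic),
      lintegral_indicator_const measurableSet_Iic,
      lintegral_const_mul _ hgmeas.ennreal_ofReal]
    have hL : (∫⁻ y, ENNReal.ofReal (max (1 - (y / t) ^ α) 0) ∂μ) ≤ 1 := by
      calc (∫⁻ y, ENNReal.ofReal (max (1 - (y / t) ^ α) 0) ∂μ)
          ≤ ∫⁻ _, 1 ∂μ := by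
            apply lintegral_mono_ae
            filter_upwards [hae] with y hy
            apply ENNReal.ofReal_le_one.2
            have h0 : 0 ≤ (y / t) ^ α := Real.rpow_nonneg (by positivity) _
            exact max_le (by linarith) zero_le_one
        _ = 1 := by simp
    have hA : ENNReal.ofReal Ψ * μ (Set.Iic t) ≠ ⊤ :=
      ENNReal.mul_ne_top ENNReal.ofReal_ne_top (measure_ne_top μ _)
    have hB : ENNReal.ofReal (1 - Ψ) * (∫⁻ y, ENNReal.ofReal (max (1 - (y / t) ^ α) 0) ∂μ) ≠ ⊤ :=
      ENNReal.mul_ne_top ENNReal.ofReal_ne_top (hL.trans_lt ENNReal.one_lt_top).ne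
    rw [ENNReal.toReal_add hA hB, ENNReal.toReal_mul, ENNReal.toReal_mul,
      ENNReal.toReal_ofReal hΨ0, ENNReal.toReal_ofReal (by linarith : (0:ℝ) ≤ 1 - Ψ),
      hmax, hFμ, hGμ t ht]
    have hG2 : (∫⁻ y, ENNReal.ofReal (max (1 - (y / t) ^ α) 0) ∂μ).toReal
        = ∫ w, max (1 - (w / t) ^ α) 0 ∂μ := by
      exact (integral_eq_lintegral_of_nonneg_ae (μ := μ)
        (f := fun w : ℝ => max (1 - (w / t) ^ α) 0)
        (Eventually.of_forall fun y => le_max_right _ _) hgmeas.aestronglyMeasurable).symm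
    rw [hG2]
  · intro t ht htx
    rw [hκ _ measurableSet_Ioc]
    have h0 : ∀ y : ℝ, kendall α x y (Set.Ioc 0 t) = 0 := fun y =>
      kendall_Ioc_zero hx (lt_of_lt_of_le htx (le_max_left x y))
    simp [h0]
end

section
/- Let μ be a probability measure on [0,∞) with cumulative distribution function F_μ, Williamson transform G_μ, truncated α-moment H_μ, and Ψ(s) = (1 − s^α)₊. Fix x > 0 and define the measure κ_x(A) = ∫_{[0,∞)} (δ_x ▵_α δ_y)(A) μ(dy). Then for every t ≥ x, ∫_{(0,t]} w^α κ_x(dw) = x^α F_μ(t) − 2 x^α t^{−α} H_μ(t) + H_μ(t) = x^α G_μ(t) + Ψ(x/t) H_μ(t), and for every 0 < t < x this integral equals 0. -/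
open MeasureTheory Filter Real Topology

private lemma mrpow (c : ℝ) : Measurable fun x : ℝ => x ^ c := by measurability

lemma measurable_kendall (α x : ℝ) : Measurable fun y => kendall α x y := by
  apply Measure.measurable_of_measurable_coe
  intro s hs
  have hmul : ∀ y : ℝ, Measurable fun u : ℝ => max x y * u := fun y => measurable_const_mul _
  have hr : Measurable fun y : ℝ => max x y := measurable_const.max measurable_id
  have hrho : Measurable fun y : ℝ => ((min x y / max x y) ^ α) :=
    (mrpow α).comp ((measurable_const.min measurable_id).div hr)
  simp only [kendall, Measure.map_apply (hmul _) hs, Measure.add_apply, Measure.smul_apply,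
    smul_eq_mul, Measure.dirac_apply' _ ((hmul _) hs), pareto,
    withDensity_apply _ ((hmul _) hs)]
  apply Measurable.add
  · apply hrho.ennreal_ofReal.mul
    have : ∀ y : ℝ, (∫⁻ u in (fun u => max x y * u) ⁻¹' s,
        ENNReal.ofReal (2 * α * u ^ (-2 * α - 1)) ∂(volume.restrict (Set.Ici 1)))
        = ∫⁻ u, s.indicator (fun _ => (1:ENNReal)) (max x y * u)
            * ENNReal.ofReal (2 * α * u ^ (-2 * α - 1)) ∂(volume.restrict (Set.Ici 1)) := by
      intro y
      rw [← lintegral_indicator ((hmul y) hs)]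
      congr 1; ext u
      by_cases h : max x y * u ∈ s <;> simp [Set.indicator, h]
    simp only [this]
    apply Measurable.lintegral_prod_right'
      (f := fun p : ℝ × ℝ => s.indicator (fun _ => (1:ENNReal)) (max x p.1 * p.2)
            * ENNReal.ofReal (2 * α * p.2 ^ (-2 * α - 1)))
    exact ((measurable_one.indicator hs).comp ((hr.comp measurable_fst).mul measurable_snd)).mul
      ((measurable_const.mul ((mrpow _).comp measurable_snd)).ennreal_ofReal)
  · apply Measurable.mul
    · exact (measurable_const.sub hrho).ennreal_ofReal
    · have : (fun y : ℝ => ((fun u => max x y * u) ⁻¹' s).indicator (1 : ℝ → ENNReal) 1)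
          = fun y : ℝ => s.indicator (1 : ℝ → ENNReal) (max x y) := by
        funext y
        by_cases h : max x y ∈ s <;> simp [Set.indicator_apply, h]
      rw [this]
      exact (measurable_one.indicator hs).comp hr

lemma pareto_lintegral (α : ℝ) {f : ℝ → ENNReal} (hf : Measurable f) :
    ∫⁻ u, f u ∂(pareto α)
      = ∫⁻ u in Set.Ici 1, ENNReal.ofReal (2 * α * u ^ (-2 * α - 1)) * f u := by
  rw [pareto, lintegral_withDensity_eq_lintegral_mul _
    (f := fun u : ℝ => ENNReal.ofReal (2 * α * u ^ (-2 * α - 1)))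
    (measurable_const.mul (mrpow _)).ennreal_ofReal hf]
  rfl


lemma kendall_lintegral (α : ℝ) (hα : 0 < α) {x y t : ℝ} (hx : 0 < x) (hy : 0 ≤ y) (ht : 0 < t) :
    ∫⁻ w, (Set.Ioc 0 t).indicator (fun w => ENNReal.ofReal (w ^ α)) w ∂(kendall α x y)
      = if max x y ≤ t then ENNReal.ofReal (x ^ α + y ^ α - 2 * x ^ α * y ^ α * t ^ (-α))
        else 0 := by
  have hα' : α ≠ 0 := hα.ne'
  have hM0 : (0:ℝ) < max x y := lt_of_lt_of_le hx (le_max_left x y)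
  have hm0 : (0:ℝ) ≤ min x y := le_min hx.le hy
  set M := max x y with hMdef
  set m := min x y with hmdef
  set ρ := (m / M) ^ α with hρdef
  have hρ0 : 0 ≤ ρ := rpow_nonneg (div_nonneg hm0 hM0.le) α
  have hρ1 : ρ ≤ 1 :=
    rpow_le_one (div_nonneg hm0 hM0.le) (div_le_one_of_le₀ min_le_max hM0.le) hα.le
  have hfm : Measurable fun w : ℝ =>
      (Set.Ioc 0 t).indicator (fun w => ENNReal.ofReal (w ^ α)) w :=
    ((mrpow α).ennreal_ofReal).indicator measurableSet_Ioc
  have hcomp : Measurable fun a : ℝ =>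
      (Set.Ioc 0 t).indicator (fun w => ENNReal.ofReal (w ^ α)) (M * a) :=
    hfm.comp (measurable_const_mul M)
  rw [kendall, lintegral_map hfm (measurable_const_mul M), lintegral_add_measure,
    lintegral_smul_measure, lintegral_smul_measure,
    lintegral_dirac' (1:ℝ) hcomp, pareto_lintegral α hcomp]
  simp only [← hMdef, ← hmdef, ← hρdef]
  have key : ∫⁻ u in Set.Ici 1, ENNReal.ofReal (2 * α * u ^ (-2 * α - 1)) *
        (Set.Ioc 0 t).indicator (fun w => ENNReal.ofReal (w ^ α)) (M * u)
      = ∫⁻ u in Set.Icc 1 (t / M),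
          ENNReal.ofReal (2 * α * M ^ α * u ^ (-α - 1)) := by
    rw [← lintegral_indicator (measurableSet_Ici), ← lintegral_indicator (measurableSet_Icc)]
    apply lintegral_congr
    intro u
    by_cases hu : u ∈ Set.Ici 1
    · have hu1 : (1:ℝ) ≤ u := hu
      have hu0 : (0:ℝ) < u := lt_of_lt_of_le one_pos hu1
      rw [Set.indicator_of_mem hu]
      rcases le_or_gt (M * u) t with hMu | hMu
      · have hmem : M * u ∈ Set.Ioc 0 t := ⟨mul_pos hM0 hu0, hMu⟩
        have hmem2 : u ∈ Set.Icc 1 (t / M) :=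
          ⟨hu1, (le_div_iff₀ hM0).2 (by linarith [mul_comm M u])⟩
        rw [Set.indicator_of_mem hmem, Set.indicator_of_mem hmem2,
          ← ENNReal.ofReal_mul (by positivity)]
        congr 1
        rw [Real.mul_rpow hM0.le hu0.le,
          show (-α - 1 : ℝ) = (-2*α-1) + α by ring, Real.rpow_add hu0]
        ring
      · have h1 : M * u ∉ Set.Ioc 0 t := fun h => absurd h.2 hMu.not_ge
        have h2 : u ∉ Set.Icc 1 (t / M) := by
          intro h
          have := (le_div_iff₀ hM0).1 h.2
          nlinarith
        rw [Set.indicator_of_notMem h1, Set.indicator_of_notMem h2, mul_zero]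
    · have h2 : u ∉ Set.Icc 1 (t / M) := fun h => hu h.1
      rw [Set.indicator_of_notMem hu, Set.indicator_of_notMem h2]
  rw [key]
  by_cases hMt : M ≤ t
  · have h1 : (1:ℝ) ≤ t / M := (one_le_div hM0).2 hMt
    have hMα : (0:ℝ) < M ^ α := rpow_pos_of_pos hM0 α
    have htα : (0:ℝ) < t ^ α := rpow_pos_of_pos ht α
    have hMtα : M ^ α * t ^ (-α) ≤ 1 := by
      rw [Real.rpow_neg ht.le, mul_inv_le_iff₀ htα, one_mul]
      exact Real.rpow_le_rpow hM0.le hMt hα.le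
    have hint : IntegrableOn (fun u : ℝ => 2 * α * M ^ α * u ^ (-α - 1))
        (Set.Icc 1 (t / M)) volume := by
      apply ContinuousOn.integrableOn_compact isCompact_Icc
      exact continuousOn_const.mul (continuousOn_id.rpow_const
        (fun u hu => Or.inl (by have := hu.1; positivity)))
    have hri : ∫ u in (1:ℝ)..(t/M), u ^ (-α - 1)
        = ((t/M) ^ (-α - 1 + 1) - 1 ^ (-α - 1 + 1)) / (-α - 1 + 1) := by
      apply integral_rpow
      refine Or.inr ⟨by intro h; apply hα'; linarith, ?_⟩
      rw [Set.uIcc_of_le h1]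
      intro h
      exact absurd h.1 (by norm_num)
    have e1 : (t / M) ^ (-α) = M ^ α * t ^ (-α) := by
      rw [Real.rpow_neg (div_nonneg ht.le hM0.le), Real.div_rpow ht.le hM0.le,
        Real.rpow_neg ht.le]
      field_simp
    have hpar : ∫⁻ u in Set.Icc 1 (t / M), ENNReal.ofReal (2 * α * M ^ α * u ^ (-α - 1))
        = ENNReal.ofReal (2 * M ^ α - 2 * M ^ α * (M ^ α * t ^ (-α))) := by
      rw [← ofReal_integral_eq_lintegral_ofReal hint]
      · congr 1
        rw [MeasureTheory.integral_Icc_eq_integral_Ioc,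
          ← intervalIntegral.integral_of_le h1, intervalIntegral.integral_const_mul, hri,
          show (-α - 1 + 1 : ℝ) = -α by ring, e1, Real.one_rpow]
        field_simp [hα']
        ring
      · filter_upwards [ae_restrict_mem measurableSet_Icc] with u hu
        have := hu.1
        positivity
    rw [hpar, if_pos hMt]
    have hdir : (Set.Ioc 0 t).indicator (fun w => ENNReal.ofReal (w ^ α)) (M * 1)
        = ENNReal.ofReal (M ^ α) := by
      rw [mul_one, Set.indicator_of_mem (Set.mem_Ioc.2 ⟨hM0, hMt⟩)]
    have hnn2 : (0:ℝ) ≤ 2 * M ^ α - 2 * M ^ α * (M ^ α * t ^ (-α)) := by nlinarith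
    rw [hdir, smul_eq_mul, smul_eq_mul, ← ENNReal.ofReal_mul hρ0, ← ENNReal.ofReal_mul (by linarith),
      ← ENNReal.ofReal_add (mul_nonneg hρ0 hnn2) (by nlinarith)]
    congr 1
    have hA : ρ * M ^ α = m ^ α := by
      rw [hρdef, Real.div_rpow hm0 hM0.le]
      field_simp
    have hB1 : m ^ α * M ^ α = x ^ α * y ^ α := by
      rcases le_total x y with h | h <;>
        simp [hmdef, hMdef, min_eq_left, max_eq_right, min_eq_right, max_eq_left, h] <;> ring
    have hB2 : m ^ α + M ^ α = x ^ α + y ^ α := by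
      rcases le_total x y with h | h <;>
        simp [hmdef, hMdef, min_eq_left, max_eq_right, min_eq_right, max_eq_left, h] <;> ring
    linear_combination (1 - 2*(M ^ α * t ^ (-α))) * hA + hB2 - 2 * t ^ (-α) * hB1
  · rw [if_neg hMt]
    have ht2 : t / M < 1 := (div_lt_one hM0).2 (lt_of_not_ge hMt)
    rw [Set.Icc_eq_empty (not_le.2 ht2), Measure.restrict_empty, lintegral_zero_measure]
    have hdir : (Set.Ioc 0 t).indicator (fun w => ENNReal.ofReal (w ^ α)) (M * 1) = 0 := by
      rw [mul_one, Set.indicator_of_notMem (fun h => hMt h.2)]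
    rw [hdir]
    simp

/-- for κ_x(A) = ∫ (δ_x ▵_α δ_y)(A) μ(dy) with x > 0, one has for t ≥ x
∫_{(0,t]} w^α κ_x(dw) = x^α F_μ(t) − 2 x^α t^{−α} H_μ(t) + H_μ(t)
                      = x^α G_μ(t) + Ψ(x/t) H_μ(t),
and the integral is 0 for 0 < t < x, where Ψ(s) = (1 − s^α)₊. -/
theorem kendall_transition_truncated_moment
    (α : ℝ) (hα : 0 < α)
    (μ : Measure ℝ) [IsProbabilityMeasure μ] (hμ : μ (Set.Iio 0) = 0)
    (Fμ Gμ Hμ : ℝ → ℝ)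
    (hFμ : ∀ t, Fμ t = (μ (Set.Iic t)).toReal)
    (hGμ : ∀ t, 0 < t → Gμ t = ∫ w, max (1 - (w / t) ^ α) 0 ∂μ)
    (hHμ : ∀ t, 0 < t → Hμ t = ∫ w in Set.Icc 0 t, w ^ α ∂μ)
    (x : ℝ) (hx : 0 < x)
    (κ : Measure ℝ)
    (hκ : ∀ A : Set ℝ, MeasurableSet A → κ A = ∫⁻ y, kendall α x y A ∂μ) :
    (∀ t, x ≤ t →
      (∫ w in Set.Ioc 0 t, w ^ α ∂κ)
          = x ^ α * Fμ t - 2 * x ^ α * t ^ (-α) * Hμ t + Hμ t ∧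
      (∫ w in Set.Ioc 0 t, w ^ α ∂κ)
          = x ^ α * Gμ t + max (1 - (x / t) ^ α) 0 * Hμ t) ∧
    (∀ t, 0 < t → t < x → ∫ w in Set.Ioc 0 t, w ^ α ∂κ = 0) := by
  have hae : ∀ᵐ y ∂μ, 0 ≤ y := by
    rw [ae_iff]
    simp only [not_le]
    exact hμ
  have hbind : κ = μ.bind (kendall α x) := by
    ext A hA
    rw [hκ A hA, Measure.bind_apply hA (measurable_kendall α x).aemeasurable]
  have main : ∀ t : ℝ, 0 < t →
      (∫⁻ w in Set.Ioc 0 t, ENNReal.ofReal (w ^ α) ∂κ)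
        = ∫⁻ y, (if max x y ≤ t then
            ENNReal.ofReal (x ^ α + y ^ α - 2 * x ^ α * y ^ α * t ^ (-α)) else 0) ∂μ := by
    intro t ht
    have hfm : Measurable fun w : ℝ =>
        (Set.Ioc 0 t).indicator (fun w => ENNReal.ofReal (w ^ α)) w :=
      ((mrpow α).ennreal_ofReal).indicator measurableSet_Ioc
    rw [← lintegral_indicator measurableSet_Ioc, hbind,
      Measure.lintegral_bind (measurable_kendall α x).aemeasurable hfm.aemeasurable]
    apply lintegral_congr_ae
    filter_upwards [hae] with y hy
    exact kendall_lintegral α hα hx hy ht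
  have conv : ∀ t : ℝ, 0 < t → (∫ w in Set.Ioc 0 t, w ^ α ∂κ)
      = (∫⁻ w in Set.Ioc 0 t, ENNReal.ofReal (w ^ α) ∂κ).toReal := by
    intro t ht
    rw [integral_eq_lintegral_of_nonneg_ae]
    · filter_upwards [ae_restrict_mem measurableSet_Ioc] with w hw
      exact rpow_nonneg hw.1.le α
    · exact (mrpow α).aestronglyMeasurable
  constructor
  · intro t hxt
    have ht : (0:ℝ) < t := lt_of_lt_of_le hx hxt
    have htα : (0:ℝ) < t ^ α := rpow_pos_of_pos ht α
    have hIcc : μ (Set.Iic t) = μ (Set.Icc 0 t) := by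
      apply le_antisymm
      · calc μ (Set.Iic t) ≤ μ (Set.Icc 0 t ∪ Set.Iio 0) := by
              apply measure_mono
              intro w hw
              rcases le_or_gt 0 w with h | h
              · exact Or.inl ⟨h, hw⟩
              · exact Or.inr h
          _ ≤ μ (Set.Icc 0 t) + μ (Set.Iio 0) := measure_union_le _ _
          _ = μ (Set.Icc 0 t) := by rw [hμ, add_zero]
      · exact measure_mono Set.Icc_subset_Iic_self
    have hintH : IntegrableOn (fun w : ℝ => w ^ α) (Set.Icc 0 t) μ :=
      ContinuousOn.integrableOn_compact isCompact_Icc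
        (Real.continuous_rpow_const hα.le).continuousOn
    set c : ℝ := 1 - 2 * x ^ α * t ^ (-α) with hc
    set φ : ℝ → ℝ := fun y => x ^ α + c * y ^ α with hφ
    have hφint : IntegrableOn φ (Set.Icc 0 t) μ :=
      (integrable_const _).add (hintH.const_mul _)
    have hφnn : ∀ y ∈ Set.Icc 0 t, 0 ≤ φ y := by
      intro y hy
      have h1 : y ^ α ≤ t ^ α := Real.rpow_le_rpow hy.1 hy.2 hα.le
      have h2 : x ^ α ≤ t ^ α := Real.rpow_le_rpow hx.le hxt hα.le
      have h3 : (0:ℝ) ≤ y ^ α := rpow_nonneg hy.1 α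
      have h4 : (0:ℝ) ≤ x ^ α := rpow_nonneg hx.le α
      have h5 : t ^ (-α) = (t ^ α)⁻¹ := Real.rpow_neg ht.le α
      have e2 : φ y = x ^ α + y ^ α - 2 * (x ^ α * y ^ α) * (t ^ α)⁻¹ := by
        simp only [hφ, hc, h5]; ring
      rw [e2, sub_nonneg, mul_inv_le_iff₀ htα]
      nlinarith
    have hval : (∫⁻ w in Set.Ioc 0 t, ENNReal.ofReal (w ^ α) ∂κ)
        = ENNReal.ofReal (∫ y in Set.Icc 0 t, φ y ∂μ) := by
      rw [main t ht]
      rw [ofReal_integral_eq_lintegral_ofReal hφint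
        (by filter_upwards [ae_restrict_mem measurableSet_Icc] with y hy
            exact hφnn y hy)]
      rw [← lintegral_indicator measurableSet_Icc]
      apply lintegral_congr_ae
      filter_upwards [hae] with y hy
      by_cases hyt : y ≤ t
      · rw [if_pos (max_le hxt hyt), Set.indicator_of_mem (Set.mem_Icc.2 ⟨hy, hyt⟩)]
        congr 1
        rw [hφ, hc]
        ring
      · rw [if_neg (fun h => hyt (le_trans (le_max_right x y) h)),
          Set.indicator_of_notMem (fun h => hyt h.2)]
    have hφval : ∫ y in Set.Icc 0 t, φ y ∂μ
        = x ^ α * (μ (Set.Icc 0 t)).toReal + c * Hμ t := by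
      rw [hφ, integral_add (integrable_const _) (hintH.const_mul _),
        integral_const_mul, integral_const, hHμ t ht]
      simp [Measure.restrict_apply_univ, mul_comm, measureReal_def]
    have hG : Gμ t = (μ (Set.Icc 0 t)).toReal - t ^ (-α) * Hμ t := by
      rw [hGμ t ht]
      have hcong : (fun w => max (1 - (w / t) ^ α) 0)
          =ᵐ[μ] (Set.Icc 0 t).indicator (fun w => 1 - w ^ α * t ^ (-α)) := by
        filter_upwards [hae] with w hw
        rcases le_or_gt w t with h | h
        · have h1 : (w / t) ^ α = w ^ α * t ^ (-α) := by
            rw [Real.div_rpow hw ht.le, Real.rpow_neg ht.le, div_eq_mul_inv]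
          rw [Set.indicator_of_mem (Set.mem_Icc.2 ⟨hw, h⟩), max_eq_left, h1]
          rw [sub_nonneg]
          exact Real.rpow_le_one (div_nonneg hw ht.le) ((div_le_one ht).2 h) hα.le
        · rw [Set.indicator_of_notMem (fun hh => absurd hh.2 h.not_ge), max_eq_right]
          have h1 : (1:ℝ) ≤ w / t := (one_le_div ht).2 h.le
          have h2 : (1:ℝ) ^ α ≤ (w / t) ^ α := Real.rpow_le_rpow (by norm_num) h1 hα.le
          rw [Real.one_rpow] at h2
          linarith
      rw [integral_congr_ae hcong, integral_indicator measurableSet_Icc,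
        integral_sub (integrable_const _) (hintH.mul_const _),
        integral_const, integral_mul_const, hHμ t ht]
      simp [Measure.restrict_apply_univ, measureReal_def]
      ring
    have hnn : 0 ≤ ∫ y in Set.Icc 0 t, φ y ∂μ :=
      setIntegral_nonneg measurableSet_Icc hφnn
    have hfinal : (∫ w in Set.Ioc 0 t, w ^ α ∂κ)
        = x ^ α * Fμ t - 2 * x ^ α * t ^ (-α) * Hμ t + Hμ t := by
      rw [conv t ht, hval, ENNReal.toReal_ofReal hnn, hφval, hFμ, hIcc, hc]
      ring
    refine ⟨hfinal, ?_⟩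
    rw [hfinal, hG, hFμ, hIcc]
    have hmax : max (1 - (x / t) ^ α) 0 = 1 - x ^ α * t ^ (-α) := by
      have h1 : (x / t) ^ α = x ^ α * t ^ (-α) := by
        rw [Real.div_rpow hx.le ht.le, Real.rpow_neg ht.le, div_eq_mul_inv]
      rw [max_eq_left, h1]
      rw [sub_nonneg]
      exact Real.rpow_le_one (div_nonneg hx.le ht.le) ((div_le_one ht).2 hxt) hα.le
    rw [hmax]
    ring
  · intro t ht htx
    rw [conv t ht, main t ht]
    have : ∀ y : ℝ, (if max x y ≤ t then
        ENNReal.ofReal (x ^ α + y ^ α - 2 * x ^ α * y ^ α * t ^ (-α)) else 0) = 0 := by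
      intro y
      rw [if_neg]
      intro h
      exact absurd (le_trans (le_max_left x y) h) (not_le.2 htx)
    simp only [this, lintegral_zero, ENNReal.toReal_zero]
end

section
/- Let Y, ξ, θ be independent random variables on a probability space, with Y distributed according to ν, ξ uniform on [0,1], and θ Pareto distributed with density 2α u^{−2α−1} on [1,∞). Fix x > 0 and set M = max(x,Y), m = min(x,Y), ρ = (m/M)^α, and Z = M·( 1_{{ξ > ρ}} + θ·1_{{ξ < ρ}} ). Then for every t ≥ x, P(Z ≤ t) = Ψ(x/t) F(t) + (1 − Ψ(x/t)) G(t), where Ψ(s) = (1 − s^α)₊, and for every 0 < t < x, P(Z ≤ t) = 0. -/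
open MeasureTheory Filter Real Topology ProbabilityTheory
open Set
open scoped ENNReal

lemma pareto_apply (α : ℝ) {s : Set ℝ} (hs : MeasurableSet s) :
    pareto α s = ∫⁻ u in s ∩ Set.Ici 1, ENNReal.ofReal (2 * α * u ^ (-2 * α - 1)) := by
  rw [pareto, withDensity_apply _ hs, Measure.restrict_restrict hs]

lemma pareto_integral_aux {α : ℝ} (hα : 0 < α) {c : ℝ} (hc : 1 ≤ c) :
    ∫ u in Set.Icc 1 c, 2 * α * u ^ (-2 * α - 1) = 1 - c ^ (-(2 * α)) := by
  rw [MeasureTheory.integral_Icc_eq_integral_Ioc, ← intervalIntegral.integral_of_le hc,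
    intervalIntegral.integral_const_mul, integral_rpow]
  · have h2α : (2 * α) ≠ 0 := by positivity
    rw [show -2 * α - 1 + 1 = -(2*α) by ring, Real.one_rpow]
    field_simp
    ring
  · refine Or.inr ⟨by intro h; nlinarith, ?_⟩
    rw [Set.uIcc_of_le hc]
    rintro ⟨h0, _⟩; linarith

lemma pareto_Iic_of_lt (α : ℝ) {c : ℝ} (hc : c < 1) : pareto α (Set.Iic c) = 0 := by
  rw [pareto_apply α measurableSet_Iic]
  have : Set.Iic c ∩ Set.Ici 1 = (∅ : Set ℝ) := by
    ext u; simp only [Set.mem_inter_iff, Set.mem_Iic, Set.mem_Ici, Set.mem_empty_iff_false,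
      iff_false, not_and, not_le]
    intro h; linarith
  simp [this]

lemma contOn (α : ℝ) {s : Set ℝ} (hs : ∀ u ∈ s, u ≠ 0) :
    ContinuousOn (fun u : ℝ => 2 * α * u ^ (-2 * α - 1)) s := by
  refine continuousOn_const.mul ?_
  intro u hu
  exact (Real.continuousAt_rpow_const u _ (Or.inl (hs u hu))).continuousWithinAt

lemma pareto_Iic {α : ℝ} (hα : 0 < α) {c : ℝ} (hc : 1 ≤ c) :
    pareto α (Set.Iic c) = ENNReal.ofReal (1 - c ^ (-(2 * α))) := by
  rw [pareto_apply α measurableSet_Iic]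
  have hIcc : Set.Iic c ∩ Set.Ici 1 = Set.Icc 1 c := by
    ext u; simp [Set.mem_Icc, and_comm]
  rw [hIcc, ← pareto_integral_aux hα hc,
    MeasureTheory.ofReal_integral_eq_lintegral_ofReal]
  · exact (contOn α (fun u hu => by rintro rfl; exact absurd hu.1 (by norm_num))).integrableOn_compact
      isCompact_Icc
  · refine (ae_restrict_iff' measurableSet_Icc).2 (ae_of_all _ fun u hu => ?_)
    have : (0:ℝ) < u := lt_of_lt_of_le one_pos hu.1
    positivity

lemma pareto_univ {α : ℝ} (hα : 0 < α) : pareto α Set.univ = 1 := by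
  rw [pareto_apply α MeasurableSet.univ, Set.univ_inter,
    ← Measure.restrict_congr_set Ioi_ae_eq_Ici,
    ← MeasureTheory.ofReal_integral_eq_lintegral_ofReal]
  · rw [MeasureTheory.integral_const_mul, integral_Ioi_rpow_of_lt (by linarith) one_pos]
    rw [show -2 * α - 1 + 1 = -(2*α) by ring, Real.one_rpow]
    rw [show 2 * α * (- 1 / -(2 * α)) = 1 by field_simp]
    simp
  · exact (integrableOn_Ioi_rpow_of_lt (by linarith) one_pos).const_mul _
  · refine (ae_restrict_iff' measurableSet_Ioi).2 (ae_of_all _ fun u hu => ?_)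
    have : (0:ℝ) < u := lt_trans one_pos hu
    positivity


lemma unif_lintegral (a b c : ℝ≥0∞) {ρ : ℝ} (h0 : 0 ≤ ρ) (h1 : ρ ≤ 1) :
    ∫⁻ u in Set.Icc (0:ℝ) 1, (if ρ < u then a else if u < ρ then b else c) ∂volume
      = a * ENNReal.ofReal (1 - ρ) + b * ENNReal.ofReal ρ := by
  have hae : (Set.Ico (0:ℝ) ρ ∪ Set.Ioc ρ 1 : Set ℝ) =ᵐ[volume] Set.Icc (0:ℝ) 1 := by
    rw [Filter.eventuallyEq_set]
    have h2 : ∀ᵐ u : ℝ ∂volume, u ≠ ρ := by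
      rw [ae_iff]; simpa using measure_singleton ρ
    filter_upwards [h2] with u hu
    constructor
    · rintro (h | h)
      · exact ⟨h.1, le_trans h.2.le h1⟩
      · exact ⟨le_trans h0 h.1.le, h.2⟩
    · rintro ⟨hu0, hu1⟩
      rcases lt_trichotomy u ρ with h | h | h
      · exact Or.inl ⟨hu0, h⟩
      · exact absurd h hu
      · exact Or.inr ⟨h, hu1⟩
  have hdisj : Disjoint (Set.Ico (0:ℝ) ρ) (Set.Ioc ρ 1) := by
    refine Set.disjoint_left.2 fun u hu hu' => ?_
    exact absurd (hu.2.trans hu'.1) (lt_irrefl u)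
  rw [← Measure.restrict_congr_set hae, lintegral_union measurableSet_Ioc hdisj]
  have e1 := setLIntegral_congr_fun_ae (μ := volume) (f := fun u => if ρ < u then a else if u < ρ then b else c) (g := fun _ => b) measurableSet_Ico
    (ae_of_all _ (fun u (hu : u ∈ Set.Ico (0:ℝ) ρ) => by
      simp only [if_neg (not_lt.2 hu.2.le), if_pos hu.2]))
  have e2 := setLIntegral_congr_fun_ae (μ := volume) (f := fun u => if ρ < u then a else if u < ρ then b else c) (g := fun _ => a) measurableSet_Ioc
    (ae_of_all _ (fun u (hu : u ∈ Set.Ioc ρ (1:ℝ)) => by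
      simp only [if_pos hu.1]))
  rw [e1, e2, setLIntegral_const, setLIntegral_const, Real.volume_Ico, Real.volume_Ioc]
  simp [mul_comm, add_comm]

lemma key_alg {α x y t : ℝ} (hx : 0 < x) (hy : 0 ≤ y) (ht : 0 < t) :
    (min x y / max x y) ^ α * (max x y / t) ^ (2 * α) = (x / t) ^ α * (y / t) ^ α := by
  have hM : 0 < max x y := lt_max_iff.2 (Or.inl hx)
  have hm : 0 ≤ min x y := le_min hx.le hy
  have hxy : (min x y) ^ α * (max x y) ^ α = x ^ α * y ^ α := by
    rw [← Real.mul_rpow hm hM.le, ← Real.mul_rpow hx.le hy, min_mul_max]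
  have hMα : (max x y) ^ α ≠ 0 := (Real.rpow_pos_of_pos hM α).ne'
  have htα : (t:ℝ) ^ α ≠ 0 := (Real.rpow_pos_of_pos ht α).ne'
  rw [Real.div_rpow hm hM.le, Real.div_rpow hM.le ht.le, Real.div_rpow hx.le ht.le,
    Real.div_rpow hy ht.le, show (2:ℝ) * α = α + α by ring, Real.rpow_add hM,
    Real.rpow_add ht]
  field_simp
  linear_combination hxy

noncomputable def kg (α x : ℝ) : ℝ × ℝ × ℝ → ℝ := fun p =>
  max x p.1 * ((if (min x p.1 / max x p.1) ^ α < p.2.1 then 1 else 0)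
    + p.2.2 * (if p.2.1 < (min x p.1 / max x p.1) ^ α then 1 else 0))

lemma kg_meas {α : ℝ} (hα : 0 < α) (x : ℝ) : Measurable (kg α x) := by
  have hρ : Measurable fun p : ℝ × ℝ × ℝ => (min x p.1 / max x p.1) ^ α :=
    (Real.continuous_rpow_const hα.le).measurable.comp
      ((measurable_const.min measurable_fst).div (measurable_const.max measurable_fst))
  refine (measurable_const.max measurable_fst).mul (Measurable.add ?_ ?_)
  · exact Measurable.ite (measurableSet_lt hρ (measurable_fst.comp measurable_snd))
      measurable_const measurable_const
  · exact (measurable_snd.comp measurable_snd).mul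
      (Measurable.ite (measurableSet_lt (measurable_fst.comp measurable_snd) hρ)
        measurable_const measurable_const)

lemma inner_slice {α x t : ℝ} (hα : 0 < α) (hx : 0 < x) (ht : 0 < t) {y : ℝ} (hy : 0 ≤ y) :
    ((volume.restrict (Set.Icc (0:ℝ) 1)).prod (pareto α)) {q : ℝ × ℝ | kg α x (y, q) ≤ t}
      = (if max x y ≤ t then 1 else 0) * ENNReal.ofReal (1 - (min x y / max x y) ^ α)
        + pareto α (Set.Iic (t / max x y)) * ENNReal.ofReal ((min x y / max x y) ^ α) := by
  haveI : IsProbabilityMeasure (pareto α) := ⟨pareto_univ hα⟩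
  have hM : 0 < max x y := lt_max_iff.2 (Or.inl hx)
  set ρ : ℝ := (min x y / max x y) ^ α with hρ_def
  have hρ0 : 0 ≤ ρ := Real.rpow_nonneg (div_nonneg (le_min hx.le hy) hM.le) α
  have hρ1 : ρ ≤ 1 := Real.rpow_le_one (div_nonneg (le_min hx.le hy) hM.le)
    (div_le_one_of_le₀ min_le_max hM.le) hα.le
  have hmq : MeasurableSet {q : ℝ × ℝ | kg α x (y, q) ≤ t} :=
    measurableSet_le ((kg_meas hα x).comp measurable_prodMk_left) measurable_const
  rw [Measure.prod_apply hmq]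
  have hptwise : ∀ u : ℝ, pareto α (Prod.mk u ⁻¹' {q : ℝ × ℝ | kg α x (y, q) ≤ t})
      = (if ρ < u then (if max x y ≤ t then (1:ℝ≥0∞) else 0)
         else if u < ρ then pareto α (Set.Iic (t / max x y)) else 1) := by
    intro u
    by_cases h1 : ρ < u
    · rw [if_pos h1]
      have hset : Prod.mk u ⁻¹' {q : ℝ × ℝ | kg α x (y, q) ≤ t}
          = if max x y ≤ t then Set.univ else (∅ : Set ℝ) := by
        ext s
        have hg : kg α x (y, (u, s)) = max x y := by
          simp [kg, ← hρ_def, h1, asymm h1]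
        by_cases hMt : max x y ≤ t <;> simp [hg, hMt]
      rw [hset]
      by_cases hMt : max x y ≤ t <;> simp [hMt]
    · by_cases h2 : u < ρ
      · rw [if_neg h1, if_pos h2]
        have hset : Prod.mk u ⁻¹' {q : ℝ × ℝ | kg α x (y, q) ≤ t} = Set.Iic (t / max x y) := by
          ext s
          have hg : kg α x (y, (u, s)) = max x y * s := by
            simp [kg, ← hρ_def, h2, asymm h2]
          simp only [Set.mem_preimage, Set.mem_setOf_eq, Set.mem_Iic, hg]
          rw [le_div_iff₀ hM, mul_comm]
        rw [hset]
      · rw [if_neg h1, if_neg h2]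
        have hset : Prod.mk u ⁻¹' {q : ℝ × ℝ | kg α x (y, q) ≤ t} = Set.univ := by
          ext s
          have hg : kg α x (y, (u, s)) = 0 := by
            simp [kg, ← hρ_def, h1, h2]
          simp [hg, ht.le]
        rw [hset, measure_univ]
  calc ∫⁻ u, pareto α (Prod.mk u ⁻¹' {q : ℝ × ℝ | kg α x (y, q) ≤ t})
        ∂(volume.restrict (Set.Icc (0:ℝ) 1))
      = ∫⁻ u in Set.Icc (0:ℝ) 1, (if ρ < u then (if max x y ≤ t then (1:ℝ≥0∞) else 0)
          else if u < ρ then pareto α (Set.Iic (t / max x y)) else 1) ∂volume :=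
        lintegral_congr hptwise
    _ = _ := unif_lintegral _ _ _ hρ0 hρ1

/-- one-step transition law of the Kendall random walk. If Y ~ ν, ξ ~ U[0,1],
θ ~ Pareto(2α) are independent, x > 0, M = max(x,Y), m = min(x,Y), ρ = (m/M)^α and
Z = M·(1_{ξ>ρ} + θ·1_{ξ<ρ}), then P(Z ≤ t) = Ψ(x/t) F(t) + (1 − Ψ(x/t)) G(t) for t ≥ x,
with Ψ(s) = (1 − s^α)₊, and P(Z ≤ t) = 0 for 0 < t < x. -/
theorem kendall_one_step_law
    (α : ℝ) (hα : 0 < α)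
    (ν : Measure ℝ) [IsProbabilityMeasure ν] (hν : ν (Set.Iio 0) = 0)
    (F G : ℝ → ℝ)
    (hF : ∀ t, F t = (ν (Set.Iic t)).toReal)
    (hG : ∀ t, 0 < t → G t = ∫ x, max (1 - (x / t) ^ α) 0 ∂ν)
    {Ω : Type*} [MeasurableSpace Ω] (P : Measure Ω) [IsProbabilityMeasure P]
    (Y ξ θ : Ω → ℝ) (hY : Measurable Y) (hξ : Measurable ξ) (hθ : Measurable θ)
    (hindep : iIndepFun ![Y, ξ, θ] P)
    (hYlaw : Measure.map Y P = ν)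
    (hξlaw : Measure.map ξ P = volume.restrict (Set.Icc 0 1))
    (hθlaw : Measure.map θ P = pareto α)
    (x : ℝ) (hx : 0 < x)
    (Z : Ω → ℝ)
    (hZ : ∀ ω, Z ω = max x (Y ω) *
      ((if (min x (Y ω) / max x (Y ω)) ^ α < ξ ω then 1 else 0) +
        θ ω * (if ξ ω < (min x (Y ω) / max x (Y ω)) ^ α then 1 else 0))) :
    (∀ t, x ≤ t → (P {ω | Z ω ≤ t}).toReal
        = max (1 - (x / t) ^ α) 0 * F t + (1 - max (1 - (x / t) ^ α) 0) * G t) ∧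
    (∀ t, 0 < t → t < x → P {ω | Z ω ≤ t} = 0) := by
  classical
  haveI hppar : IsProbabilityMeasure (pareto α) := ⟨pareto_univ hα⟩
  haveI hpU : IsFiniteMeasure (volume.restrict (Set.Icc (0:ℝ) 1)) :=
    ⟨by simp [Real.volume_Icc]⟩
  have hae0 : ∀ᵐ y ∂ν, 0 ≤ y := by
    rw [ae_iff]; simp only [not_le]; exact hν
  -- joint law
  have hmeas3 : ∀ i, Measurable (![Y, ξ, θ] i) := by
    intro i; fin_cases i <;> assumption
  have h12 : IndepFun ξ θ P := by
    have := hindep.indepFun (i := 1) (j := 2) (by decide)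
    simpa using this
  have h0_12 : IndepFun Y (fun ω => (ξ ω, θ ω)) P := by
    have := (hindep.indepFun_prodMk hmeas3 1 2 0 (by decide) (by decide)).symm
    simpa using this
  have hmap12 : Measure.map (fun ω => (ξ ω, θ ω)) P
      = (volume.restrict (Set.Icc (0:ℝ) 1)).prod (pareto α) := by
    rw [(indepFun_iff_map_prod_eq_prod_map_map hξ.aemeasurable hθ.aemeasurable).1 h12,
      hξlaw, hθlaw]
  have hmap : Measure.map (fun ω => (Y ω, ξ ω, θ ω)) P
      = ν.prod ((volume.restrict (Set.Icc (0:ℝ) 1)).prod (pareto α)) := by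
    rw [(indepFun_iff_map_prod_eq_prod_map_map hY.aemeasurable
      (hξ.prodMk hθ).aemeasurable).1 h0_12, hYlaw, hmap12]
  have hPt : ∀ t : ℝ, P {ω | Z ω ≤ t}
      = (ν.prod ((volume.restrict (Set.Icc (0:ℝ) 1)).prod (pareto α))) {p | kg α x p ≤ t} := by
    intro t
    have hset : {ω | Z ω ≤ t} = (fun ω => (Y ω, ξ ω, θ ω)) ⁻¹' {p | kg α x p ≤ t} := by
      ext ω
      simp only [Set.mem_setOf_eq, Set.mem_preimage, hZ ω]
      rfl
    rw [hset, ← hmap, Measure.map_apply (hY.prodMk (hξ.prodMk hθ))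
      (measurableSet_le (kg_meas hα x) measurable_const)]
  have hJ : ∀ t : ℝ, 0 < t → P {ω | Z ω ≤ t}
      = ∫⁻ y, ((if max x y ≤ t then (1:ℝ≥0∞) else 0)
            * ENNReal.ofReal (1 - (min x y / max x y) ^ α)
          + pareto α (Set.Iic (t / max x y)) * ENNReal.ofReal ((min x y / max x y) ^ α)) ∂ν := by
    intro t ht
    rw [hPt t, Measure.prod_apply (measurableSet_le (kg_meas hα x) measurable_const)]
    refine lintegral_congr_ae ?_
    filter_upwards [hae0] with y hy
    exact inner_slice hα hx ht hy
  constructor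
  · -- case x ≤ t
    intro t hxt
    have ht : 0 < t := lt_of_lt_of_le hx hxt
    set c : ℝ := (x / t) ^ α with hc_def
    have hc0 : 0 ≤ c := Real.rpow_nonneg (div_nonneg hx.le ht.le) α
    have hc1 : c ≤ 1 := Real.rpow_le_one (div_nonneg hx.le ht.le)
      ((div_le_one ht).2 hxt) hα.le
    set j : ℝ → ℝ := (Set.Icc 0 t).indicator (fun y => 1 - c * (y / t) ^ α) with hj_def
    set k : ℝ → ℝ := (Set.Icc 0 t).indicator (fun y => (y / t) ^ α) with hk_def
    set ind : ℝ → ℝ := (Set.Icc 0 t).indicator (fun _ => (1:ℝ)) with hind_def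
    have hw01 : ∀ y ∈ Set.Icc (0:ℝ) t, 0 ≤ (y / t) ^ α ∧ (y / t) ^ α ≤ 1 := by
      intro y hy
      exact ⟨Real.rpow_nonneg (div_nonneg hy.1 ht.le) α,
        Real.rpow_le_one (div_nonneg hy.1 ht.le) ((div_le_one ht).2 hy.2) hα.le⟩
    -- step 1 : the lintegral equals ofReal ∘ j, a.e.
    have step1 : P {ω | Z ω ≤ t} = ∫⁻ y, ENNReal.ofReal (j y) ∂ν := by
      rw [hJ t ht]
      refine lintegral_congr_ae ?_
      filter_upwards [hae0] with y hy
      have hM : 0 < max x y := lt_max_iff.2 (Or.inl hx)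
      by_cases hyt : y ≤ t
      · have hMt : max x y ≤ t := max_le hxt hyt
        have htM : 1 ≤ t / max x y := (one_le_div hM).2 hMt
        have hρ0 : 0 ≤ (min x y / max x y) ^ α :=
          Real.rpow_nonneg (div_nonneg (le_min hx.le hy) hM.le) α
        have hρ1 : (min x y / max x y) ^ α ≤ 1 :=
          Real.rpow_le_one (div_nonneg (le_min hx.le hy) hM.le)
            (div_le_one_of_le₀ min_le_max hM.le) hα.le
        have hq1 : (t / max x y) ^ (-(2 * α)) ≤ 1 :=
          Real.rpow_le_one_of_one_le_of_nonpos htM (by linarith)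
        have hq0 : 0 ≤ (t / max x y) ^ (-(2 * α)) :=
          Real.rpow_nonneg (div_nonneg ht.le hM.le) _
        rw [if_pos hMt, pareto_Iic hα htM, one_mul, ← ENNReal.ofReal_mul (by linarith),
          ← ENNReal.ofReal_add (by linarith) (mul_nonneg (by linarith)
            (Real.rpow_nonneg (div_nonneg (le_min hx.le hy) hM.le) α))]
        congr 1
        have hqMt : (t / max x y) ^ (-(2 * α)) = (max x y / t) ^ (2 * α) := by
          rw [Real.rpow_neg (div_nonneg ht.le hM.le), ← Real.inv_rpow (div_nonneg ht.le hM.le),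
            inv_div]
        have hmem : y ∈ Set.Icc (0:ℝ) t := ⟨hy, hyt⟩
        rw [hj_def, Set.indicator_of_mem hmem]
        have := key_alg (α := α) hx hy ht
        rw [hqMt]
        nlinarith [this]
      · have hMt : ¬ max x y ≤ t := fun h => hyt (le_trans (le_max_right x y) h)
        have hMy : max x y = y := max_eq_right (le_trans hxt (not_le.1 hyt).le)
        have : t / max x y < 1 := by
          rw [hMy, div_lt_one (lt_trans ht (not_le.1 hyt))]
          exact not_le.1 hyt
        rw [if_neg hMt, pareto_Iic_of_lt α this, zero_mul, zero_mul, add_zero,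
          hj_def, Set.indicator_of_notMem (fun hmem => hyt hmem.2)]
        simp
    -- integrability
    have hmeasw : Measurable fun y : ℝ => (y / t) ^ α :=
      (Real.continuous_rpow_const hα.le).measurable.comp (measurable_id.div_const t)
    have hj_meas : Measurable j :=
      (measurable_const.sub (measurable_const.mul hmeasw)).indicator measurableSet_Icc
    have hk_meas : Measurable k := hmeasw.indicator measurableSet_Icc
    have hind_meas : Measurable ind := measurable_const.indicator measurableSet_Icc
    have hj01 : ∀ y, 0 ≤ j y ∧ j y ≤ 1 := by
      intro y
      rw [hj_def]
      by_cases hmem : y ∈ Set.Icc (0:ℝ) t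
      · rw [Set.indicator_of_mem hmem]
        have := hw01 y hmem
        constructor
        · nlinarith
        · nlinarith
      · rw [Set.indicator_of_notMem hmem]; norm_num
    have hk01 : ∀ y, 0 ≤ k y ∧ k y ≤ 1 := by
      intro y
      rw [hk_def]
      by_cases hmem : y ∈ Set.Icc (0:ℝ) t
      · rw [Set.indicator_of_mem hmem]; exact hw01 y hmem
      · rw [Set.indicator_of_notMem hmem]; norm_num
    have hbd : ∀ (f : ℝ → ℝ), Measurable f → (∀ y, 0 ≤ f y ∧ f y ≤ 1) → Integrable f ν := by
      intro f hf h01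
      refine ⟨hf.aestronglyMeasurable, ?_⟩
      refine HasFiniteIntegral.of_bounded (C := 1) (ae_of_all _ fun y => ?_)
      rw [Real.norm_eq_abs, abs_le]
      exact ⟨by linarith [(h01 y).1], (h01 y).2⟩
    have hj_int : Integrable j ν := hbd j hj_meas hj01
    have hk_int : Integrable k ν := hbd k hk_meas hk01
    have hind_int : Integrable ind ν := hbd ind hind_meas
      (fun y => by rw [hind_def]; by_cases hmem : y ∈ Set.Icc (0:ℝ) t <;>
        simp [Set.indicator_of_mem, Set.indicator_of_notMem, hmem])
    -- step 2 : lintegral to integral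
    have step2 : P {ω | Z ω ≤ t} = ENNReal.ofReal (∫ y, j y ∂ν) := by
      rw [step1, ← ofReal_integral_eq_lintegral_ofReal hj_int
        (ae_of_all _ fun y => (hj01 y).1)]
    -- integral identities
    have hIind : ∫ y, ind y ∂ν = F t := by
      rw [hind_def, MeasureTheory.integral_indicator_const (1:ℝ) measurableSet_Icc, hF t,
        smul_eq_mul, mul_one, measureReal_def]
      congr 1
      have : Set.Icc (0:ℝ) t = Set.Iic t \ Set.Iio 0 := by
        ext y; simp only [Set.mem_Icc, Set.mem_diff, Set.mem_Iic, Set.mem_Iio, not_lt]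
        tauto
      rw [this, measure_diff_null hν]
    have hjik : ∀ y, j y = ind y - c * k y := by
      intro y
      rw [hj_def, hind_def, hk_def]
      by_cases hmem : y ∈ Set.Icc (0:ℝ) t <;>
        simp [Set.indicator_of_mem, Set.indicator_of_notMem, hmem]
    have hIj : ∫ y, j y ∂ν = F t - c * ∫ y, k y ∂ν := by
      calc ∫ y, j y ∂ν = ∫ y, (ind y - c * k y) ∂ν := by
            exact integral_congr_ae (ae_of_all _ hjik)
        _ = (∫ y, ind y ∂ν) - ∫ y, c * k y ∂ν :=
            integral_sub hind_int (hk_int.const_mul c)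
        _ = F t - c * ∫ y, k y ∂ν := by rw [hIind, MeasureTheory.integral_const_mul]
    have hIG : G t = F t - ∫ y, k y ∂ν := by
      rw [hG t ht]
      have : ∫ y, max (1 - (y / t) ^ α) 0 ∂ν = ∫ y, (ind y - k y) ∂ν := by
        refine integral_congr_ae ?_
        filter_upwards [hae0] with y hy
        by_cases hyt : y ≤ t
        · have hmem : y ∈ Set.Icc (0:ℝ) t := ⟨hy, hyt⟩
          rw [hind_def, hk_def, Set.indicator_of_mem hmem, Set.indicator_of_mem hmem]
          exact max_eq_left (by linarith [(hw01 y hmem).2])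
        · have hmem : y ∉ Set.Icc (0:ℝ) t := fun h => hyt h.2
          rw [hind_def, hk_def, Set.indicator_of_notMem hmem, Set.indicator_of_notMem hmem]
          have h1w : 1 ≤ (y / t) ^ α :=
            Real.one_le_rpow ((one_le_div ht).2 (not_le.1 hyt).le) hα.le
          rw [sub_self]
          exact max_eq_right (by linarith)
      rw [this, integral_sub hind_int hk_int, hIind]
    -- conclude
    have hjnn : 0 ≤ ∫ y, j y ∂ν := integral_nonneg fun y => (hj01 y).1
    rw [step2, ENNReal.toReal_ofReal hjnn, hIj]
    have hmax : max (1 - (x / t) ^ α) 0 = 1 - c := max_eq_left (by linarith)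
    rw [hmax]
    linear_combination (-c) * hIG
  · -- case t < x
    intro t ht htx
    rw [hJ t ht]
    have : ∀ y : ℝ, ((if max x y ≤ t then (1:ℝ≥0∞) else 0)
            * ENNReal.ofReal (1 - (min x y / max x y) ^ α)
          + pareto α (Set.Iic (t / max x y)) * ENNReal.ofReal ((min x y / max x y) ^ α)) = 0 := by
      intro y
      have hM : 0 < max x y := lt_max_iff.2 (Or.inl hx)
      have hMt : ¬ max x y ≤ t := fun h => absurd (le_trans (le_max_left x y) h) (not_le.2 htx)
      have : t / max x y < 1 := (div_lt_one hM).2 (lt_of_lt_of_le htx (le_max_left x y))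
      rw [if_neg hMt, pareto_Iic_of_lt α this, zero_mul, zero_mul, add_zero]
    simp only [this, lintegral_const, zero_mul]
end

section
/- Let ν be a probability measure on [0,∞) with ν((0,∞)) > 0, with cumulative distribution function F, Williamson transform G and truncated α-moment H, and for an integer n ≥ 2 define F_n(t) = G(t)^{n−1}( n t^{−α} H(t) + G(t) ) for t > 0. Then lim_{x→∞} x^{2α} ( F(x)^n − F_n(x) ) / H(x)^2 = n(n−1)/2; equivalently, the tail F̄_n = 1 − F_n satisfies F̄_n(x) − (1 − F(x)^n) = (1/2) n(n−1) H(x)^2 x^{−2α} (1 + o(1)) as x → ∞. -/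
open MeasureTheory Filter Real Topology

open Finset in
theorem binom_aux (m : ℕ) (b h : ℝ) :
    (b + h) ^ (m + 2) = b ^ (m + 2) + (m + 2 : ℝ) * h * b ^ (m + 1)
      + h ^ 2 * ∑ k ∈ Finset.range (m + 1), b ^ (m - k) * h ^ k * ((m + 2).choose (k + 2) : ℝ) := by
  have key := add_pow h b (m + 2)
  rw [show m + 2 + 1 = (m + 1) + 1 + 1 by ring] at key
  rw [Finset.sum_range_succ', Finset.sum_range_succ'] at key
  rw [show h + b = b + h by ring] at key
  have hsum : ∑ k ∈ Finset.range (m + 1), h ^ (k + 1 + 1) * b ^ (m + 2 - (k + 1 + 1)) * ((m + 2).choose (k + 1 + 1) : ℝ)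
      = h ^ 2 * ∑ k ∈ Finset.range (m + 1), b ^ (m - k) * h ^ k * ((m + 2).choose (k + 2) : ℝ) := by
    rw [Finset.mul_sum]
    apply Finset.sum_congr rfl
    intro k hk
    have : m + 2 - (k + 1 + 1) = m - k := by omega
    rw [this]
    ring
  rw [key, hsum]
  have h1 : (0:ℕ) + 1 = 1 := rfl
  have h2 : m + 2 - 1 = m + 1 := by omega
  have h3 : m + 2 - 0 = m + 2 := by omega
  rw [h1, h2, h3, Nat.choose_one_right, Nat.choose_zero_right]
  push_cast
  ring

/-- with F_n(t) = G(t)^{n−1}( n t^{−α} H(t) + G(t) ) the cdf of the n-fold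
Kendall convolution power (n ≥ 2) and ν((0,∞)) > 0, one has
lim_{x→∞} x^{2α} ( F(x)^n − F_n(x) ) / H(x)^2 = n(n−1)/2, i.e. the tail satisfies
F̄_n(x) − (1 − F(x)^n) = (1/2) n(n−1) H(x)^2 x^{−2α} (1 + o(1)) as x → ∞. -/
theorem kendall_power_tail_asymptotics
    (α : ℝ) (hα : 0 < α)
    (ν : Measure ℝ) [IsProbabilityMeasure ν] (hν : ν (Set.Iio 0) = 0)
    (hpos : 0 < ν (Set.Ioi 0))
    (F G H : ℝ → ℝ)
    (hF : ∀ t, F t = (ν (Set.Iic t)).toReal)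
    (hG : ∀ t, 0 < t → G t = ∫ x, max (1 - (x / t) ^ α) 0 ∂ν)
    (hH : ∀ t, 0 < t → H t = ∫ x in Set.Icc 0 t, x ^ α ∂ν)
    (n : ℕ) (hn : 2 ≤ n)
    (Fn : ℝ → ℝ)
    (hFn : ∀ t, 0 < t → Fn t = (G t) ^ (n - 1) * ((n : ℝ) * t ^ (-α) * H t + G t)) :
    Tendsto (fun x => x ^ (2 * α) * ((F x) ^ n - Fn x) / (H x) ^ 2) atTop
      (𝓝 ((n : ℝ) * ((n : ℝ) - 1) / 2)) := by
  -- basic facts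
  have hae : ∀ᵐ y ∂ν, 0 ≤ y := by
    rw [ae_iff]
    convert hν using 2
    ext y; simp [Set.Iio]
  have hcontα : Continuous fun u : ℝ => u ^ α :=
    continuous_iff_continuousAt.2 fun u => Real.continuousAt_rpow_const u α (Or.inr hα.le)
  -- integrability of y ^ α on Icc 0 t
  have hint : ∀ t : ℝ, IntegrableOn (fun y : ℝ => y ^ α) (Set.Icc 0 t) ν := by
    intro t
    apply Measure.integrableOn_of_bounded (M := |t| ^ α) (measure_ne_top ν _)
      hcontα.aestronglyMeasurable
    filter_upwards [ae_restrict_mem measurableSet_Icc] with y hy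
    rw [Real.norm_eq_abs, abs_of_nonneg (Real.rpow_nonneg hy.1 α)]
    exact Real.rpow_le_rpow hy.1 (hy.2.trans (le_abs_self t)) hα.le
  -- the identity G t = F t - t^(-α) * H t
  have hGF : ∀ t : ℝ, 0 < t → G t = F t - t ^ (-α) * H t := by
    intro t ht
    have hind : ∀ᵐ y ∂ν, max (1 - (y / t) ^ α) 0
        = Set.indicator (Set.Icc 0 t) (fun y => 1 - y ^ α * t ^ (-α)) y := by
      filter_upwards [hae] with y hy
      have hdiv : (y / t) ^ α = y ^ α * t ^ (-α) := by
        rw [Real.div_rpow hy ht.le, Real.rpow_neg ht.le, div_eq_mul_inv]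
      by_cases hyt : y ≤ t
      · rw [Set.indicator_of_mem (Set.mem_Icc.2 ⟨hy, hyt⟩), ← hdiv, max_eq_left]
        have : (y / t) ^ α ≤ 1 :=
          Real.rpow_le_one (div_nonneg hy ht.le) (div_le_one_of_le₀ hyt ht.le) hα.le
        linarith
      · rw [Set.indicator_of_notMem (fun hmem => hyt hmem.2), max_eq_right]
        have : (1:ℝ) ≤ (y / t) ^ α :=
          Real.one_le_rpow ((one_le_div ht).2 (le_of_not_ge hyt)) hα.le
        linarith
    rw [hG t ht, integral_congr_ae hind, integral_indicator measurableSet_Icc]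
    have hsub : ∫ y in Set.Icc 0 t, (1 - y ^ α * t ^ (-α)) ∂ν
        = (∫ y in Set.Icc 0 t, (1:ℝ) ∂ν) - ∫ y in Set.Icc 0 t, y ^ α * t ^ (-α) ∂ν := by
      apply integral_sub (integrableOn_const (C := (1:ℝ)) (measure_ne_top ν (Set.Icc 0 t)))
      exact (hint t).mul_const _
    rw [hsub, integral_mul_const, setIntegral_const, smul_eq_mul, mul_one]
    have hmeas : ν (Set.Icc 0 t) = ν (Set.Iic t) := by
      rw [show Set.Icc 0 t = Set.Iic t \ Set.Iio 0 by
        ext y; simp only [Set.mem_Icc, Set.mem_diff, Set.mem_Iic, Set.mem_Iio, not_lt]; tauto]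
      exact measure_diff_null hν
    rw [measureReal_def, hmeas, ← hF t, ← hH t ht]
    ring
  -- F tends to 1
  have hFlim : Tendsto F atTop (𝓝 1) := by
    have h1 := tendsto_measure_Iic_atTop (μ := ν)
    rw [measure_univ] at h1
    have h2 := (ENNReal.tendsto_toReal (by simp : (1 : ENNReal) ≠ ⊤)).comp h1
    simp only [ENNReal.toReal_one] at h2
    exact h2.congr fun x => (hF x).symm
  -- G tends to 1
  have hGlim : Tendsto G atTop (𝓝 1) := by
    have key : Tendsto (fun x => ∫ y, max (1 - (y / x) ^ α) 0 ∂ν) atTop (𝓝 (∫ _, (1:ℝ) ∂ν)) := by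
      apply tendsto_integral_filter_of_dominated_convergence (bound := fun _ => (1:ℝ))
      · exact Eventually.of_forall fun x =>
          ((continuous_const.sub (hcontα.comp (continuous_id.div_const x))).max
            continuous_const).aestronglyMeasurable
      · filter_upwards [eventually_ge_atTop (1:ℝ)] with x hx
        filter_upwards [hae] with y hy
        have hx0 : (0:ℝ) < x := lt_of_lt_of_le one_pos hx
        have h0 : 0 ≤ (y / x) ^ α := Real.rpow_nonneg (div_nonneg hy hx0.le) α
        rw [Real.norm_eq_abs, abs_of_nonneg (le_max_right _ _)]
        apply max_le (by linarith) one_pos.le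
      · exact integrable_const 1
      · filter_upwards [hae] with y hy
        have h1 : Tendsto (fun x : ℝ => y / x) atTop (𝓝 0) :=
          tendsto_const_nhds.div_atTop tendsto_id
        have h2 : Tendsto (fun x : ℝ => (y / x) ^ α) atTop (𝓝 0) := by
          have := (Real.continuousAt_rpow_const 0 α (Or.inr hα.le)).tendsto.comp h1
          simpa [Real.zero_rpow hα.ne', Function.comp_def] using this
        have := ((tendsto_const_nhds (x := (1:ℝ))).sub h2).max (tendsto_const_nhds (x := (0:ℝ)))
        simpa using this
    have : (∫ _, (1:ℝ) ∂ν) = 1 := by simp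
    rw [this] at key
    apply key.congr'
    filter_upwards [eventually_gt_atTop (0:ℝ)] with x hx
    exact (hG x hx).symm
  -- x^(-α) * H x tends to 0
  have hhlim : Tendsto (fun x => x ^ (-α) * H x) atTop (𝓝 0) := by
    have := hFlim.sub hGlim
    rw [sub_self] at this
    apply this.congr'
    filter_upwards [eventually_gt_atTop (0:ℝ)] with x hx
    rw [hGF x hx]; ring
  -- eventual positivity of H
  have hHpos : ∀ᶠ x in atTop, 0 < H x := by
    obtain ⟨M, hM⟩ : ∃ M : ℕ, 0 < ν (Set.Ioc 0 ((M:ℝ) + 1)) := by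
      by_contra hcon
      push_neg at hcon
      simp only [le_zero_iff] at hcon
      have hsub : Set.Ioi (0:ℝ) ⊆ ⋃ k : ℕ, Set.Ioc (0:ℝ) ((k:ℝ) + 1) := by
        intro y hy
        obtain ⟨k, hk⟩ := exists_nat_ge y
        exact Set.mem_iUnion.2 ⟨k, hy, by linarith⟩
      have h1 : ν (Set.Ioi 0) ≤ ∑' k : ℕ, ν (Set.Ioc (0:ℝ) ((k:ℝ) + 1)) :=
        (measure_mono hsub).trans (measure_iUnion_le _)
      simp only [hcon, tsum_zero, le_zero_iff] at h1
      exact hpos.ne' h1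
    filter_upwards [eventually_ge_atTop ((M:ℝ) + 1), eventually_gt_atTop (0:ℝ)] with x hx hx0
    rw [hH x hx0]
    rw [setIntegral_pos_iff_support_of_nonneg_ae ?_ (hint x)]
    · apply lt_of_lt_of_le hM
      apply measure_mono
      intro y hy
      exact ⟨ne_of_gt (Real.rpow_pos_of_pos hy.1 α), hy.1.le, hy.2.trans hx⟩
    · filter_upwards [ae_restrict_mem measurableSet_Icc] with y hy
      exact Real.rpow_nonneg hy.1 α
  -- reduce n to m + 2
  obtain ⟨m, rfl⟩ : ∃ m, n = m + 2 := ⟨n - 2, by omega⟩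
  -- eventual formula for the target
  have heq : ∀ᶠ x in atTop,
      x ^ (2 * α) * ((F x) ^ (m + 2) - Fn x) / (H x) ^ 2
        = ∑ k ∈ Finset.range (m + 1),
            (G x) ^ (m - k) * (x ^ (-α) * H x) ^ k * ((m + 2).choose (k + 2) : ℝ) := by
    filter_upwards [eventually_gt_atTop (0:ℝ), hHpos] with x hx hHx
    set b := G x with hb
    set c := x ^ (-α) * H x with hc
    have hFx : F x = b + c := by rw [hb, hGF x hx]; ring
    have hFnx : Fn x = b ^ (m + 2) + ((m:ℝ) + 2) * c * b ^ (m + 1) := by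
      rw [hFn x hx]
      have : m + 2 - 1 = m + 1 := by omega
      rw [this]
      push_cast
      ring
    have hdiff : (F x) ^ (m + 2) - Fn x
        = c ^ 2 * ∑ k ∈ Finset.range (m + 1), b ^ (m - k) * c ^ k * ((m + 2).choose (k + 2) : ℝ) := by
      rw [hFx, hFnx, binom_aux m b c]; ring
    have hxpow : x ^ (2 * α) * (x ^ (-α)) ^ 2 = 1 := by
      rw [sq, ← Real.rpow_add hx, ← Real.rpow_add hx,
        show 2 * α + (-α + -α) = 0 by ring, Real.rpow_zero]
    have hH2 : (H x) ^ 2 ≠ 0 := pow_ne_zero _ hHx.ne'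
    set S := ∑ k ∈ Finset.range (m + 1), b ^ (m - k) * c ^ k * ((m + 2).choose (k + 2) : ℝ) with hS
    calc x ^ (2 * α) * ((F x) ^ (m + 2) - Fn x) / (H x) ^ 2
        = (x ^ (2 * α) * (x ^ (-α)) ^ 2) * S * ((H x) ^ 2 / (H x) ^ 2) := by
          rw [hdiff, hc]; ring
      _ = S := by rw [hxpow, div_self hH2]; ring
  -- limit of the sum
  have hsumlim : Tendsto (fun x => ∑ k ∈ Finset.range (m + 1),
      (G x) ^ (m - k) * (x ^ (-α) * H x) ^ k * ((m + 2).choose (k + 2) : ℝ)) atTop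
      (𝓝 ((((m + 2 : ℕ)):ℝ) * ((((m + 2 : ℕ)):ℝ) - 1) / 2)) := by
    have hlim : Tendsto (fun x => ∑ k ∈ Finset.range (m + 1),
        (G x) ^ (m - k) * (x ^ (-α) * H x) ^ k * ((m + 2).choose (k + 2) : ℝ)) atTop
        (𝓝 (∑ k ∈ Finset.range (m + 1),
          (1:ℝ) ^ (m - k) * (0:ℝ) ^ k * ((m + 2).choose (k + 2) : ℝ))) := by
      apply tendsto_finset_sum
      intro k _
      exact ((hGlim.pow (m - k)).mul (hhlim.pow k)).mul_const _
    have hval : ∑ k ∈ Finset.range (m + 1),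
        (1:ℝ) ^ (m - k) * (0:ℝ) ^ k * ((m + 2).choose (k + 2) : ℝ)
        = (((m + 2 : ℕ)):ℝ) * ((((m + 2 : ℕ)):ℝ) - 1) / 2 := by
      rw [Finset.sum_eq_single 0]
      · simp only [Nat.sub_zero, one_pow, pow_zero, mul_one, one_mul]
        have := Nat.cast_choose_two ℝ (m + 2)
        rw [show (0:ℕ) + 2 = 2 by rfl, this]
      · intro k _ hk
        rw [zero_pow hk]
        ring
      · intro h
        exact absurd (Finset.mem_range.2 (Nat.succ_pos m)) h
    rwa [hval] at hlim
  exact Tendsto.congr' (Filter.EventuallyEq.symm heq) hsumlim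
end

section
/- Let ν be a probability measure on [0,∞) with cumulative distribution function F such that the tail F̄ = 1 − F is everywhere positive and regularly varying at infinity with index θ − α for some 0 < θ < α, i.e. for every λ > 0, F̄(λx)/F̄(x) → λ^{θ−α} as x → ∞. Then for every integer n ≥ 1, the tail F̄_n = 1 − F_n satisfies lim_{x→∞} F̄_n(x) / ( n F̄(x) ) = 1. -/
open MeasureTheory Filter Real Topology

section KendallAux
open Set

-- limit of (1 - l^{-a})/(1 - l^{-b}) as l → 1+ equals a/b
lemma kendall_ratio_limit (a b : ℝ) (hb : b ≠ 0) :
    Tendsto (fun l : ℝ => (1 - l ^ (-a)) / (1 - l ^ (-b))) (𝓝[>] (1:ℝ)) (𝓝 (a / b)) := by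
  have key : ∀ c : ℝ, Tendsto (fun l : ℝ => (1 - l ^ (-c)) / (l - 1)) (𝓝[≠] (1:ℝ)) (𝓝 c) := by
    intro c
    have h2 : HasDerivAt (fun x : ℝ => x ^ (-c)) (-c * (1:ℝ) ^ (-c - 1)) 1 :=
      Real.hasDerivAt_rpow_const (Or.inl one_ne_zero)
    have h1 : HasDerivAt (fun l : ℝ => 1 - l ^ (-c)) c 1 := by
      have h3 := h2.const_sub 1
      simpa using h3
    have h4 := hasDerivAt_iff_tendsto_slope.1 h1
    apply h4.congr
    intro l
    simp [slope_def_field, Real.one_rpow]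
    --ring
  have hdiv := (key a).div (key b) hb
  have hmono : (𝓝[>] (1:ℝ)) ≤ (𝓝[≠] (1:ℝ)) := nhdsWithin_mono _ (fun x hx => ne_of_gt hx)
  refine Tendsto.congr' ?_ (hdiv.mono_left hmono)
  filter_upwards [self_mem_nhdsWithin] with l (hl : 1 < l)
  have hz : l - 1 ≠ 0 := by linarith
  rw [Pi.div_apply]
  field_simp

lemma kendall_iter_up {R : ℝ → ℝ} {l q c B T : ℝ} (hl : 1 < l) (hT : 0 < T)
    (hq : 0 ≤ q) (hstep : ∀ t, T ≤ t → R t ≤ q * R (t / l) + c)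
    (hB : ∀ t, T ≤ t → R t ≤ B) :
    ∀ k : ℕ, ∀ t, T * l ^ k ≤ t → R t ≤ q ^ k * B + c * ∑ i ∈ Finset.range k, q ^ i := by
  intro k
  induction k with
  | zero => intro t ht; simpa using hB t (by simpa using ht)
  | succ k ih =>
    intro t ht
    have hl0 : (0:ℝ) < l := by linarith
    have hlk : (1:ℝ) ≤ l ^ (k+1) := one_le_pow₀ hl.le
    have hTt : T ≤ t := le_trans (by nlinarith) ht
    have htl : T * l ^ k ≤ t / l := by
      rw [le_div_iff₀ hl0]
      calc T * l ^ k * l = T * l ^ (k+1) := by ring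
        _ ≤ t := ht
    have h1 := hstep t hTt
    have h2 := ih (t / l) htl
    calc R t ≤ q * R (t / l) + c := h1
      _ ≤ q * (q ^ k * B + c * ∑ i ∈ Finset.range k, q ^ i) + c :=
          by nlinarith [mul_le_mul_of_nonneg_left h2 hq]
      _ = q ^ (k+1) * B + c * (q * ∑ i ∈ Finset.range k, q ^ i + 1) := by ring
      _ = q ^ (k+1) * B + c * ∑ i ∈ Finset.range (k+1), q ^ i := by rw [geom_sum_succ]

lemma kendall_iter_lo {R : ℝ → ℝ} {l q c T : ℝ} (hl : 1 < l) (hT : 0 < T) (hq : 0 ≤ q)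
    (hR0 : ∀ t, T ≤ t → 0 ≤ R t)
    (hstep : ∀ t, T ≤ t → q * R (t / l) + c ≤ R t) :
    ∀ k : ℕ, ∀ t, T * l ^ k ≤ t → c * ∑ i ∈ Finset.range k, q ^ i ≤ R t := by
  intro k
  induction k with
  | zero => intro t ht; simpa using hR0 t (by simpa using ht)
  | succ k ih =>
    intro t ht
    have hl0 : (0:ℝ) < l := by linarith
    have hlk : (1:ℝ) ≤ l ^ (k+1) := one_le_pow₀ hl.le
    have hTt : T ≤ t := le_trans (by nlinarith) ht
    have htl : T * l ^ k ≤ t / l := by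
      rw [le_div_iff₀ hl0]
      calc T * l ^ k * l = T * l ^ (k+1) := by ring
        _ ≤ t := ht
    have h1 := hstep t hTt
    have h2 := ih (t / l) htl
    calc c * ∑ i ∈ Finset.range (k+1), q ^ i
        = q * (c * ∑ i ∈ Finset.range k, q ^ i) + c := by rw [geom_sum_succ]; ring
      _ ≤ q * R (t / l) + c := by nlinarith [mul_le_mul_of_nonneg_left h2 hq]
      _ ≤ R t := h1

-- geometric sum bound
lemma kendall_geom_le {q : ℝ} (h0 : 0 ≤ q) (h1 : q < 1) (k : ℕ) :
    ∑ i ∈ Finset.range k, q ^ i ≤ 1 / (1 - q) := by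
  have h : (∑ i ∈ Finset.range k, q ^ i) * (1 - q) = 1 - q ^ k := by
    have := geom_sum_mul q k
    nlinarith [this]
  have hq1 : 0 < 1 - q := by linarith
  rw [le_div_iff₀ hq1, h]
  nlinarith [pow_nonneg h0 k]

set_option maxHeartbeats 1000000 in
lemma kendall_karamata (α θ : ℝ) (hα : 0 < α) (hθ : 0 < θ) (hθα : θ < α)
    (Fb : ℝ → ℝ) (hanti : Antitone Fb) (hpos : ∀ x, 0 < Fb x) (hle : ∀ x, Fb x ≤ 1)
    (hRV : ∀ l, 0 < l → Tendsto (fun x => Fb (l * x) / Fb x) atTop (𝓝 (l ^ (θ - α)))) :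
    Tendsto (fun t => (∫ s in (0:ℝ)..t, s ^ (α - 1) * Fb s) / (t ^ α * Fb t)) atTop
      (𝓝 (1 / θ)) := by
  set ψ : ℝ → ℝ := fun t => ∫ s in (0:ℝ)..t, s ^ (α - 1) * Fb s with hψdef
  have hInt : ∀ a b : ℝ, IntervalIntegrable (fun s => s ^ (α - 1) * Fb s) volume a b := by
    intro a b
    have hr : IntervalIntegrable (fun s : ℝ => s ^ (α - 1)) volume a b :=
      intervalIntegral.intervalIntegrable_rpow' (by linarith)
    rw [intervalIntegrable_iff] at hr ⊢
    refine (hr.bdd_mul (hanti.measurable.aestronglyMeasurable.restrict)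
      (c := 1) (ae_of_all _ fun x => ?_)).congr (ae_of_all _ fun x => mul_comm _ _)
    rw [Real.norm_eq_abs, abs_of_pos (hpos x)]; exact hle x
  have hψ0 : ∀ t : ℝ, 0 ≤ t → 0 ≤ ψ t := by
    intro t ht
    refine intervalIntegral.integral_nonneg ht fun u hu => ?_
    exact mul_nonneg (Real.rpow_nonneg hu.1 _) (hpos u).le
  have hψadd : ∀ a b : ℝ, ψ b = ψ a + ∫ s in a..b, s ^ (α - 1) * Fb s := by
    intro a b
    rw [hψdef]
    exact (intervalIntegral.integral_add_adjacent_intervals (hInt 0 a) (hInt a b)).symm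
  have hpowint : ∀ a b : ℝ, (∫ s in a..b, s ^ (α - 1)) = (b ^ α - a ^ α) / α := by
    intro a b
    rw [integral_rpow (Or.inl (by linarith))]
    norm_num
  have hchunk_ub : ∀ a b : ℝ, 0 ≤ a → a ≤ b →
      (∫ s in a..b, s ^ (α - 1) * Fb s) ≤ Fb a * ((b ^ α - a ^ α) / α) := by
    intro a b ha hab
    calc (∫ s in a..b, s ^ (α - 1) * Fb s) ≤ ∫ s in a..b, s ^ (α - 1) * Fb a := by
          refine intervalIntegral.integral_mono_on hab (hInt a b)
            ((intervalIntegral.intervalIntegrable_rpow' (by linarith)).mul_const _) fun x hx => ?_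
          exact mul_le_mul_of_nonneg_left (hanti hx.1) (Real.rpow_nonneg (le_trans ha hx.1) _)
      _ = Fb a * ((b ^ α - a ^ α) / α) := by
          rw [intervalIntegral.integral_mul_const, hpowint, mul_comm]
  have hchunk_lb : ∀ a b : ℝ, 0 ≤ a → a ≤ b →
      Fb b * ((b ^ α - a ^ α) / α) ≤ ∫ s in a..b, s ^ (α - 1) * Fb s := by
    intro a b ha hab
    calc Fb b * ((b ^ α - a ^ α) / α) = ∫ s in a..b, s ^ (α - 1) * Fb b := by
          rw [intervalIntegral.integral_mul_const, hpowint, mul_comm]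
      _ ≤ ∫ s in a..b, s ^ (α - 1) * Fb s := by
          refine intervalIntegral.integral_mono_on hab
            ((intervalIntegral.intervalIntegrable_rpow' (by linarith)).mul_const _) (hInt a b) fun x hx => ?_
          exact mul_le_mul_of_nonneg_left (hanti hx.2) (Real.rpow_nonneg (le_trans ha hx.1) _)
  have hψmono : ∀ a b : ℝ, 0 ≤ a → a ≤ b → ψ a ≤ ψ b := by
    intro a b ha hab
    rw [hψadd a b]
    have : 0 ≤ ∫ s in a..b, s ^ (α - 1) * Fb s := by
      refine intervalIntegral.integral_nonneg hab fun u hu => ?_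
      exact mul_nonneg (Real.rpow_nonneg (le_trans ha hu.1) _) (hpos u).le
    linarith
  have hR0 : ∀ t : ℝ, 0 < t → 0 ≤ ψ t / (t ^ α * Fb t) := by
    intro t ht
    exact div_nonneg (hψ0 t ht.le) (mul_nonneg (Real.rpow_nonneg ht.le _) (hpos t).le)
  have hstep_ub : ∀ l : ℝ, 1 < l → ∀ t : ℝ, 0 < t →
      ψ t / (t ^ α * Fb t) ≤ l ^ (-α) * (Fb (t / l) / Fb t) * (ψ (t / l) / ((t / l) ^ α * Fb (t / l)))
        + (Fb (t / l) / Fb t) * ((1 - l ^ (-α)) / α) := by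
    intro l hl t ht
    have hl0 : (0:ℝ) < l := lt_trans one_pos hl
    have ha : 0 < t / l := div_pos ht hl0
    have hat : t / l ≤ t := div_le_self ht.le hl.le
    have hPpos : 0 < t ^ α := Real.rpow_pos_of_pos ht α
    have hden : 0 < t ^ α * Fb t := mul_pos hPpos (hpos t)
    have haα : (t / l) ^ α = t ^ α * l ^ (-α) := by
      rw [Real.div_rpow ht.le hl0.le, Real.rpow_neg hl0.le, div_eq_mul_inv]
    rw [div_le_iff₀ hden]
    have h1 : ψ t ≤ ψ (t / l) + Fb (t / l) * ((t ^ α - (t / l) ^ α) / α) := by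
      rw [hψadd (t / l) t]
      exact add_le_add_right (hchunk_ub (t / l) t ha.le hat) _
    refine le_trans h1 (le_of_eq ?_)
    have h2 : (0:ℝ) < l ^ (-α) := Real.rpow_pos_of_pos hl0 _
    have gen : ∀ (la A Ft P ψa : ℝ), la ≠ 0 → A ≠ 0 → Ft ≠ 0 → P ≠ 0 → α ≠ 0 →
        ψa + A * ((P - P * la) / α)
          = (la * (A / Ft) * (ψa / (P * la * A)) + (A / Ft) * ((1 - la) / α)) * (P * Ft) := by
      intros la A Ft P ψa u1 u2 u3 u4 u5
      field_simp
    calc ψ (t / l) + Fb (t / l) * ((t ^ α - (t / l) ^ α) / α)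
        = ψ (t / l) + Fb (t / l) * ((t ^ α - t ^ α * l ^ (-α)) / α) := by rw [haα]
      _ = (l ^ (-α) * (Fb (t / l) / Fb t) * (ψ (t / l) / (t ^ α * l ^ (-α) * Fb (t / l)))
            + (Fb (t / l) / Fb t) * ((1 - l ^ (-α)) / α)) * (t ^ α * Fb t) :=
          gen _ _ _ _ _ h2.ne' (hpos _).ne' (hpos t).ne' hPpos.ne' hα.ne'
      _ = (l ^ (-α) * (Fb (t / l) / Fb t) * (ψ (t / l) / ((t / l) ^ α * Fb (t / l)))
            + (Fb (t / l) / Fb t) * ((1 - l ^ (-α)) / α)) * (t ^ α * Fb t) := by rw [haα]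
  have hstep_lb : ∀ l : ℝ, 1 < l → ∀ t : ℝ, 0 < t →
      l ^ (-α) * (Fb (t / l) / Fb t) * (ψ (t / l) / ((t / l) ^ α * Fb (t / l)))
        + (1 - l ^ (-α)) / α ≤ ψ t / (t ^ α * Fb t) := by
    intro l hl t ht
    have hl0 : (0:ℝ) < l := lt_trans one_pos hl
    have ha : 0 < t / l := div_pos ht hl0
    have hat : t / l ≤ t := div_le_self ht.le hl.le
    have hPpos : 0 < t ^ α := Real.rpow_pos_of_pos ht α
    have hden : 0 < t ^ α * Fb t := mul_pos hPpos (hpos t)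
    have haα : (t / l) ^ α = t ^ α * l ^ (-α) := by
      rw [Real.div_rpow ht.le hl0.le, Real.rpow_neg hl0.le, div_eq_mul_inv]
    rw [le_div_iff₀ hden]
    have h1 : ψ (t / l) + Fb t * ((t ^ α - (t / l) ^ α) / α) ≤ ψ t := by
      rw [hψadd (t / l) t]
      exact add_le_add_right (hchunk_lb (t / l) t ha.le hat) _
    refine le_trans (le_of_eq ?_) h1
    have h2 : (0:ℝ) < l ^ (-α) := Real.rpow_pos_of_pos hl0 _
    have gen : ∀ (la A Ft P ψa : ℝ), la ≠ 0 → A ≠ 0 → Ft ≠ 0 → P ≠ 0 → α ≠ 0 →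
        (la * (A / Ft) * (ψa / (P * la * A)) + (1 - la) / α) * (P * Ft)
          = ψa + Ft * ((P - P * la) / α) := by
      intros la A Ft P ψa u1 u2 u3 u4 u5
      field_simp
    calc (l ^ (-α) * (Fb (t / l) / Fb t) * (ψ (t / l) / ((t / l) ^ α * Fb (t / l)))
            + (1 - l ^ (-α)) / α) * (t ^ α * Fb t)
        = (l ^ (-α) * (Fb (t / l) / Fb t) * (ψ (t / l) / (t ^ α * l ^ (-α) * Fb (t / l)))
            + (1 - l ^ (-α)) / α) * (t ^ α * Fb t) := by rw [haα]
      _ = ψ (t / l) + Fb t * ((t ^ α - t ^ α * l ^ (-α)) / α) :=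
          gen _ _ _ _ _ h2.ne' (hpos _).ne' (hpos t).ne' hPpos.ne' hα.ne'
      _ = ψ (t / l) + Fb t * ((t ^ α - (t / l) ^ α) / α) := by rw [haα]
  have hρ : ∀ l : ℝ, 1 < l →
      Tendsto (fun t => Fb (t / l) / Fb t) atTop (𝓝 (l ^ (α - θ))) := by
    intro l hl
    have hl0 : (0:ℝ) < l := lt_trans one_pos hl
    have h := hRV l⁻¹ (inv_pos.2 hl0)
    have hval : (l⁻¹) ^ (θ - α) = l ^ (α - θ) := by
      rw [Real.inv_rpow hl0.le, ← Real.rpow_neg hl0.le, neg_sub]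
    rw [hval] at h
    refine h.congr fun x => ?_
    rw [inv_mul_eq_div]
  -- a priori eventual upper bound on R
  have hB : ∃ B T0 : ℝ, 0 ≤ B ∧ 1 ≤ T0 ∧ ∀ t, T0 ≤ t → ψ t / (t ^ α * Fb t) ≤ B := by
    have h2αθ : ((2:ℝ) ^ (-α)) * ((2:ℝ) ^ (α - θ)) = (2:ℝ) ^ (-θ) := by
      rw [← Real.rpow_add two_pos]; congr 1; ring
    have hlim : Tendsto (fun t => (2:ℝ) ^ (-α) * (Fb (t / 2) / Fb t)) atTop
        (𝓝 ((2:ℝ) ^ (-θ))) := by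
      have := (hρ 2 one_lt_two).const_mul ((2:ℝ) ^ (-α))
      rwa [h2αθ] at this
    have h2θ : (2:ℝ) ^ (-θ) < 1 := Real.rpow_lt_one_of_one_lt_of_neg one_lt_two (by linarith)
    set q0 : ℝ := (1 + (2:ℝ) ^ (-θ)) / 2 with hq0def
    have hq0a : (2:ℝ) ^ (-θ) < q0 := by
      have : (0:ℝ) < 2 ^ (-θ) := Real.rpow_pos_of_pos two_pos _
      rw [hq0def]; linarith
    have hq0b : q0 < 1 := by rw [hq0def]; linarith
    have hq0pos : 0 < q0 := by
      have : (0:ℝ) < 2 ^ (-θ) := Real.rpow_pos_of_pos two_pos _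
      rw [hq0def]; linarith
    set c0 : ℝ := ((2:ℝ) ^ (α - θ) + 1) * ((1 - (2:ℝ) ^ (-α)) / α) with hc0def
    have h2α1 : (2:ℝ) ^ (-α) < 1 := Real.rpow_lt_one_of_one_lt_of_neg one_lt_two (by linarith)
    have hc0pos : 0 ≤ c0 := by
      have : (0:ℝ) < 2 ^ (α - θ) := Real.rpow_pos_of_pos two_pos _
      rw [hc0def]
      apply mul_nonneg (by linarith) (div_nonneg (by linarith) hα.le)
    have hev : ∀ᶠ t in atTop, (1:ℝ) ≤ t ∧ (2:ℝ) ^ (-α) * (Fb (t / 2) / Fb t) ≤ q0 ∧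
        Fb (t / 2) / Fb t ≤ (2:ℝ) ^ (α - θ) + 1 := by
      filter_upwards [eventually_ge_atTop (1:ℝ),
        hlim.eventually_le_const hq0a,
        (hρ 2 one_lt_two).eventually_le_const (by linarith : ((2:ℝ) ^ (α - θ)) < 2 ^ (α - θ) + 1)]
        with t h1 h2 h3
      exact ⟨h1, h2, h3⟩
    obtain ⟨T0, hT0⟩ := eventually_atTop.1 hev
    have hT01 : 1 ≤ T0 := (hT0 T0 le_rfl).1
    have hT0pos : 0 < T0 := lt_of_lt_of_le one_pos hT01
    -- one-step inequality with q0, c0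
    have hstep : ∀ t, T0 ≤ t → ψ t / (t ^ α * Fb t) ≤
        q0 * (ψ (t / 2) / ((t / 2) ^ α * Fb (t / 2))) + c0 := by
      intro t ht
      obtain ⟨ht1, h2, h3⟩ := hT0 t ht
      have htpos : 0 < t := lt_of_lt_of_le one_pos ht1
      have hRpos : 0 ≤ ψ (t / 2) / ((t / 2) ^ α * Fb (t / 2)) := hR0 _ (by positivity)
      refine le_trans (hstep_ub 2 one_lt_two t htpos) (add_le_add ?_ ?_)
      · exact mul_le_mul_of_nonneg_right h2 hRpos
      · rw [hc0def]
        exact mul_le_mul_of_nonneg_right h3 (div_nonneg (by linarith) hα.le)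
    -- bound on the window [T0, 2 T0]
    set M : ℝ := ψ (2 * T0) / (T0 ^ α * Fb (2 * T0)) with hMdef
    have hM0 : 0 ≤ M := by
      rw [hMdef]
      exact div_nonneg (hψ0 _ (by linarith)) (mul_nonneg (Real.rpow_nonneg hT0pos.le _) (hpos _).le)
    have hwindow : ∀ t, T0 ≤ t → t ≤ 2 * T0 → ψ t / (t ^ α * Fb t) ≤ M := by
      intro t h1 h2
      have htpos : 0 < t := lt_of_lt_of_le hT0pos h1
      rw [hMdef]
      apply div_le_div₀ (hψ0 _ (by linarith)) (hψmono t (2 * T0) htpos.le h2)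
        (mul_pos (Real.rpow_pos_of_pos hT0pos _) (hpos _))
      exact mul_le_mul (Real.rpow_le_rpow hT0pos.le h1 hα.le) (hanti h2) (hpos _).le
        (Real.rpow_nonneg htpos.le _)
    set B0 : ℝ := M + c0 / (1 - q0) with hB0def
    have hc0q0 : 0 ≤ c0 / (1 - q0) := div_nonneg hc0pos (by linarith)
    have hB0M : M ≤ B0 := by rw [hB0def]; linarith
    have hB00 : 0 ≤ B0 := le_trans hM0 hB0M
    have claim : ∀ k : ℕ, ∀ t, T0 ≤ t → t ≤ T0 * 2 ^ (k + 1) → ψ t / (t ^ α * Fb t) ≤ B0 := by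
      intro k
      induction k with
      | zero =>
        intro t h1 h2
        exact le_trans (hwindow t h1 (by rw [pow_one] at h2; linarith)) hB0M
      | succ k ih =>
        intro t h1 h2
        by_cases hcase : t ≤ T0 * 2 ^ (k + 1)
        · exact ih t h1 hcase
        · push_neg at hcase
          have hk2 : (2:ℝ) ≤ 2 ^ (k + 1) := by
            calc (2:ℝ) = 2 ^ 1 := (pow_one 2).symm
            _ ≤ 2 ^ (k + 1) := pow_le_pow_right₀ one_le_two (by omega)
          have ht2T : 2 * T0 ≤ t := le_trans (by nlinarith) hcase.le
          have hth : T0 ≤ t / 2 := by linarith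
          have hth2 : t / 2 ≤ T0 * 2 ^ (k + 1) := by
            rw [div_le_iff₀ two_pos]
            calc t ≤ T0 * 2 ^ (k + 1 + 1) := h2
              _ = T0 * 2 ^ (k + 1) * 2 := by ring
          have := hstep t h1
          have h4 := ih (t / 2) hth hth2
          have hq0' : q0 * (ψ (t / 2) / ((t / 2) ^ α * Fb (t / 2))) ≤ q0 * B0 :=
            mul_le_mul_of_nonneg_left h4 hq0pos.le
          have h5 : ψ t / (t ^ α * Fb t) ≤ q0 * B0 + c0 := by linarith
          refine le_trans h5 ?_
          have h1q : (0:ℝ) < 1 - q0 := by linarith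
          have e0 : (1 - q0) * (c0 / (1 - q0)) = c0 := by field_simp
          have e1 : c0 ≤ (1 - q0) * B0 := by
            have e2 : (1 - q0) * B0 = (1 - q0) * M + c0 := by rw [hB0def, mul_add, e0]
            have e3 : 0 ≤ (1 - q0) * M := mul_nonneg h1q.le hM0
            linarith
          have e4 : (1 - q0) * B0 = B0 - q0 * B0 := by ring
          linarith
    refine ⟨B0, T0, hB00, hT01, fun t ht => ?_⟩
    obtain ⟨k, hk⟩ := pow_unbounded_of_one_lt (t / T0) one_lt_two
    refine claim k t ht ?_
    rw [div_lt_iff₀ hT0pos] at hk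
    have hpk : (2:ℝ) ^ k ≤ 2 ^ (k + 1) := pow_le_pow_right₀ one_le_two (Nat.le_succ k)
    calc t ≤ 2 ^ k * T0 := hk.le
      _ = T0 * 2 ^ k := by ring
      _ ≤ T0 * 2 ^ (k + 1) := mul_le_mul_of_nonneg_left hpk hT0pos.le
  obtain ⟨B, T0, hB0, hT01, hBbd⟩ := hB
  rw [tendsto_order]
  constructor
  · -- lower tail
    intro b hb
    set ε : ℝ := 1 / θ - b with hεdef
    have hε : 0 < ε := by rw [hεdef]; linarith
    set γ : ℝ := ε * θ ^ 2 / 4 with hγdef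
    have hγ0 : 0 < γ := by positivity
    have hθγ : 0 < θ + γ := by linarith
    have h1γ : 1 / θ - 1 / (θ + γ) ≤ ε / 4 := by
      have e1 : 1 / θ - 1 / (θ + γ) = γ / (θ * (θ + γ)) := by
        field_simp
        try ring
      rw [e1, div_le_iff₀ (by positivity)]
      rw [hγdef]
      nlinarith
    have hW : Tendsto (fun l : ℝ => ((1 - l ^ (-α)) / α) / (1 - l ^ (-(θ + γ)))) (𝓝[>] (1:ℝ))
        (𝓝 (1 / (θ + γ))) := by
      have h1 := kendall_ratio_limit α (θ + γ) (ne_of_gt hθγ)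
      have h3 : (1 / α) * (α / (θ + γ)) = 1 / (θ + γ) := by field_simp
      rw [← h3]
      exact (h1.const_mul (1 / α)).congr fun l => by ring
    obtain ⟨l, hWl, hl⟩ :=
      ((hW.eventually_const_lt (by linarith : 1 / (θ + γ) - ε / 8 < 1 / (θ + γ))).and
        self_mem_nhdsWithin).exists
    have hl : (1:ℝ) < l := hl
    have hl0 : (0:ℝ) < l := lt_trans one_pos hl
    set q : ℝ := l ^ (-(θ + γ)) with hqdef
    set c : ℝ := (1 - l ^ (-α)) / α with hcdef
    have hq0 : 0 < q := Real.rpow_pos_of_pos hl0 _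
    have hq1 : q < 1 := Real.rpow_lt_one_of_one_lt_of_neg hl (by linarith)
    have h1q : (0:ℝ) < 1 - q := by linarith
    have hV : 1 / (θ + γ) - ε / 8 < c / (1 - q) := hWl
    have hev : ∀ᶠ t in atTop, (1:ℝ) ≤ t ∧ l ^ (α - θ - γ) ≤ Fb (t / l) / Fb t := by
      have hlt : l ^ (α - θ - γ) < l ^ (α - θ) :=
        (Real.rpow_lt_rpow_left_iff hl).2 (by linarith)
      filter_upwards [eventually_ge_atTop (1:ℝ), (hρ l hl).eventually_const_le hlt]
        with t h1 h2 using ⟨h1, h2⟩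
    obtain ⟨T1, hT1⟩ := eventually_atTop.1 hev
    have hT11 : 1 ≤ T1 := (hT1 T1 le_rfl).1
    have hTpos : 0 < T1 := lt_of_lt_of_le one_pos hT11
    have hstep : ∀ t, T1 ≤ t →
        q * (ψ (t / l) / ((t / l) ^ α * Fb (t / l))) + c ≤ ψ t / (t ^ α * Fb t) := by
      intro t ht
      obtain ⟨h1, h2⟩ := hT1 t ht
      have htpos : 0 < t := lt_of_lt_of_le one_pos h1
      refine le_trans (add_le_add ?_ le_rfl) (hstep_lb l hl t htpos)
      have hcoef : q ≤ l ^ (-α) * (Fb (t / l) / Fb t) := by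
        have e : l ^ (-α) * l ^ (α - θ - γ) = q := by
          rw [hqdef, ← Real.rpow_add hl0]; congr 1; ring
        rw [← e]
        exact mul_le_mul_of_nonneg_left h2 (Real.rpow_pos_of_pos hl0 _).le
      exact mul_le_mul_of_nonneg_right hcoef (hR0 _ (div_pos htpos hl0))
    have iter := kendall_iter_lo hl hTpos hq0.le
      (fun t ht => hR0 t (lt_of_lt_of_le one_pos (le_trans hT11 ht))) hstep
    have hqk : Tendsto (fun k : ℕ => q ^ k * (c / (1 - q))) atTop (𝓝 0) := by
      have h0 := tendsto_pow_atTop_nhds_zero_of_lt_one hq0.le hq1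
      simpa using h0.mul_const (c / (1 - q))
    obtain ⟨k, hk⟩ := (hqk.eventually_lt_const (by linarith : (0:ℝ) < ε / 8)).exists
    refine eventually_atTop.2 ⟨T1 * l ^ k, fun t ht => ?_⟩
    have h6 := iter k t ht
    have hgeom : (∑ i ∈ Finset.range k, q ^ i) * (1 - q) = 1 - q ^ k := by
      have hg := geom_sum_mul q k
      nlinarith [hg]
    have e5 : c * ∑ i ∈ Finset.range k, q ^ i
        = c / (1 - q) - q ^ k * (c / (1 - q)) := by
      rw [eq_sub_iff_add_eq, div_eq_mul_inv]
      have : (∑ i ∈ Finset.range k, q ^ i) = (1 - q ^ k) * (1 - q)⁻¹ := by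
        rw [← hgeom, mul_assoc, mul_inv_cancel₀ h1q.ne', mul_one]
      rw [this]; ring
    have hb' : b = 1 / θ - ε := by rw [hεdef]; ring
    rw [hb']
    calc 1 / θ - ε < c / (1 - q) - q ^ k * (c / (1 - q)) := by linarith
      _ = c * ∑ i ∈ Finset.range k, q ^ i := e5.symm
      _ ≤ ψ t / (t ^ α * Fb t) := h6
  · -- upper tail
    intro b hb
    set ε : ℝ := b - 1 / θ with hεdef
    have hε : 0 < ε := by rw [hεdef]; linarith
    set γ : ℝ := min (θ / 2) (ε * θ ^ 2 / 4) with hγdef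
    have hγ0 : 0 < γ := lt_min (by linarith) (by positivity)
    have hγθ2 : γ ≤ θ / 2 := min_le_left _ _
    have hγε : γ ≤ ε * θ ^ 2 / 4 := min_le_right _ _
    have hθγ : 0 < θ - γ := by linarith
    have h1γ : 1 / (θ - γ) - 1 / θ ≤ ε / 2 := by
      have e1 : 1 / (θ - γ) - 1 / θ = γ / (θ * (θ - γ)) := by
        rw [div_sub_div _ _ hθγ.ne' hθ.ne',
          div_eq_div_iff (mul_pos hθγ hθ).ne' (mul_pos hθ hθγ).ne']
        ring
      rw [e1, div_le_iff₀ (mul_pos hθ hθγ)]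
      nlinarith
    have hW : Tendsto
        (fun l : ℝ => (l ^ (α - θ + γ) * ((1 - l ^ (-α)) / α)) / (1 - l ^ (-(θ - γ))))
        (𝓝[>] (1:ℝ)) (𝓝 (1 / (θ - γ))) := by
      have h1 := kendall_ratio_limit α (θ - γ) (ne_of_gt hθγ)
      have hA : Tendsto (fun l : ℝ => l ^ (α - θ + γ)) (𝓝[>] (1:ℝ)) (𝓝 1) := by
        have hc := (Real.continuousAt_rpow_const 1 (α - θ + γ) (Or.inl one_ne_zero)).tendsto
        rw [Real.one_rpow] at hc
        exact hc.mono_left nhdsWithin_le_nhds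
      have h2 := (hA.mul h1).mul_const (1 / α)
      have h3 : 1 * (α / (θ - γ)) * (1 / α) = 1 / (θ - γ) := by field_simp
      rw [← h3]
      exact h2.congr fun l => by ring
    obtain ⟨l, hWl, hl⟩ :=
      ((hW.eventually_lt_const (by linarith : 1 / (θ - γ) < 1 / (θ - γ) + ε / 8)).and
        self_mem_nhdsWithin).exists
    have hl : (1:ℝ) < l := hl
    have hl0 : (0:ℝ) < l := lt_trans one_pos hl
    set q : ℝ := l ^ (-(θ - γ)) with hqdef
    set c : ℝ := l ^ (α - θ + γ) * ((1 - l ^ (-α)) / α) with hcdef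
    have hq0 : 0 < q := Real.rpow_pos_of_pos hl0 _
    have hq1 : q < 1 := Real.rpow_lt_one_of_one_lt_of_neg hl (by linarith)
    have h1q : (0:ℝ) < 1 - q := by linarith
    have hlα1 : l ^ (-α) ≤ 1 := Real.rpow_le_one_of_one_le_of_nonpos hl.le (by linarith)
    have hc0 : 0 ≤ c := by
      rw [hcdef]
      exact mul_nonneg (Real.rpow_nonneg hl0.le _) (div_nonneg (by linarith) hα.le)
    have hV : c / (1 - q) < 1 / (θ - γ) + ε / 8 := hWl
    have hev : ∀ᶠ t in atTop, ((1:ℝ) ≤ t ∧ T0 ≤ t) ∧ Fb (t / l) / Fb t ≤ l ^ (α - θ + γ) := by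
      have hlt : l ^ (α - θ) < l ^ (α - θ + γ) :=
        (Real.rpow_lt_rpow_left_iff hl).2 (by linarith)
      filter_upwards [eventually_ge_atTop (1:ℝ), eventually_ge_atTop T0,
        (hρ l hl).eventually_le_const hlt] with t h1 h2 h3 using ⟨⟨h1, h2⟩, h3⟩
    obtain ⟨T1, hT1⟩ := eventually_atTop.1 hev
    have hT11 : 1 ≤ T1 := (hT1 T1 le_rfl).1.1
    have hTpos : 0 < T1 := lt_of_lt_of_le one_pos hT11
    have hstep : ∀ t, T1 ≤ t →
        ψ t / (t ^ α * Fb t) ≤ q * (ψ (t / l) / ((t / l) ^ α * Fb (t / l))) + c := by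
      intro t ht
      obtain ⟨⟨h1, _⟩, h2⟩ := hT1 t ht
      have htpos : 0 < t := lt_of_lt_of_le one_pos h1
      refine le_trans (hstep_ub l hl t htpos) (add_le_add ?_ ?_)
      · have hcoef : l ^ (-α) * (Fb (t / l) / Fb t) ≤ q := by
          have e : l ^ (-α) * l ^ (α - θ + γ) = q := by
            rw [hqdef, ← Real.rpow_add hl0]; congr 1; ring
          rw [← e]
          exact mul_le_mul_of_nonneg_left h2 (Real.rpow_pos_of_pos hl0 _).le
        exact mul_le_mul_of_nonneg_right hcoef (hR0 _ (div_pos htpos hl0))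
      · rw [hcdef]
        exact mul_le_mul_of_nonneg_right h2 (div_nonneg (by linarith) hα.le)
    have hBbd' : ∀ t, T1 ≤ t → ψ t / (t ^ α * Fb t) ≤ B := fun t ht =>
      hBbd t (le_trans (hT1 t ht).1.2 le_rfl)
    have iter := kendall_iter_up hl hTpos hq0.le hstep hBbd'
    have hqk : Tendsto (fun k : ℕ => q ^ k * B) atTop (𝓝 0) := by
      have h0 := tendsto_pow_atTop_nhds_zero_of_lt_one hq0.le hq1
      simpa using h0.mul_const B
    obtain ⟨k, hk⟩ := (hqk.eventually_lt_const (by linarith : (0:ℝ) < ε / 8)).exists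
    refine eventually_atTop.2 ⟨T1 * l ^ k, fun t ht => ?_⟩
    have h6 := iter k t ht
    have h7 : c * ∑ i ∈ Finset.range k, q ^ i ≤ c / (1 - q) := by
      have := kendall_geom_le hq0.le hq1 k
      calc c * ∑ i ∈ Finset.range k, q ^ i ≤ c * (1 / (1 - q)) :=
            mul_le_mul_of_nonneg_left this hc0
        _ = c / (1 - q) := by ring
    have hb' : b = 1 / θ + ε := by rw [hεdef]; ring
    rw [hb']
    calc ψ t / (t ^ α * Fb t) ≤ q ^ k * B + c * ∑ i ∈ Finset.range k, q ^ i := h6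
      _ < ε / 8 + (1 / (θ - γ) + ε / 8) := by linarith
      _ ≤ 1 / θ + ε := by linarith

lemma kendall_G_eq (α : ℝ) (hα : 0 < α) (ν : Measure ℝ) [IsProbabilityMeasure ν]
    (hν : ν (Set.Iio 0) = 0) (t : ℝ) (ht : 0 < t) :
    ∫ x, max (1 - (x / t) ^ α) 0 ∂ν
      = (ν (Set.Iic t)).toReal - t ^ (-α) * ∫ x in Set.Icc 0 t, x ^ α ∂ν := by
  have hcont : Continuous fun x : ℝ => x ^ α := by
    apply continuous_iff_continuousAt.2
    intro x
    exact Real.continuousAt_rpow_const x α (Or.inr hα.le)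
  have hint : IntegrableOn (fun x : ℝ => x ^ α) (Icc 0 t) ν :=
    hcont.continuousOn.integrableOn_compact isCompact_Icc
  have hae : ∀ᵐ x ∂ν, 0 ≤ x := by
    rw [ae_iff]
    have h : {x : ℝ | ¬ 0 ≤ x} = Set.Iio 0 := by ext x; simp [not_le]
    rw [h]; exact hν
  have h1 : ∫ x, max (1 - (x / t) ^ α) 0 ∂ν
      = ∫ x, (Icc 0 t).indicator (fun x => 1 - t ^ (-α) * x ^ α) x ∂ν := by
    apply integral_congr_ae
    filter_upwards [hae] with x hx
    by_cases hxt : x ≤ t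
    · rw [Set.indicator_of_mem (Set.mem_Icc.2 ⟨hx, hxt⟩)]
      have hdiv : (x / t) ^ α = t ^ (-α) * x ^ α := by
        rw [Real.div_rpow hx ht.le, Real.rpow_neg ht.le, div_eq_mul_inv]
        ring
      have hle1 : (x / t) ^ α ≤ 1 :=
        Real.rpow_le_one (div_nonneg hx ht.le) ((div_le_one ht).2 hxt) hα.le
      rw [max_eq_left (by linarith : (0:ℝ) ≤ 1 - (x / t) ^ α), hdiv]
    · push_neg at hxt
      rw [Set.indicator_of_notMem (fun hmem => absurd hmem.2 (not_le.2 hxt))]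
      apply max_eq_right
      have h1x : (1:ℝ) ≤ x / t := (one_le_div ht).2 hxt.le
      have h2 := Real.rpow_le_rpow zero_le_one h1x hα.le
      rw [Real.one_rpow] at h2
      linarith
  have h2 : ∫ x, (Icc 0 t).indicator (fun x => 1 - t ^ (-α) * x ^ α) x ∂ν
      = ∫ x in Icc 0 t, (1 - t ^ (-α) * x ^ α) ∂ν := integral_indicator measurableSet_Icc
  have h3 : ∫ x in Icc 0 t, (1 - t ^ (-α) * x ^ α) ∂ν
      = (ν (Icc 0 t)).toReal - t ^ (-α) * ∫ x in Icc 0 t, x ^ α ∂ν := by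
    rw [integral_sub (integrableOn_const (s := Icc 0 t) (μ := ν) (C := (1:ℝ)))
      (hint.const_mul _), integral_const_mul]
    simp [Measure.real]
  have h4 : ν (Icc 0 t) = ν (Iic t) := by
    apply le_antisymm (measure_mono Icc_subset_Iic_self)
    calc ν (Iic t) ≤ ν (Iio 0 ∪ Icc 0 t) := by
          apply measure_mono
          intro x hx
          by_cases h0 : x < 0
          · exact Or.inl h0
          · exact Or.inr ⟨not_lt.1 h0, hx⟩
      _ ≤ ν (Iio 0) + ν (Icc 0 t) := measure_union_le _ _
      _ = ν (Icc 0 t) := by rw [hν, zero_add]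
  rw [h1, h2, h3, h4]

set_option maxHeartbeats 1000000 in
lemma kendall_H_eq (α : ℝ) (hα : 0 < α) (ν : Measure ℝ) [IsProbabilityMeasure ν]
    (hν : ν (Set.Iio 0) = 0) (t : ℝ) (ht : 0 < t) :
    ∫ x in Set.Icc 0 t, x ^ α ∂ν
      = α * (∫ s in (0:ℝ)..t, s ^ (α - 1) * (1 - (ν (Set.Iic s)).toReal))
        + t ^ α * (ν (Set.Iic t)).toReal - t ^ α := by
  have hcont : Continuous fun x : ℝ => x ^ α := by
    apply continuous_iff_continuousAt.2
    intro x
    exact Real.continuousAt_rpow_const x α (Or.inr hα.le)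
  have hint : IntegrableOn (fun x : ℝ => x ^ α) (Icc 0 t) ν :=
    hcont.continuousOn.integrableOn_compact isCompact_Icc
  have f_nn : 0 ≤ᵐ[ν.restrict (Icc 0 t)] fun x : ℝ => x ^ α := by
    filter_upwards [ae_restrict_mem measurableSet_Icc] with x hx
    exact Real.rpow_nonneg hx.1 _
  have hlc : ∫ x in Icc 0 t, x ^ α ∂ν
      = ∫ s in Ioi (0:ℝ), ((ν.restrict (Icc 0 t)) {a : ℝ | s < a ^ α}).toReal :=
    Integrable.integral_eq_integral_meas_lt hint f_nn
  have hset : ∀ s : ℝ, s ∈ Ioi (0:ℝ) →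
      ((ν.restrict (Icc 0 t)) {a : ℝ | s < a ^ α}).toReal = (ν (Ioc (s ^ α⁻¹) t)).toReal := by
    intro s hs
    rw [Measure.restrict_apply (by exact hcont.measurable measurableSet_Ioi :
      MeasurableSet {a : ℝ | s < a ^ α})]
    congr 2
    ext x
    simp only [mem_inter_iff, mem_setOf_eq, mem_Icc, mem_Ioc]
    constructor
    · rintro ⟨hsx, hx0, hxt⟩
      refine ⟨?_, hxt⟩
      have h := Real.rpow_lt_rpow (le_of_lt hs) hsx (inv_pos.2 hα)
      rwa [Real.rpow_rpow_inv hx0 hα.ne'] at h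
    · rintro ⟨hsx, hxt⟩
      have hs1 : 0 < s ^ α⁻¹ := Real.rpow_pos_of_pos hs _
      have hx0 : (0:ℝ) ≤ x := le_trans hs1.le hsx.le
      refine ⟨?_, hx0, hxt⟩
      have h := Real.rpow_lt_rpow hs1.le hsx hα
      rwa [Real.rpow_inv_rpow hs.le hα.ne'] at h
  have step3 : ∫ x in Icc 0 t, x ^ α ∂ν
      = ∫ s in Ioi (0:ℝ), (ν (Ioc (s ^ α⁻¹) t)).toReal := by
    rw [hlc]
    exact setIntegral_congr_fun measurableSet_Ioi hset
  have hsub := integral_comp_rpow_Ioi_of_pos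
    (g := fun y : ℝ => (ν (Ioc (y ^ α⁻¹) t)).toReal) hα
  have step4 : ∫ x in Icc 0 t, x ^ α ∂ν
      = ∫ x in Ioi (0:ℝ), α * x ^ (α - 1) * (ν (Ioc x t)).toReal := by
    rw [step3, ← hsub]
    refine setIntegral_congr_fun measurableSet_Ioi fun x hx => ?_
    rw [Real.rpow_rpow_inv (le_of_lt hx) hα.ne', smul_eq_mul]
  have hganti : Antitone fun r : ℝ => (ν (Ioc r t)).toReal := by
    intro a b hab
    exact (ENNReal.toReal_le_toReal (measure_ne_top _ _) (measure_ne_top _ _)).2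
      (measure_mono (Ioc_subset_Ioc_left hab))
  have hIntg : IntegrableOn (fun x : ℝ => α * x ^ (α - 1) * (ν (Ioc x t)).toReal)
      (Ioc 0 t) volume := by
    have hr : IntegrableOn (fun x : ℝ => x ^ (α - 1)) (Ioc 0 t) volume :=
      (intervalIntegral.intervalIntegrable_rpow' (by linarith)).1
    refine (hr.bdd_mul (((measurable_const (a := α)).mul hganti.measurable).aestronglyMeasurable)
      (c := |α|) (ae_of_all _ fun x => ?_)).congr (ae_of_all _ fun x => by simp only [Pi.mul_apply]; ring)
    rw [Pi.mul_apply, Real.norm_eq_abs, abs_mul]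
    have hg1 : (ν (Ioc x t)).toReal ≤ 1 := ENNReal.toReal_mono ENNReal.one_ne_top prob_le_one
    have hg0 : 0 ≤ (ν (Ioc x t)).toReal := ENNReal.toReal_nonneg
    calc |α| * |(ν (Ioc x t)).toReal| = |α| * (ν (Ioc x t)).toReal := by rw [abs_of_nonneg hg0]
      _ ≤ |α| * 1 := mul_le_mul_of_nonneg_left hg1 (abs_nonneg _)
      _ = |α| := mul_one _
  have hftail : ∀ x ∈ Ioi t, α * x ^ (α - 1) * (ν (Ioc x t)).toReal = (0:ℝ) := by
    intro x hx
    rw [Set.Ioc_eq_empty (not_lt.2 (le_of_lt hx)), measure_empty]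
    simp
  have hIntTail : IntegrableOn (fun x : ℝ => α * x ^ (α - 1) * (ν (Ioc x t)).toReal)
      (Ioi t) volume :=
    (integrableOn_zero).congr_fun (fun x hx => (hftail x hx).symm) measurableSet_Ioi
  have hsplit : ∫ x in Ioi (0:ℝ), α * x ^ (α - 1) * (ν (Ioc x t)).toReal
      = (∫ x in Ioc (0:ℝ) t, α * x ^ (α - 1) * (ν (Ioc x t)).toReal)
        + ∫ x in Ioi t, α * x ^ (α - 1) * (ν (Ioc x t)).toReal := by
    have hu : Ioc (0:ℝ) t ∪ Ioi t = Ioi 0 := Ioc_union_Ioi_eq_Ioi ht.le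
    rw [← hu]
    exact setIntegral_union (Set.disjoint_left.2 fun x hx1 hx2 =>
      absurd hx1.2 (not_le.2 hx2)) measurableSet_Ioi hIntg hIntTail
  have htail0 : ∫ x in Ioi t, α * x ^ (α - 1) * (ν (Ioc x t)).toReal = 0 := by
    rw [setIntegral_congr_fun measurableSet_Ioi hftail, integral_zero]
  have hIoc : ∫ x in Ioc (0:ℝ) t, α * x ^ (α - 1) * (ν (Ioc x t)).toReal
      = ∫ x in Ioc (0:ℝ) t, α * x ^ (α - 1) * ((ν (Iic t)).toReal - (ν (Iic x)).toReal) := by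
    refine setIntegral_congr_fun measurableSet_Ioc fun x hx => ?_
    have hd : Ioc x t = Iic t \ Iic x := Iic_sdiff_Iic.symm
    rw [hd, measure_diff (Iic_subset_Iic.2 hx.2) measurableSet_Iic.nullMeasurableSet
      (measure_ne_top _ _),
      ENNReal.toReal_sub_of_le (measure_mono (Iic_subset_Iic.2 hx.2)) (measure_ne_top _ _)]
  have hIoc2 : ∫ x in Ioc (0:ℝ) t, α * x ^ (α - 1) * ((ν (Iic t)).toReal - (ν (Iic x)).toReal)
      = ∫ x in (0:ℝ)..t, α * x ^ (α - 1) * ((ν (Iic t)).toReal - (ν (Iic x)).toReal) :=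
    (intervalIntegral.integral_of_le ht.le).symm
  have hFmono : Monotone fun s : ℝ => (ν (Iic s)).toReal := by
    intro a b hab
    exact (ENNReal.toReal_le_toReal (measure_ne_top _ _) (measure_ne_top _ _)).2
      (measure_mono (Iic_subset_Iic.2 hab))
  have hFb01 : ∀ s : ℝ, ‖1 - (ν (Iic s)).toReal‖ ≤ 1 := by
    intro s
    rw [Real.norm_eq_abs, abs_le]
    have h1 : (ν (Iic s)).toReal ≤ 1 := ENNReal.toReal_mono ENNReal.one_ne_top prob_le_one
    have h0 : 0 ≤ (ν (Iic s)).toReal := ENNReal.toReal_nonneg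
    constructor <;> linarith
  have hII : IntervalIntegrable (fun s : ℝ => s ^ (α - 1) * (1 - (ν (Iic s)).toReal))
      volume 0 t := by
    have hr : IntervalIntegrable (fun s : ℝ => s ^ (α - 1)) volume 0 t :=
      intervalIntegral.intervalIntegrable_rpow' (by linarith)
    rw [intervalIntegrable_iff] at hr ⊢
    exact (hr.bdd_mul ((measurable_const.sub hFmono.measurable).aestronglyMeasurable)
      (c := 1) (ae_of_all _ hFb01)).congr (ae_of_all _ fun x => mul_comm _ _)
  have hrII : IntervalIntegrable (fun s : ℝ => s ^ (α - 1)) volume 0 t :=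
    intervalIntegral.intervalIntegrable_rpow' (by linarith)
  have heval : ∫ x in (0:ℝ)..t, α * x ^ (α - 1) * ((ν (Iic t)).toReal - (ν (Iic x)).toReal)
      = α * (∫ s in (0:ℝ)..t, s ^ (α - 1) * (1 - (ν (Iic s)).toReal))
        + (α * ((ν (Iic t)).toReal - 1)) * (t ^ α / α) := by
    rw [intervalIntegral.integral_congr (g := fun x =>
      α * (x ^ (α - 1) * (1 - (ν (Iic x)).toReal)) + (α * ((ν (Iic t)).toReal - 1)) * x ^ (α - 1))
      (fun x _ => by ring)]
    rw [intervalIntegral.integral_add (hII.const_mul α) (hrII.const_mul _)]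
    rw [intervalIntegral.integral_const_mul, intervalIntegral.integral_const_mul]
    congr 1
    rw [integral_rpow (Or.inl (by linarith))]
    have he : α - 1 + 1 = α := by ring
    rw [he, Real.zero_rpow hα.ne']
    ring
  rw [step4, hsplit, htail0, add_zero, hIoc, hIoc2, heval]
  have hfin : α * ((ν (Iic t)).toReal - 1) * (t ^ α / α) = t ^ α * (ν (Iic t)).toReal - t ^ α := by
    field_simp
  rw [hfin]
  ring

end KendallAux

section KendallMain
set_option maxHeartbeats 1000000 in
/-- if the tail F̄ = 1 − F is everywhere positive and regularly varying at
infinity with index θ − α, 0 < θ < α, then for every n ≥ 1 the tail of the n-fold Kendall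
convolution power satisfies F̄_n(x) / (n F̄(x)) → 1 as x → ∞. -/
theorem kendall_power_tail_regvar
    (α θ : ℝ) (hα : 0 < α) (hθ : 0 < θ) (hθα : θ < α)
    (ν : Measure ℝ) [IsProbabilityMeasure ν] (hν : ν (Set.Iio 0) = 0)
    (F G H : ℝ → ℝ)
    (hF : ∀ t, F t = (ν (Set.Iic t)).toReal)
    (hG : ∀ t, 0 < t → G t = ∫ x, max (1 - (x / t) ^ α) 0 ∂ν)
    (hH : ∀ t, 0 < t → H t = ∫ x in Set.Icc 0 t, x ^ α ∂ν)
    (htail : ∀ x, F x < 1)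
    (hRV : ∀ l, 0 < l →
      Tendsto (fun x => (1 - F (l * x)) / (1 - F x)) atTop (𝓝 (l ^ (θ - α))))
    (n : ℕ) (hn : 1 ≤ n)
    (Fn : ℝ → ℝ)
    (hFn : ∀ t, 0 < t → Fn t = (G t) ^ (n - 1) * ((n : ℝ) * t ^ (-α) * H t + G t)) :
    Tendsto (fun x => (1 - Fn x) / ((n : ℝ) * (1 - F x))) atTop (𝓝 1) := by
  -- basic facts
  have hFb_pos : ∀ x, (0:ℝ) < 1 - F x := fun x => sub_pos.2 (htail x)
  have hF0 : ∀ x, 0 ≤ F x := fun x => by rw [hF]; exact ENNReal.toReal_nonneg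
  have hFb_le1 : ∀ x, 1 - F x ≤ 1 := fun x => by linarith [hF0 x]
  have hFmono : Monotone F := by
    intro a b hab
    rw [hF a, hF b]
    exact (ENNReal.toReal_le_toReal (measure_ne_top _ _) (measure_ne_top _ _)).2
      (measure_mono (Set.Iic_subset_Iic.2 hab))
  have hFb_anti : Antitone fun x => 1 - F x := fun a b hab => by
    simp only [sub_le_sub_iff_left]
    exact hFmono hab
  -- F tends to 1
  have hF1 : Tendsto F atTop (𝓝 1) := by
    have h := tendsto_measure_Iic_atTop (μ := ν)
    have h2 : Tendsto (fun x : ℝ => (ν (Set.Iic x)).toReal) atTop (𝓝 (ν Set.univ).toReal) :=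
      (ENNReal.tendsto_toReal (measure_ne_top _ _)).comp h
    rw [measure_univ] at h2
    simp only [ENNReal.toReal_one] at h2
    exact h2.congr fun x => (hF x).symm
  have hFb0 : Tendsto (fun x => 1 - F x) atTop (𝓝 0) := by
    have h2 := (tendsto_const_nhds (x := (1:ℝ)) (f := atTop (α := ℝ))).sub hF1
    simpa using h2
  -- Karamata
  have hkar := kendall_karamata α θ hα hθ hθα (fun x => 1 - F x) hFb_anti hFb_pos hFb_le1 hRV
  -- identity for the ratio m/Fb
  have idG : ∀ t : ℝ, 0 < t → G t = F t - t ^ (-α) * H t := by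
    intro t ht
    rw [hG t ht, hH t ht, hF t]
    exact kendall_G_eq α hα ν hν t ht
  have idH : ∀ t : ℝ, 0 < t → H t
      = α * (∫ s in (0:ℝ)..t, s ^ (α - 1) * (1 - F s)) + t ^ α * F t - t ^ α := by
    intro t ht
    rw [hH t ht, hF t]
    have h := kendall_H_eq α hα ν hν t ht
    rw [h]
    have he : (∫ s in (0:ℝ)..t, s ^ (α - 1) * (1 - (ν (Set.Iic s)).toReal))
        = ∫ s in (0:ℝ)..t, s ^ (α - 1) * (1 - F s) := by
      refine intervalIntegral.integral_congr fun s _ => ?_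
      rw [hF s]
    rw [he]
  -- ratio limit for m t = t^{-α} H t
  have hm : Tendsto (fun t => (t ^ (-α) * H t) / (1 - F t)) atTop (𝓝 (α * (1 / θ) - 1)) := by
    have hT : Tendsto (fun t => α * ((∫ s in (0:ℝ)..t, s ^ (α - 1) * (1 - F s))
        / (t ^ α * (1 - F t))) - 1) atTop (𝓝 (α * (1 / θ) - 1)) :=
      (hkar.const_mul α).sub_const 1
    refine hT.congr' ?_
    filter_upwards [eventually_gt_atTop (0:ℝ)] with t ht
    have hb : (1:ℝ) - F t ≠ 0 := (hFb_pos t).ne'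
    have htα : (t:ℝ) ^ α ≠ 0 := (Real.rpow_pos_of_pos ht α).ne'
    have hneg : t ^ (-α) = (t ^ α)⁻¹ := Real.rpow_neg ht.le α
    rw [idH t ht, hneg]
    field_simp
    ring
  have hm0 : Tendsto (fun t => t ^ (-α) * H t) atTop (𝓝 0) := by
    have h2 := hm.mul hFb0
    rw [mul_zero] at h2
    refine h2.congr fun t => ?_
    exact div_mul_cancel₀ _ (hFb_pos t).ne'
  have hu0 : Tendsto (fun t => (1 - F t) + t ^ (-α) * H t) atTop (𝓝 0) := by
    have h2 := hFb0.add hm0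
    simpa using h2
  have hone : Tendsto (fun t => 1 - ((1 - F t) + t ^ (-α) * H t)) atTop (𝓝 1) := by
    have h2 := (tendsto_const_nhds (x := (1:ℝ)) (f := atTop (α := ℝ))).sub hu0
    simpa using h2
  have hu_ratio : Tendsto (fun t => ((1 - F t) + t ^ (-α) * H t) / (1 - F t)) atTop
      (𝓝 (1 + (α * (1 / θ) - 1))) := by
    have h2 := (tendsto_const_nhds (x := (1:ℝ)) (f := atTop (α := ℝ))).add hm
    refine h2.congr fun t => ?_
    rw [add_div, div_self (hFb_pos t).ne']
  have hv_ratio : Tendsto (fun t => ((1 - F t) - ((n:ℝ) - 1) * (t ^ (-α) * H t)) / (1 - F t))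
      atTop (𝓝 (1 - ((n:ℝ) - 1) * (α * (1 / θ) - 1))) := by
    have h2 := (tendsto_const_nhds (x := (1:ℝ)) (f := atTop (α := ℝ))).sub
      (hm.const_mul ((n:ℝ) - 1))
    refine h2.congr fun t => ?_
    rw [sub_div, div_self (hFb_pos t).ne']; ring
  have hS : Tendsto (fun t => ∑ i ∈ Finset.range (n - 1),
      (1 - ((1 - F t) + t ^ (-α) * H t)) ^ i) atTop (𝓝 ((n - 1 : ℕ) : ℝ)) := by
    have hsum := tendsto_finset_sum (Finset.range (n - 1)) (fun i _ => hone.pow i)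
    simpa using hsum
  have hpow : Tendsto (fun t => (1 - ((1 - F t) + t ^ (-α) * H t)) ^ (n - 1)) atTop (𝓝 1) := by
    have h2 := hone.pow (n - 1)
    simpa using h2
  have hnR : ((n:ℝ)) ≠ 0 := Nat.cast_ne_zero.2 (by omega)
  have hfinal : Tendsto (fun t =>
      (((1 - F t) + t ^ (-α) * H t) / (1 - F t))
        * (∑ i ∈ Finset.range (n - 1), (1 - ((1 - F t) + t ^ (-α) * H t)) ^ i) / (n:ℝ)
      + (1 - ((1 - F t) + t ^ (-α) * H t)) ^ (n - 1)
        * (((1 - F t) - ((n:ℝ) - 1) * (t ^ (-α) * H t)) / (1 - F t)) / (n:ℝ)) atTop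
      (𝓝 ((1 + (α * (1 / θ) - 1)) * ((n - 1 : ℕ) : ℝ) / (n:ℝ)
        + 1 * (1 - ((n:ℝ) - 1) * (α * (1 / θ) - 1)) / (n:ℝ))) :=
    ((hu_ratio.mul hS).div_const _).add ((hpow.mul hv_ratio).div_const _)
  have hval : (1 + (α * (1 / θ) - 1)) * ((n - 1 : ℕ) : ℝ) / (n:ℝ)
      + 1 * (1 - ((n:ℝ) - 1) * (α * (1 / θ) - 1)) / (n:ℝ) = 1 := by
    rw [Nat.cast_sub hn, Nat.cast_one]
    field_simp
    ring
  rw [hval] at hfinal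
  refine hfinal.congr' ?_
  filter_upwards [eventually_gt_atTop (0:ℝ)] with t ht
  have hb : (1:ℝ) - F t ≠ 0 := (hFb_pos t).ne'
  have hin : (n:ℝ) * t ^ (-α) * H t + G t
      = 1 - ((1 - F t) - ((n:ℝ) - 1) * (t ^ (-α) * H t)) := by rw [idG t ht]; ring
  have hGt : G t = 1 - ((1 - F t) + t ^ (-α) * H t) := by rw [idG t ht]; ring
  have hgeom : (1 - ((1 - F t) + t ^ (-α) * H t)) ^ (n - 1)
      = 1 - ((1 - F t) + t ^ (-α) * H t)
        * ∑ i ∈ Finset.range (n - 1), (1 - ((1 - F t) + t ^ (-α) * H t)) ^ i := by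
    have hg := geom_sum_mul (1 - ((1 - F t) + t ^ (-α) * H t)) (n - 1)
    linear_combination -hg
  rw [hFn t ht, hin, hGt, hgeom]
  field_simp
  ring

end KendallMain
end
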